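/- arXiv:1206.6027 — 2 statements merged into one kernel-verified Lean document; each statement's English description precedes it below -/
import Mathlib

section
/- Let N = ⟨x_i(1)x_j(1) : i, j ≥ 1⟩_ℕ ⊆ P, let J be a letterplace ideal of P, and let G ⊆ J ∩ L. Then G is a Gröbner L-basis of J if and only if G is a multihomogeneous Gröbner ℕ-basis of J + N modulo N, i.e. G consists of multihomogeneous elements in normal form modulo N and G ∪ {x_i(1)x_j(1) : i, j ≥ 1} is a Gröbner ℕ-basis of J + N. -/
noncomputable section

/-! ### Common definitions for the letterplace correspondence (La Scala)

`FA K Y` is the free associative algebra `K⟨Y⟩` (monoid algebra of the free monoid on `Y`);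
`PL K Y` is the letterplace polynomial algebra `K[y(j) : y ∈ Y, j ∈ ℕ*]`.
The algebra `F̄ = K⟨X ∪ {t}⟩` is modeled as `FA K (Option X)` with `t = none`,
and similarly `P̄ = PL K (Option X)`. -/

/-- The free associative algebra `K⟨Y⟩`. -/
abbrev FA (K : Type*) [CommSemiring K] (Y : Type*) := MonoidAlgebra K (FreeMonoid Y)

/-- The letterplace polynomial algebra `K[y(j)]`, with places in `ℕ* = ℕ+`. -/
abbrev PL (K : Type*) [CommSemiring K] (Y : Type*) := MvPolynomial (Y × ℕ+) K

variable (K : Type*) [Field K]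

/-- The generator of `K⟨Y⟩` corresponding to a letter. -/
def gen {Y : Type*} (y : Y) : FA K Y := MonoidAlgebra.of K (FreeMonoid Y) (FreeMonoid.of y)

/-- The extra letter `t` of `F̄ = K⟨X ∪ {t}⟩`. -/
def tv {X : Type*} : FA K (Option X) := gen K (none : Option X)

/-- `φ : F̄ → F̄`, the algebra endomorphism with `φ(x_i) = x_i`, `φ(t) = 1`. -/
def phi {X : Type*} : FA K (Option X) →ₐ[K] FA K (Option X) :=
  (MonoidAlgebra.lift K (FA K (Option X)) (FreeMonoid (Option X)))
    (FreeMonoid.lift fun o => Option.elim o 1 (fun x => gen K (some x)))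

/-- `f` is homogeneous of degree `d` (all words in its support have length `d`). -/
def IsHomog {Y : Type*} (d : ℕ) (f : FA K Y) : Prop :=
  ∀ w ∈ f.coeff.support, FreeMonoid.length w = d

/-- The homogeneous component of degree `d` of `f ∈ K⟨Y⟩`. -/
def homComp {Y : Type*} (d : ℕ) (f : FA K Y) : FA K Y :=
  ∑ w ∈ f.coeff.support.filter (fun w => FreeMonoid.length w = d), MonoidAlgebra.single w (f.coeff w)

/-- A two-sided ideal is graded (for the grading by total degree) iff it contains all
homogeneous components of its elements. -/
def IsGradedF {Y : Type*} (I : TwoSidedIdeal (FA K Y)) : Prop := ∀ f ∈ I, ∀ d, homComp K d f ∈ I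

/-- `C ⊆ F̄`: the two-sided ideal generated by all homogeneous elements of `ker φ`,
i.e. the largest graded ideal contained in `ker φ`. -/
def Cideal {X : Type*} : TwoSidedIdeal (FA K (Option X)) :=
  TwoSidedIdeal.span {f | (∃ d, IsHomog K d f) ∧ phi K f = 0}

/-- The embedding of free monoids `X* → (X ∪ {t})*`. -/
def embWord {X : Type*} : FreeMonoid X →* FreeMonoid (Option X) := FreeMonoid.map some

/-- The canonical embedding `F = K⟨X⟩ → F̄ = K⟨X ∪ {t}⟩`. -/
def emb {X : Type*} : FA K X →ₐ[K] FA K (Option X) :=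
  (MonoidAlgebra.lift K (FA K (Option X)) (FreeMonoid X))
    ((MonoidAlgebra.of K (FreeMonoid (Option X))).comp embWord)

/-- The top degree `deg(f)` of `f` (max length of a word in the support). -/
def degF {Y : Type*} (f : FA K Y) : ℕ := f.coeff.support.sup FreeMonoid.length

/-- The homogenization `f^* = Σ_k f_k t^{deg f − k} ∈ F̄` of `f ∈ F`. -/
def hstar {X : Type*} (f : FA K X) : FA K (Option X) :=
  ∑ w ∈ f.coeff.support,
    MonoidAlgebra.single
      (embWord w * (FreeMonoid.of (none : Option X)) ^ (degF K f - FreeMonoid.length w)) (f.coeff w)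

/-- Homogenization of an element already written in `F̄` (used for elements of `φ(F̄) = F`). -/
def hstarO {X : Type*} (f : FA K (Option X)) : FA K (Option X) :=
  ∑ w ∈ f.coeff.support,
    MonoidAlgebra.single
      (w * (FreeMonoid.of (none : Option X)) ^ (degF K f - FreeMonoid.length w)) (f.coeff w)

/-- The homogenization `I^*` of an ideal `I ⊆ F`: the two-sided ideal of `F̄` generated by all
homogeneous elements of `φ⁻¹(I)` (identifying `F` with its image in `F̄`). -/
def hstarIdeal {X : Type*} (I : TwoSidedIdeal (FA K X)) : TwoSidedIdeal (FA K (Option X)) :=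
  TwoSidedIdeal.span {g | (∃ d, IsHomog K d g) ∧ ∃ f ∈ I, phi K g = emb K f}

/-- The saturation `Sat(J) = φ(J)^*` of a graded ideal `C ⊆ J ⊆ F̄`: the two-sided ideal
generated by all homogeneous elements `g` with `φ(g) ∈ φ(J)`. -/
def SatF {X : Type*} (J : TwoSidedIdeal (FA K (Option X))) : TwoSidedIdeal (FA K (Option X)) :=
  TwoSidedIdeal.span {g | (∃ d, IsHomog K d g) ∧ ∃ h ∈ J, phi K g = phi K h}

/-! ### The commutative (letterplace) side -/

/-- The shift of letterplace variables: `k · y(j) = y(j + k)`. -/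
def shiftVar {Y : Type*} (k : ℕ) (p : Y × ℕ+) : Y × ℕ+ :=
  (p.1, ⟨p.2 + k, Nat.add_pos_left p.2.2 k⟩)

/-- The action of `k ∈ ℕ` on the letterplace algebra. -/
def shift {Y : Type*} (k : ℕ) : PL K Y →ₐ[K] PL K Y := MvPolynomial.rename (shiftVar k)

/-- An ideal of `PL K Y` is an ℕ-ideal if it is stable under all shifts. -/
def IsNIdeal {Y : Type*} (I : Ideal (PL K Y)) : Prop := ∀ k, ∀ f ∈ I, shift K k f ∈ I

/-- The ℕ-ideal `⟨S⟩_ℕ` generated by a set `S`. -/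
def nspan {Y : Type*} (S : Set (PL K Y)) : Ideal (PL K Y) :=
  Ideal.span {g | ∃ k, ∃ f ∈ S, g = shift K k f}

/-- The place multidegree `∂(m)` of a monomial. -/
def placeDeg {Y : Type*} (m : (Y × ℕ+) →₀ ℕ) : ℕ+ →₀ ℕ := Finsupp.mapDomain Prod.snd m

/-- `f` is multihomogeneous of place multidegree `μ`. -/
def IsMultiHomog {Y : Type*} (μ : ℕ+ →₀ ℕ) (f : PL K Y) : Prop :=
  ∀ m ∈ f.support, placeDeg m = μ

/-- The multihomogeneous component of multidegree `μ` of `f`. -/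
def mComp {Y : Type*} (μ : ℕ+ →₀ ℕ) (f : PL K Y) : PL K Y :=
  ∑ m ∈ f.support.filter (fun m => placeDeg m = μ),
    MvPolynomial.monomial m (MvPolynomial.coeff m f)

/-- An ideal is multigraded iff it contains all multihomogeneous components of its elements. -/
def IsMultiGraded {Y : Type*} (I : Ideal (PL K Y)) : Prop := ∀ f ∈ I, ∀ μ, mComp K μ f ∈ I

/-- `ψ : P̄ → P̄`, with `ψ(x_i(j)) = x_i(j)` and `ψ(t(j)) = 1`. -/
def psi {X : Type*} : PL K (Option X) →ₐ[K] PL K (Option X) :=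
  MvPolynomial.aeval (fun p => Option.elim p.1 1 (fun x => MvPolynomial.X (some x, p.2)))

/-- The canonical embedding `P → P̄`. -/
def embP {X : Type*} : PL K X →ₐ[K] PL K (Option X) :=
  MvPolynomial.rename (fun p => (some p.1, p.2))

/-- The top multidegree `∂(f)` of `f` (componentwise max over the support). -/
def topDeg {Y : Type*} (f : PL K Y) : ℕ+ →₀ ℕ := f.support.sup placeDeg

/-- The pure-`t` monomial `∏_k t(k)^{ν_k}` with exponents `ν`. -/
def tExp {X : Type*} (ν : ℕ+ →₀ ℕ) : ((Option X) × ℕ+) →₀ ℕ :=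
  Finsupp.mapDomain (fun k => ((none : Option X), k)) ν

/-- The multihomogenization `f^* = Σ_μ f_μ ∏_k t(k)^{ν_k − μ_k} ∈ P̄` of `f ∈ P`. -/
def mhstar {X : Type*} (f : PL K X) : PL K (Option X) :=
  ∑ m ∈ f.support,
    MvPolynomial.monomial
      (Finsupp.mapDomain (fun p => ((some p.1 : Option X), p.2)) m +
        tExp (topDeg K f - placeDeg m))
      (MvPolynomial.coeff m f)

/-- Multihomogenization of an element already written in `P̄` (used for elements of `ψ(P̄) = P`). -/
def mhstarO {X : Type*} (f : PL K (Option X)) : PL K (Option X) :=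
  ∑ m ∈ f.support,
    MvPolynomial.monomial (m + tExp (topDeg K f - placeDeg m)) (MvPolynomial.coeff m f)

/-- The multihomogenization `I^*` of an ℕ-ideal `I ⊆ P`: the ℕ-ideal of `P̄` generated by all
multihomogeneous elements of `ψ⁻¹(I)` (identifying `P` with its image in `P̄`). -/
def mhstarIdeal {X : Type*} (I : Ideal (PL K X)) : Ideal (PL K (Option X)) :=
  nspan K {g | (∃ μ, IsMultiHomog K μ g) ∧ ∃ f ∈ I, psi K g = embP K f}

/-- The saturation `Sat(J) = ψ(J)^*` of a multigraded ℕ-ideal `J ⊆ P̄`. -/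
def SatP {X : Type*} (J : Ideal (PL K (Option X))) : Ideal (PL K (Option X)) :=
  nspan K {g | (∃ μ, IsMultiHomog K μ g) ∧ ∃ h ∈ J, psi K g = psi K h}

/-! ### The letterplace embedding -/

/-- Exponent vector of the letterplace monomial `y_1(n+1) y_2(n+2) ⋯` of a word. -/
def wordExpAux {Y : Type*} : ℕ → List Y → ((Y × ℕ+) →₀ ℕ)
  | _, [] => 0
  | n, y :: w => Finsupp.single (y, ⟨n + 1, n.succ_pos⟩) 1 + wordExpAux (n + 1) w

/-- The letterplace monomial `y_1(1) y_2(2) ⋯ y_d(d)` of a word `y_1 y_2 ⋯ y_d`. -/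
def wordExp {Y : Type*} (w : FreeMonoid Y) : (Y × ℕ+) →₀ ℕ := wordExpAux 0 (FreeMonoid.toList w)

/-- The letterplace embedding `ι : K⟨Y⟩ → PL K Y` (a `K`-linear map). -/
def iota {Y : Type*} (f : FA K Y) : PL K Y :=
  Finsupp.sum f.coeff fun w c => MvPolynomial.monomial (wordExp w) c

/-- The set `L` of multilinear elements of `PL K Y`: multihomogeneous elements of `V = Im ι`. -/
def Lset {Y : Type*} : Set (PL K Y) :=
  {f | f ∈ Set.range (iota K (Y := Y)) ∧ ∃ μ, IsMultiHomog K μ f}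

/-- A letterplace ideal (`L`-ideal): an ℕ-ideal ℕ-generated by its multilinear elements. -/
def IsLPIdeal {Y : Type*} (J : Ideal (PL K Y)) : Prop :=
  IsNIdeal K J ∧ J = nspan K ((J : Set (PL K Y)) ∩ Lset K)

/-- The generators `x_i(1)t(2) − t(1)x_i(2)` of `D`. -/
def Dgens (X : Type*) : Set (PL K (Option X)) :=
  {g | ∃ x : X,
    g = MvPolynomial.X ((some x : Option X), (1 : ℕ+)) *
          MvPolynomial.X ((none : Option X), (2 : ℕ+)) -
        MvPolynomial.X ((none : Option X), (1 : ℕ+)) *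
          MvPolynomial.X ((some x : Option X), (2 : ℕ+))}

/-- The generators `ῑ([t, x_i]) = t(1)x_i(2) − x_i(1)t(2)` of `D`. -/
def DgensT (X : Type*) : Set (PL K (Option X)) :=
  {g | ∃ x : X,
    g = MvPolynomial.X ((none : Option X), (1 : ℕ+)) *
          MvPolynomial.X ((some x : Option X), (2 : ℕ+)) -
        MvPolynomial.X ((some x : Option X), (1 : ℕ+)) *
          MvPolynomial.X ((none : Option X), (2 : ℕ+))}

/-- `D ⊆ P̄`: the letterplace analogue of `C`. -/
def Did (X : Type*) : Ideal (PL K (Option X)) := nspan K (Dgens K X)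

/-- The product `∏_{d < k ≤ d'} t(k)`. -/
def tProd (X : Type*) (d d' : ℕ) : PL K (Option X) :=
  ∏ k ∈ Finset.range (d' - d), MvPolynomial.X ((none : Option X), ⟨d + k + 1, Nat.succ_pos _⟩)

/-- The `L`-saturation `Sat_L(J)` of a letterplace ideal `D ⊆ J ⊆ P̄`. -/
def SatL {X : Type*} (J : Ideal (PL K (Option X))) : Ideal (PL K (Option X)) :=
  nspan K {f | f ∈ Lset K ∧ ∃ d', MvPolynomial.totalDegree f ≤ d' ∧
    tProd K X (MvPolynomial.totalDegree f) d' * f ∈ J}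

/-- `J` is `L`-saturated: `t(d+1)·f ∈ J` with `f` multilinear of degree `d` implies `f ∈ J`. -/
def IsLSat {X : Type*} (J : Ideal (PL K (Option X))) : Prop :=
  ∀ f ∈ Lset K (Y := Option X),
    MvPolynomial.X ((none : Option X), ⟨MvPolynomial.totalDegree f + 1, Nat.succ_pos _⟩) * f ∈ J
      → f ∈ J

/-! ### Monomial orderings -/

/-- The shift action on letterplace monomials. -/
def shiftMon {Y : Type*} (k : ℕ) (m : (Y × ℕ+) →₀ ℕ) : (Y × ℕ+) →₀ ℕ :=
  Finsupp.mapDomain (shiftVar k) m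

/-- A monomial ordering of a (possibly infinite) commutative polynomial ring, given as a strict
order relation on exponent vectors: a well-founded strict total order with `1` minimal,
compatible with multiplication of monomials. -/
structure IsMonOrd {σ : Type*} (r : (σ →₀ ℕ) → (σ →₀ ℕ) → Prop) : Prop where
  total : ∀ m n, r m n ∨ m = n ∨ r n m
  irrefl : ∀ m, ¬ r m m
  trans : ∀ a b c, r a b → r b c → r a c
  wf : WellFounded r
  zero_min : ∀ m, ¬ r m 0
  add_compat : ∀ m n u, r m n → r (u + m) (u + n)

/-- The ordering is compatible with the ℕ-action (an `ℕ`-ordering). -/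
def IsNCompat {Y : Type*} (r : ((Y × ℕ+) →₀ ℕ) → ((Y × ℕ+) →₀ ℕ) → Prop) : Prop :=
  ∀ (k : ℕ) m n, r m n → r (shiftMon k m) (shiftMon k n)

/-- The weight of a letterplace monomial: the largest place index occurring in it
(`⊥ = -∞` for the monomial `1`). -/
def wt {Y : Type*} (m : (Y × ℕ+) →₀ ℕ) : WithBot ℕ :=
  m.support.sup (fun p => ((p.2 : ℕ) : WithBot ℕ))

/-- A weighted ordering: smaller weight implies smaller monomial. -/
def IsWeighted {Y : Type*} (r : ((Y × ℕ+) →₀ ℕ) → ((Y × ℕ+) →₀ ℕ) → Prop) : Prop :=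
  ∀ m n, wt m < wt n → r m n

/-- A monomial ordering of the free algebra `K⟨Y⟩`: a well-founded strict total order on words
compatible with two-sided multiplication. -/
structure IsWordOrd {Y : Type*} (r : FreeMonoid Y → FreeMonoid Y → Prop) : Prop where
  total : ∀ m n, r m n ∨ m = n ∨ r n m
  irrefl : ∀ m, ¬ r m m
  trans : ∀ a b c, r a b → r b c → r a c
  wf : WellFounded r
  mul_compat : ∀ m n u v, r m n → r (u * m * v) (u * n * v)

/-- A word ordering is graded if shorter words are smaller. -/
def IsGradedWordOrd {Y : Type*} (r : FreeMonoid Y → FreeMonoid Y → Prop) : Prop :=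
  ∀ m n, FreeMonoid.length m < FreeMonoid.length n → r m n

/-- The word ordering of `K⟨Y⟩` induced by a monomial ordering of `PL K Y` via `ι`. -/
def inducedWordOrd {Y : Type*} (r : ((Y × ℕ+) →₀ ℕ) → ((Y × ℕ+) →₀ ℕ) → Prop)
    (m n : FreeMonoid Y) : Prop := r (wordExp m) (wordExp n)

/-- The factor of a letterplace monomial at place `j` (a monomial of `P(j) ≅ P(1)`). -/
def fiber {Y : Type*} (m : (Y × ℕ+) →₀ ℕ) (j : ℕ+) : Y →₀ ℕ :=
  Finsupp.comapDomain (fun y => (y, j)) m (fun _ _ _ _ h => congrArg Prod.fst h)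

/-- The place `ℕ`-ordering of `PL K Y` induced by a monomial ordering `r1` of `P(1)`:
compare the factors at the highest place where the two monomials differ. -/
def placeExt {Y : Type*} (r1 : (Y →₀ ℕ) → (Y →₀ ℕ) → Prop)
    (m n : (Y × ℕ+) →₀ ℕ) : Prop :=
  ∃ j : ℕ+, r1 (fiber m j) (fiber n j) ∧ ∀ j', j < j' → fiber m j' = fiber n j'

/-! ### Leading monomials and Gröbner bases -/

/-- `m` is the leading monomial of `f ∈ PL K Y` with respect to the ordering `r`. -/
def IsLM {Y : Type*} (r : ((Y × ℕ+) →₀ ℕ) → ((Y × ℕ+) →₀ ℕ) → Prop)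
    (f : PL K Y) (m : (Y × ℕ+) →₀ ℕ) : Prop :=
  m ∈ f.support ∧ ∀ m' ∈ f.support, m' ≠ m → r m' m

/-- `LM(S)`: the ideal generated by the leading monomials of the nonzero elements of `S`. -/
def LMideal {Y : Type*} (r : ((Y × ℕ+) →₀ ℕ) → ((Y × ℕ+) →₀ ℕ) → Prop)
    (S : Set (PL K Y)) : Ideal (PL K Y) :=
  Ideal.span {p | ∃ f ∈ S, f ≠ 0 ∧ ∃ m, IsLM K r f m ∧ p = MvPolynomial.monomial m (1 : K)}

/-- The ideal generated by `ℕ·lm(G)`. -/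
def shLMideal {Y : Type*} (r : ((Y × ℕ+) →₀ ℕ) → ((Y × ℕ+) →₀ ℕ) → Prop)
    (G : Set (PL K Y)) : Ideal (PL K Y) :=
  Ideal.span {p | ∃ g ∈ G, g ≠ 0 ∧ ∃ m, IsLM K r g m ∧
    ∃ k : ℕ, p = MvPolynomial.monomial (shiftMon k m) (1 : K)}

/-- `G ⊆ I` is a Gröbner `ℕ`-basis of the ℕ-ideal `I`: `ℕ·lm(G)` generates `LM(I)`. -/
def IsGroebnerNB {Y : Type*} (r : ((Y × ℕ+) →₀ ℕ) → ((Y × ℕ+) →₀ ℕ) → Prop)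
    (I : Ideal (PL K Y)) (G : Set (PL K Y)) : Prop :=
  G ⊆ (I : Set (PL K Y)) ∧ shLMideal K r G = LMideal K r (I : Set (PL K Y))

/-- `G` is a Gröbner `L`-basis of the letterplace ideal `J`: `G ⊆ J ∩ L` and the leading monomial
of every nonzero multilinear element of `J` is divisible by a shift of some `lm(g)`, `g ∈ G`. -/
def IsGroebnerLB {Y : Type*} (r : ((Y × ℕ+) →₀ ℕ) → ((Y × ℕ+) →₀ ℕ) → Prop)
    (J : Ideal (PL K Y)) (G : Set (PL K Y)) : Prop :=
  G ⊆ (J : Set (PL K Y)) ∩ Lset K ∧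
  ∀ f ∈ (J : Set (PL K Y)) ∩ Lset K, f ≠ 0 →
    ∃ g ∈ G, ∃ (k : ℕ) (mg mf : (Y × ℕ+) →₀ ℕ),
      IsLM K r g mg ∧ IsLM K r f mf ∧ shiftMon k mg ≤ mf

/-- `w` is the leading monomial (word) of `f ∈ K⟨Y⟩` with respect to the word ordering `r'`. -/
def IsLMF {Y : Type*} (r' : FreeMonoid Y → FreeMonoid Y → Prop)
    (f : FA K Y) (w : FreeMonoid Y) : Prop :=
  w ∈ f.coeff.support ∧ ∀ w' ∈ f.coeff.support, w' ≠ w → r' w' w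

/-- `G ⊆ I` is a Gröbner basis of the two-sided ideal `I ⊆ K⟨Y⟩`: the leading word of every
nonzero `f ∈ I` has the form `u · lm(g) · v` for some nonzero `g ∈ G`. -/
def IsGroebnerBF {Y : Type*} (r' : FreeMonoid Y → FreeMonoid Y → Prop)
    (I : TwoSidedIdeal (FA K Y)) (G : Set (FA K Y)) : Prop :=
  G ⊆ (I : Set (FA K Y)) ∧
  ∀ f ∈ I, f ≠ 0 → ∃ g ∈ G, g ≠ 0 ∧ ∃ (u v wf wg : FreeMonoid Y),
    IsLMF K r' f wf ∧ IsLMF K r' g wg ∧ wf = u * wg * v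

/-! ### Normal forms -/

/-- The generators `x_i(1) x_j(1)` of `N`. -/
def Ngens (Y : Type*) : Set (PL K Y) :=
  {g | ∃ i j : Y, g = MvPolynomial.X (i, (1 : ℕ+)) * MvPolynomial.X (j, (1 : ℕ+))}

/-- A polynomial is in normal form modulo `N` iff in each of its monomials all place indices
are pairwise distinct. -/
def NormalModN {Y : Type*} (f : PL K Y) : Prop :=
  ∀ m ∈ f.support, ∀ k : ℕ+, placeDeg m k ≤ 1

/-- A polynomial is in normal form modulo `D` iff none of its monomials is divisible by a shift
of the leading monomial of some generator `t(1)x_i(2) − x_i(1)t(2)` of `D`. -/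
def NormalModD {X : Type*} (r : (((Option X) × ℕ+) →₀ ℕ) → (((Option X) × ℕ+) →₀ ℕ) → Prop)
    (f : PL K (Option X)) : Prop :=
  ∀ m ∈ f.support, ∀ g ∈ DgensT K X, ∀ mg, IsLM K r g mg → ∀ k : ℕ, ¬ shiftMon k mg ≤ m

/-- `G` is a Gröbner `L`-basis of `J` modulo `D`: its elements are multilinear elements of `J`
in normal form modulo `D`, and together with the generators of `D` they form a
Gröbner `L`-basis of `J`. -/
def IsGroebnerLBmodD {X : Type*}
    (r : (((Option X) × ℕ+) →₀ ℕ) → (((Option X) × ℕ+) →₀ ℕ) → Prop)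
    (J : Ideal (PL K (Option X))) (G : Set (PL K (Option X))) : Prop :=
  (∀ g ∈ G, g ∈ (J : Set (PL K (Option X))) ∩ Lset K ∧ NormalModD K r g) ∧
  IsGroebnerLB K r J (G ∪ DgensT K X)

/-- The commutators `[t, x_i] = t x_i − x_i t` in `F̄`. -/
def commGens (X : Type*) : Set (FA K (Option X)) :=
  {h | ∃ x : X, h = tv K * gen K (some x) - gen K (some x) * tv K}

/-- A polynomial of `F̄` is in normal form modulo `C` iff none of its words contains the leading
word of some commutator `[t, x_i]` as a factor. -/
def NormalModC {X : Type*} (r' : FreeMonoid (Option X) → FreeMonoid (Option X) → Prop)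
    (f : FA K (Option X)) : Prop :=
  ∀ w ∈ f.coeff.support, ∀ g ∈ commGens K X, ∀ wg, IsLMF K r' g wg →
    ¬ ∃ u v, w = u * wg * v

/-! ### Concrete orderings on words -/

/-- The order on the letters of `X ∪ {t}` (with `X = ℕ`): `t ≺ x_1 ≺ x_2 ≺ ⋯`. -/
def optLt : Option ℕ → Option ℕ → Prop
  | none, some _ => True
  | some i, some j => i < j
  | _, none => False

/-- The graded right lexicographic ordering on words: first compare lengths, then compare
letter by letter from the right. -/
def grRightLex {Y : Type*} (lt : Y → Y → Prop) (dflt : Y) (m n : FreeMonoid Y) : Prop :=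
  FreeMonoid.length m < FreeMonoid.length n ∨
  (FreeMonoid.length m = FreeMonoid.length n ∧
    ∃ t < FreeMonoid.length m,
      lt ((FreeMonoid.toList m).getD t dflt) ((FreeMonoid.toList n).getD t dflt) ∧
      ∀ s, t < s → (FreeMonoid.toList m).getD s dflt = (FreeMonoid.toList n).getD s dflt)

end

/-! ### Auxiliary development for Statement 13 -/

section Statement13Aux

open MvPolynomial Classical

namespace St13
noncomputable section

abbrev Mon (Y : Type*) := (Y × ℕ+) →₀ ℕ

variable {K : Type*} [Field K] {Y : Type*}

/-! #### Order basics -/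

theorem rAsymm {r : Mon Y → Mon Y → Prop} (hr : IsMonOrd r) {a b : Mon Y} (h : r a b) :
    ¬ r b a := fun h' => hr.irrefl a (hr.trans _ _ _ h h')

/-- `rle r m n` : `m ≼ n`. -/
def rle (r : Mon Y → Mon Y → Prop) (m n : Mon Y) : Prop := r m n ∨ m = n

theorem rle_trans {r : Mon Y → Mon Y → Prop} (hr : IsMonOrd r) {a b c : Mon Y}
    (h1 : rle r a b) (h2 : rle r b c) : rle r a c := by
  rcases h1 with h1 | rfl
  · rcases h2 with h2 | rfl
    · exact Or.inl (hr.trans _ _ _ h1 h2)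
    · exact Or.inl h1
  · exact h2

theorem rle_antisymm {r : Mon Y → Mon Y → Prop} (hr : IsMonOrd r) {a b : Mon Y}
    (h1 : rle r a b) (h2 : rle r b a) : a = b := by
  rcases h1 with h1 | rfl
  · rcases h2 with h2 | rfl
    · exact absurd h2 (rAsymm hr h1)
    · rfl
  · rfl

theorem exists_top {r : Mon Y → Mon Y → Prop} (hr : IsMonOrd r) (s : Finset (Mon Y))
    (hs : s.Nonempty) : ∃ m ∈ s, ∀ m' ∈ s, m' ≠ m → r m' m := by
  classical
  induction s using Finset.induction_on with
  | empty => exact absurd hs (by simp)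
  | @insert a t ha ih =>
    rcases t.eq_empty_or_nonempty with rfl | ht
    · exact ⟨a, by simp, by simp⟩
    · obtain ⟨m, hm, hmax⟩ := ih ht
      have hup : ∀ m' ∈ t, rle r m' m := fun m' hm' => by
        by_cases h : m' = m
        · exact Or.inr h
        · exact Or.inl (hmax m' hm' h)
      rcases hr.total a m with h | h | h
      · refine ⟨m, Finset.mem_insert_of_mem hm, ?_⟩
        intro m' hm' hne
        rcases Finset.mem_insert.mp hm' with rfl | hm't
        · exact h
        · exact hmax m' hm't hne
      · refine ⟨m, Finset.mem_insert_of_mem hm, ?_⟩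
        intro m' hm' hne
        rcases Finset.mem_insert.mp hm' with rfl | hm't
        · exact absurd h hne
        · exact hmax m' hm't hne
      · refine ⟨a, Finset.mem_insert_self a t, ?_⟩
        intro m' hm' hne
        rcases Finset.mem_insert.mp hm' with rfl | hm't
        · exact absurd rfl hne
        · rcases hup m' hm't with h' | rfl
          · exact hr.trans _ _ _ h' h
          · exact h

theorem exists_lm {r : Mon Y → Mon Y → Prop} (hr : IsMonOrd r) {f : PL K Y} (hf : f ≠ 0) :
    ∃ m, IsLM K r f m := by
  obtain ⟨m, hm, hmax⟩ := exists_top hr f.support (by rwa [Finset.nonempty_iff_ne_empty, Ne,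
    MvPolynomial.support_eq_empty])
  exact ⟨m, hm, hmax⟩

theorem lm_unique {r : Mon Y → Mon Y → Prop} (hr : IsMonOrd r) {f : PL K Y} {m m' : Mon Y}
    (h : IsLM K r f m) (h' : IsLM K r f m') : m = m' := by
  by_contra hne
  exact rAsymm hr (h.2 m' h'.1 (Ne.symm hne)) (h'.2 m h.1 hne)

/-- chosen leading monomial -/
noncomputable def lmo (r : Mon Y → Mon Y → Prop) (f : PL K Y) : Mon Y :=
  if h : ∃ m, IsLM K r f m then h.choose else 0

theorem isLM_lmo {r : Mon Y → Mon Y → Prop} (hr : IsMonOrd r) {f : PL K Y} (hf : f ≠ 0) :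
    IsLM K r f (lmo r f) := by
  have h : ∃ m, IsLM K r f m := exists_lm hr hf
  rw [lmo, dif_pos h]
  exact h.choose_spec

theorem rle_of_mem_supp {r : Mon Y → Mon Y → Prop} {f : PL K Y} {m mf : Mon Y}
    (hlm : IsLM K r f mf) (hm : m ∈ f.support) : rle r m mf := by
  by_cases h : m = mf
  · exact Or.inr h
  · exact Or.inl (hlm.2 m hm h)

theorem notMem_supp_of_gt {r : Mon Y → Mon Y → Prop} (hr : IsMonOrd r) {f : PL K Y}
    {mf d : Mon Y} (hlm : IsLM K r f mf) (hd : r mf d) : d ∉ f.support := by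
  intro hmem
  rcases rle_of_mem_supp hlm hmem with h | rfl
  · exact rAsymm hr h hd
  · exact hr.irrefl _ hd

theorem coeff_eq_zero_of_gt {r : Mon Y → Mon Y → Prop} (hr : IsMonOrd r) {f : PL K Y}
    {mf d : Mon Y} (hlm : IsLM K r f mf) (hd : r mf d) : MvPolynomial.coeff d f = 0 := by
  have := notMem_supp_of_gt hr hlm hd
  rwa [MvPolynomial.mem_support_iff, not_not] at this

/-! #### Shifts -/

theorem shiftVar_injective {k : ℕ} : Function.Injective (shiftVar (Y := Y) k) := by
  intro a b h
  simp only [shiftVar, Prod.mk.injEq] at h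
  obtain ⟨h1, h2⟩ := Prod.mk.inj h
  have h3 : (a.2 : ℕ) + k = (b.2 : ℕ) + k := congrArg Subtype.val h2
  exact Prod.ext h1 (PNat.coe_injective (by omega))

theorem shiftVar_shiftVar (k k' : ℕ) (p : Y × ℕ+) :
    shiftVar k (shiftVar k' p) = shiftVar (k' + k) p := by
  simp only [shiftVar]
  exact Prod.ext rfl (PNat.coe_injective (by show (p.2 : ℕ) + k' + k = (p.2 : ℕ) + (k' + k); omega))

theorem shiftMon_shiftMon (k k' : ℕ) (m : Mon Y) :
    shiftMon k (shiftMon k' m) = shiftMon (k' + k) m := by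
  rw [shiftMon, shiftMon, shiftMon, ← Finsupp.mapDomain_comp]
  exact Finsupp.mapDomain_congr (fun p _ => shiftVar_shiftVar k k' p)

theorem shiftMon_injective {k : ℕ} : Function.Injective (shiftMon (Y := Y) k) :=
  Finsupp.mapDomain_injective shiftVar_injective

theorem shiftMon_add (k : ℕ) (m n : Mon Y) :
    shiftMon k (m + n) = shiftMon k m + shiftMon k n := Finsupp.mapDomain_add

theorem shiftMon_mono {k : ℕ} {m n : Mon Y} (h : m ≤ n) :
    shiftMon k m ≤ shiftMon k n := by
  obtain ⟨c, rfl⟩ := le_iff_exists_add.mp h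
  rw [shiftMon_add]
  exact le_add_right le_rfl

theorem shift_monomial (k : ℕ) (m : Mon Y) (c : K) :
    shift K k (MvPolynomial.monomial m c) = MvPolynomial.monomial (shiftMon k m) c :=
  MvPolynomial.rename_monomial _ _ _

theorem support_shift (k : ℕ) (f : PL K Y) :
    (shift K k f).support = f.support.image (shiftMon k) :=
  MvPolynomial.support_rename_of_injective shiftVar_injective

theorem coeff_shift (k : ℕ) (f : PL K Y) (m : Mon Y) :
    MvPolynomial.coeff (shiftMon k m) (shift K k f) = MvPolynomial.coeff m f :=
  MvPolynomial.coeff_rename_mapDomain _ shiftVar_injective f m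

theorem shift_injective (k : ℕ) : Function.Injective (shift K k (Y := Y)) :=
  MvPolynomial.rename_injective _ shiftVar_injective

theorem shift_ne_zero {k : ℕ} {f : PL K Y} (hf : f ≠ 0) : shift K k f ≠ 0 := by
  intro h
  exact hf (shift_injective k (by rw [h, map_zero]))

theorem shift_shift (k k' : ℕ) (f : PL K Y) :
    shift K k (shift K k' f) = shift K (k' + k) f := by
  show MvPolynomial.rename _ (MvPolynomial.rename _ f) = MvPolynomial.rename _ f
  rw [MvPolynomial.rename_rename]
  have : (shiftVar k ∘ shiftVar k' : Y × ℕ+ → Y × ℕ+) = shiftVar (k' + k) :=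
    funext (shiftVar_shiftVar k k')
  rw [this]

theorem isLM_shift {r : Mon Y → Mon Y → Prop} (hrN : IsNCompat r) {f : PL K Y} {m : Mon Y}
    (k : ℕ) (h : IsLM K r f m) : IsLM K r (shift K k f) (shiftMon k m) := by
  constructor
  · rw [support_shift]
    exact Finset.mem_image_of_mem _ h.1
  · intro m' hm' hne
    rw [support_shift] at hm'
    obtain ⟨m₀, hm₀, rfl⟩ := Finset.mem_image.mp hm'
    exact hrN k _ _ (h.2 m₀ hm₀ (fun he => hne (he ▸ rfl)))

/-! #### placeDeg and intervals -/

/-- shift on place multidegrees -/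
def pshift (k : ℕ) (j : ℕ+) : ℕ+ := ⟨(j : ℕ) + k, Nat.add_pos_left j.2 k⟩

def pdShift (k : ℕ) (ν : ℕ+ →₀ ℕ) : ℕ+ →₀ ℕ := Finsupp.mapDomain (pshift k) ν

theorem placeDeg_add (m n : Mon Y) : placeDeg (m + n) = placeDeg m + placeDeg n :=
  Finsupp.mapDomain_add

theorem placeDeg_single (x : Y × ℕ+) (n : ℕ) :
    placeDeg (Finsupp.single x n) = Finsupp.single x.2 n := Finsupp.mapDomain_single

theorem placeDeg_mono {m n : Mon Y} (h : m ≤ n) : placeDeg m ≤ placeDeg n := by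
  obtain ⟨c, rfl⟩ := le_iff_exists_add.mp h
  rw [placeDeg_add]
  exact le_add_right le_rfl

theorem placeDeg_shiftMon (k : ℕ) (m : Mon Y) :
    placeDeg (shiftMon k m) = pdShift k (placeDeg m) := by
  rw [placeDeg, shiftMon, ← Finsupp.mapDomain_comp, pdShift, placeDeg, ← Finsupp.mapDomain_comp]
  rfl

theorem mapDomain_apply_sum {α β : Type*} [DecidableEq β] (f : α → β) (m : α →₀ ℕ) (b : β) :
    Finsupp.mapDomain f m b = ∑ a ∈ m.support, if f a = b then m a else 0 := by
  classical
  rw [Finsupp.mapDomain, Finsupp.sum_apply]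
  rw [Finsupp.sum]
  exact Finset.sum_congr rfl (fun a _ => by rw [Finsupp.single_apply])

theorem placeDeg_apply (m : Mon Y) (j : ℕ+) :
    placeDeg m j = ∑ x ∈ m.support, if x.2 = j then m x else 0 := by
  rw [placeDeg, mapDomain_apply_sum]

theorem apply_le_placeDeg (m : Mon Y) (x : Y × ℕ+) : m x ≤ placeDeg m x.2 := by
  classical
  by_cases h : m x = 0
  · simp [h]
  · rw [placeDeg_apply]
    have hx : x ∈ m.support := Finsupp.mem_support_iff.mpr h
    calc m x = if x.2 = x.2 then m x else 0 := by rw [if_pos rfl]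
    _ ≤ ∑ x' ∈ m.support, if x'.2 = x.2 then m x' else 0 :=
      Finset.single_le_sum (f := fun x' => if x'.2 = x.2 then m x' else 0)
        (fun _ _ => by positivity) hx

theorem two_apply_le_placeDeg {m : Mon Y} {x x' : Y × ℕ+} (hne : x ≠ x') (hj : x.2 = x'.2) :
    m x + m x' ≤ placeDeg m x.2 := by
  classical
  by_cases h : m x = 0
  · rw [h, zero_add, hj]; exact apply_le_placeDeg m x'
  by_cases h' : m x' = 0
  · rw [h', add_zero]; exact apply_le_placeDeg m x
  rw [placeDeg_apply]
  have hsub : {x, x'} ⊆ m.support := by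
    intro z hz
    rcases Finset.mem_insert.mp hz with rfl | hz
    · exact Finsupp.mem_support_iff.mpr h
    · rw [Finset.mem_singleton.mp hz]
      exact Finsupp.mem_support_iff.mpr h'
  calc m x + m x' = ∑ z ∈ ({x, x'} : Finset (Y × ℕ+)), if z.2 = x.2 then m z else 0 := by
        rw [Finset.sum_pair hne, if_pos rfl, if_pos hj.symm]
  _ ≤ _ := Finset.sum_le_sum_of_subset_of_nonneg hsub (fun _ _ _ => by positivity)

theorem eq_zero_of_placeDeg_eq_zero {m : Mon Y} (h : placeDeg m = 0) : m = 0 := by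
  ext x
  have := apply_le_placeDeg m x
  rw [h] at this
  simpa using this

/-- the interval multidegree `(n, n+D]` -/
def intv (n D : ℕ) : ℕ+ →₀ ℕ := ∑ i ∈ Finset.range D, Finsupp.single (n + i).succPNat 1

theorem intv_zero (n : ℕ) : intv n 0 = 0 := by simp [intv]

theorem intv_succ (n D : ℕ) :
    intv n (D + 1) = intv n D + Finsupp.single (n + D).succPNat 1 := by
  rw [intv, Finset.sum_range_succ, intv]

theorem intv_succ' (n D : ℕ) :
    intv n (D + 1) = Finsupp.single n.succPNat 1 + intv (n + 1) D := by
  rw [intv, Finset.sum_range_succ']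
  rw [add_comm]
  congr 1
  · rw [intv]
    exact Finset.sum_congr rfl (fun i _ => by
      congr 1
      exact congrArg Nat.succPNat (by omega))

theorem intv_apply (n D : ℕ) (j : ℕ+) :
    intv n D j = if n < (j : ℕ) ∧ (j : ℕ) ≤ n + D then 1 else 0 := by
  induction D with
  | zero =>
    rw [intv_zero, if_neg (by omega)]
    rfl
  | succ D ih =>
    rw [intv_succ, Finsupp.add_apply, ih, Finsupp.single_apply]
    have hco : ((n + D).succPNat = j) ↔ ((j : ℕ) = n + D + 1) := by
      constructor
      · intro h; rw [← h]; rfl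
      · intro h; exact PNat.coe_injective (by rw [h]; rfl)
    by_cases hc : (j : ℕ) = n + D + 1
    · rw [if_pos (hco.mpr hc), if_neg (by omega), if_pos (by omega)]
    · rw [if_neg (fun h => hc (hco.mp h)), add_zero]
      by_cases hc2 : n < (j : ℕ) ∧ (j : ℕ) ≤ n + D
      · rw [if_pos hc2, if_pos ⟨hc2.1, by omega⟩]
      · rw [if_neg hc2, if_neg (by omega)]

theorem intv_le_one (n D : ℕ) (j : ℕ+) : intv n D j ≤ 1 := by
  rw [intv_apply]; split <;> omega

theorem pdShift_single (k : ℕ) (j : ℕ+) (n : ℕ) :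
    pdShift k (Finsupp.single j n) = Finsupp.single (pshift k j) n := Finsupp.mapDomain_single

theorem pdShift_add (k : ℕ) (a b : ℕ+ →₀ ℕ) :
    pdShift k (a + b) = pdShift k a + pdShift k b := Finsupp.mapDomain_add

theorem pdShift_intv (k n D : ℕ) : pdShift k (intv n D) = intv (n + k) D := by
  induction D with
  | zero => rw [intv_zero, intv_zero, pdShift, Finsupp.mapDomain_zero]
  | succ D ih =>
    rw [intv_succ, pdShift_add, ih, pdShift_single, intv_succ]
    congr 2
    exact PNat.coe_injective (by simp [pshift, Nat.succPNat]; omega)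

/-! #### wordExp, iota and Lset -/

theorem placeDeg_wordExpAux (n : ℕ) (l : List Y) :
    placeDeg (wordExpAux n l) = intv n l.length := by
  induction l generalizing n with
  | nil => rw [wordExpAux]; simp [intv_zero, placeDeg]
  | cons y w ih =>
    rw [wordExpAux, placeDeg_add, placeDeg_single, ih, List.length_cons, intv_succ']
    rfl

theorem placeDeg_wordExp (w : FreeMonoid Y) :
    placeDeg (wordExp w) = intv 0 (FreeMonoid.length w) :=
  placeDeg_wordExpAux 0 _

theorem exists_word_of_placeDeg (D n : ℕ) (m : Mon Y) (h : placeDeg m = intv n D) :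
    ∃ l : List Y, l.length = D ∧ m = wordExpAux n l := by
  induction D generalizing n m with
  | zero =>
    refine ⟨[], rfl, ?_⟩
    rw [wordExpAux]
    exact eq_zero_of_placeDeg_eq_zero (by rw [h, intv_zero])
  | succ D ih =>
    have h1 : placeDeg m n.succPNat = 1 := by
      rw [h, intv_apply, if_pos (by constructor <;> simp [Nat.succPNat] <;> omega)]
    have hex : ∃ x ∈ m.support, x.2 = n.succPNat := by
      by_contra hno
      push_neg at hno
      rw [placeDeg_apply, Finset.sum_eq_zero (fun x hx => if_neg (hno x hx))] at h1
      omega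
    obtain ⟨x, hx, hx2⟩ := hex
    have hle : Finsupp.single x 1 ≤ m :=
      Finsupp.single_le_iff.mpr (Nat.one_le_iff_ne_zero.mpr (Finsupp.mem_support_iff.mp hx))
    obtain ⟨m', hm'⟩ := le_iff_exists_add.mp hle
    have hpd' : placeDeg m' = intv (n + 1) D := by
      have := congrArg placeDeg hm'
      rw [h, placeDeg_add, placeDeg_single, hx2, intv_succ' n D] at this
      exact (add_left_cancel this).symm
    obtain ⟨l, hlen, hl⟩ := ih (n + 1) m' hpd'
    refine ⟨x.1 :: l, by simp [hlen], ?_⟩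
    rw [wordExpAux, ← hl]
    rw [hm']
    have hx' : x = (x.1, n.succPNat) := by
      rw [← hx2]
    congr 1
    rw [hx']
    rfl

theorem iota_add (f g : FA K Y) : iota K (f + g) = iota K f + iota K g := by
  rw [iota, iota, iota, MonoidAlgebra.coeff_add]
  exact Finsupp.sum_add_index' (fun w => by simp) (fun w c c' => by
    rw [map_add])

/-- `iota` as an `AddMonoidHom`. -/
noncomputable def iotaHom (K : Type*) [Field K] (Y : Type*) : FA K Y →+ PL K Y :=
  AddMonoidHom.mk' (iota K) (iota_add)

theorem iota_single (w : FreeMonoid Y) (c : K) :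
    iota K (MonoidAlgebra.single w c) = MvPolynomial.monomial (wordExp w) c := by
  rw [iota, MonoidAlgebra.coeff_single]
  exact Finsupp.sum_single_index (by simp)

theorem supp_iota {f : FA K Y} {m : Mon Y} (h : m ∈ (iota K f).support) :
    ∃ w ∈ f.coeff.support, m = wordExp w := by
  classical
  have := MvPolynomial.support_sum h
  obtain ⟨w, hw, hm⟩ := Finset.mem_biUnion.mp this
  refine ⟨w, hw, ?_⟩
  have hc : MvPolynomial.coeff m (MvPolynomial.monomial (wordExp w) (f.coeff w)) ≠ 0 :=
    MvPolynomial.mem_support_iff.mp hm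
  rw [MvPolynomial.coeff_monomial] at hc
  by_cases he : wordExp w = m
  · exact he.symm
  · rw [if_neg he] at hc
    exact absurd rfl hc

theorem normal_of_lset {f : PL K Y} (hf : f ∈ Lset K) :
    ∀ m ∈ f.support, ∀ j : ℕ+, placeDeg m j ≤ 1 := by
  obtain ⟨⟨F, rfl⟩, _⟩ := hf
  intro m hm j
  obtain ⟨w, _, rfl⟩ := supp_iota hm
  rw [placeDeg_wordExp]
  exact intv_le_one _ _ _

theorem lset_multidegree {f : PL K Y} (hf : f ∈ Lset K) (hne : f ≠ 0) :
    ∃ D, IsMultiHomog K (intv 0 D) f := by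
  obtain ⟨hr, μ, hμ⟩ := hf
  obtain ⟨F, rfl⟩ := hr
  have hsupp : (iota K F).support.Nonempty := by
    rwa [Finset.nonempty_iff_ne_empty, Ne, MvPolynomial.support_eq_empty]
  obtain ⟨m, hm⟩ := hsupp
  obtain ⟨w, _, rfl⟩ := supp_iota hm
  refine ⟨FreeMonoid.length w, ?_⟩
  intro m' hm'
  rw [hμ m' hm', ← hμ _ hm, placeDeg_wordExp]

theorem mem_lset_of_intv {f : PL K Y} {D : ℕ}
    (hmh : IsMultiHomog K (intv 0 D) f) : f ∈ Lset K := by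
  classical
  refine ⟨?_, ⟨intv 0 D, hmh⟩⟩
  have : ∀ m ∈ f.support, ∃ w : FreeMonoid Y, m = wordExp w := by
    intro m hm
    obtain ⟨l, _, hl⟩ := exists_word_of_placeDeg D 0 m (hmh m hm)
    exact ⟨FreeMonoid.ofList l, hl⟩
  choose wfun hwfun using this
  refine ⟨∑ m ∈ f.support.attach, MonoidAlgebra.single (wfun m.1 m.2) (MvPolynomial.coeff m.1 f), ?_⟩
  show iotaHom K Y _ = f
  rw [map_sum (iotaHom K Y)]
  have : ∀ m : f.support, iotaHom K Y (MonoidAlgebra.single (wfun m.1 m.2) (MvPolynomial.coeff m.1 f))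
      = MvPolynomial.monomial m.1 (MvPolynomial.coeff m.1 f) := by
    intro m
    show iota K _ = _
    rw [iota_single, ← hwfun m.1 m.2]
  rw [Finset.sum_congr rfl (fun m _ => this m)]
  rw [Finset.sum_attach f.support (fun m => MvPolynomial.monomial m (MvPolynomial.coeff m f))]
  exact (MvPolynomial.as_sum f).symm


/-! #### Multihomogeneous components -/

theorem multihomog_shift {ν : ℕ+ →₀ ℕ} {h : PL K Y} (k : ℕ) (hh : IsMultiHomog K ν h) :
    IsMultiHomog K (pdShift k ν) (shift K k h) := by
  intro m hm
  rw [support_shift] at hm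
  obtain ⟨m₀, hm₀, rfl⟩ := Finset.mem_image.mp hm
  rw [placeDeg_shiftMon, hh m₀ hm₀]

theorem multihomog_monomial_mul {ν : ℕ+ →₀ ℕ} {g : PL K Y} (t : Mon Y) (c : K)
    (hg : IsMultiHomog K ν g) :
    IsMultiHomog K (placeDeg t + ν) (MvPolynomial.monomial t c * g) := by
  classical
  intro m hm
  have := MvPolynomial.support_mul _ _ hm
  obtain ⟨a, ha, b, hb, rfl⟩ := Finset.mem_add.mp this
  have hat : a = t := by
    have := MvPolynomial.support_monomial (s := t) (a := c) ▸ ha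
    by_cases h0 : c = 0
    · rw [if_pos h0] at this; exact absurd this (Finset.notMem_empty a)
    · rw [if_neg h0] at this; exact Finset.mem_singleton.mp this
  rw [hat, placeDeg_add, hg b hb]

theorem multihomog_sub {ν : ℕ+ →₀ ℕ} {f g : PL K Y} (hf : IsMultiHomog K ν f)
    (hg : IsMultiHomog K ν g) : IsMultiHomog K ν (f - g) := by
  intro m hm
  have hm' := MvPolynomial.mem_support_iff.mp hm
  rw [MvPolynomial.coeff_sub] at hm'
  by_cases h1 : MvPolynomial.coeff m f ≠ 0
  · exact hf m (MvPolynomial.mem_support_iff.mpr h1)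
  · push_neg at h1
    rw [h1, zero_sub, neg_ne_zero] at hm'
    exact hg m (MvPolynomial.mem_support_iff.mpr hm')

theorem multihomog_smul {ν : ℕ+ →₀ ℕ} {f : PL K Y} (c : K) (hf : IsMultiHomog K ν f) :
    IsMultiHomog K ν (c • f) := by
  intro m hm
  have hm' := MvPolynomial.mem_support_iff.mp hm
  rw [MvPolynomial.coeff_smul, smul_eq_mul] at hm'
  exact hf m (MvPolynomial.mem_support_iff.mpr (right_ne_zero_of_mul hm'))

theorem coeff_mComp (μ : ℕ+ →₀ ℕ) (f : PL K Y) (m : Mon Y) :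
    MvPolynomial.coeff m (mComp K μ f) =
      if placeDeg m = μ then MvPolynomial.coeff m f else 0 := by
  classical
  rw [mComp, MvPolynomial.coeff_sum]
  rw [Finset.sum_congr rfl (fun m' _ => MvPolynomial.coeff_monomial m m' (MvPolynomial.coeff m' f))]
  rw [Finset.sum_ite_eq' (f.support.filter fun m' => placeDeg m' = μ) m
    (fun m' => MvPolynomial.coeff m' f)]
  by_cases h1 : placeDeg m = μ
  · rw [if_pos h1]
    by_cases h2 : m ∈ f.support
    · rw [if_pos (Finset.mem_filter.mpr ⟨h2, h1⟩)]
    · rw [if_neg (fun hc => h2 (Finset.mem_filter.mp hc).1)]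
      rw [MvPolynomial.notMem_support_iff] at h2
      rw [h2]
  · rw [if_neg h1]
    rw [if_neg (fun hc : m ∈ f.support.filter (fun m' => placeDeg m' = μ) =>
      h1 (Finset.mem_filter.mp hc).2)]

theorem mComp_add (μ : ℕ+ →₀ ℕ) (f g : PL K Y) :
    mComp K μ (f + g) = mComp K μ f + mComp K μ g := by
  apply MvPolynomial.ext
  intro m
  rw [MvPolynomial.coeff_add, coeff_mComp, coeff_mComp, coeff_mComp, MvPolynomial.coeff_add]
  split <;> simp

theorem mComp_zero (μ : ℕ+ →₀ ℕ) : mComp K μ (0 : PL K Y) = 0 := by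
  apply MvPolynomial.ext
  intro m
  rw [coeff_mComp]
  simp

theorem mComp_of_multihomog {μ : ℕ+ →₀ ℕ} {f : PL K Y} (hf : IsMultiHomog K μ f) :
    mComp K μ f = f := by
  apply MvPolynomial.ext
  intro m
  rw [coeff_mComp]
  by_cases h : placeDeg m = μ
  · rw [if_pos h]
  · rw [if_neg h]
    by_contra hc
    exact h (hf m (MvPolynomial.mem_support_iff.mpr (fun h0 => hc h0.symm)))

theorem mComp_of_multihomog_ne {μ ν : ℕ+ →₀ ℕ} {f : PL K Y} (hf : IsMultiHomog K ν f)
    (hne : μ ≠ ν) : mComp K μ f = 0 := by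
  apply MvPolynomial.ext
  intro m
  rw [coeff_mComp, MvPolynomial.coeff_zero]
  by_cases h : placeDeg m = μ
  · rw [if_pos h]
    by_contra hc
    exact hne (h ▸ hf m (MvPolynomial.mem_support_iff.mpr hc))
  · rw [if_neg h]

theorem multihomog_mComp (μ : ℕ+ →₀ ℕ) (f : PL K Y) : IsMultiHomog K μ (mComp K μ f) := by
  intro m hm
  have := MvPolynomial.mem_support_iff.mp hm
  rw [coeff_mComp] at this
  by_cases h : placeDeg m = μ
  · exact h
  · rw [if_neg h] at this; exact absurd rfl this

theorem supp_mComp_subset (μ : ℕ+ →₀ ℕ) (f : PL K Y) :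
    (mComp K μ f).support ⊆ f.support := by
  intro m hm
  have := MvPolynomial.mem_support_iff.mp hm
  rw [coeff_mComp] at this
  rw [MvPolynomial.mem_support_iff]
  intro h0
  apply this
  split <;> simp [h0]

theorem isLM_mComp {r : Mon Y → Mon Y → Prop} {f : PL K Y} {mf : Mon Y}
    (hlm : IsLM K r f mf) :
    IsLM K r (mComp K (placeDeg mf) f) mf := by
  constructor
  · rw [MvPolynomial.mem_support_iff, coeff_mComp, if_pos rfl]
    exact MvPolynomial.mem_support_iff.mp hlm.1
  · intro m hm hne
    exact hlm.2 m (supp_mComp_subset _ f hm) hne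

theorem mComp_multiset_sum (μ : ℕ+ →₀ ℕ) (s : Multiset (PL K Y)) :
    mComp K μ s.sum = (s.map (mComp K μ)).sum := by
  induction s using Multiset.induction_on with
  | empty => rw [Multiset.sum_zero, mComp_zero, Multiset.map_zero, Multiset.sum_zero]
  | cons a t ih => rw [Multiset.sum_cons, mComp_add, ih, Multiset.map_cons, Multiset.sum_cons]

/-! #### Support of elements of `N` -/

theorem supp_nspan_ngens {v : PL K Y} (hv : v ∈ nspan K (Ngens K Y)) :
    ∀ m ∈ v.support, ∃ j, 2 ≤ placeDeg m j := by
  classical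
  refine Submodule.span_induction ?_ ?_ ?_ ?_ hv
  · rintro g ⟨k, f, ⟨i, j, rfl⟩, rfl⟩
    intro m hm
    have hXX : (MvPolynomial.X (i, (1:ℕ+)) * MvPolynomial.X (j, (1:ℕ+)) : PL K Y) =
        MvPolynomial.monomial (Finsupp.single (i, (1:ℕ+)) 1 + Finsupp.single (j, (1:ℕ+)) 1) 1 := by
      rw [MvPolynomial.X, MvPolynomial.X, MvPolynomial.monomial_mul, one_mul]
    rw [hXX, shift_monomial] at hm
    have := MvPolynomial.support_monomial (s := shiftMon k (Finsupp.single (i, (1:ℕ+)) 1 + Finsupp.single (j, (1:ℕ+)) 1)) (a := (1:K)) ▸ hm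
    rw [if_neg (one_ne_zero)] at this
    rw [Finset.mem_singleton.mp this]
    refine ⟨pshift k 1, ?_⟩
    rw [placeDeg_shiftMon, placeDeg_add, placeDeg_single, placeDeg_single]
    have : (Finsupp.single ((i, (1:ℕ+)).2) 1 + Finsupp.single ((j, (1:ℕ+)).2) 1 : ℕ+ →₀ ℕ) =
        Finsupp.single (1 : ℕ+) 2 := by
      show (Finsupp.single (1:ℕ+) 1 + Finsupp.single (1:ℕ+) 1 : ℕ+ →₀ ℕ) = _
      rw [← Finsupp.single_add]
    rw [this, pdShift_single, Finsupp.single_eq_same]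
  · intro m hm
    exact absurd hm (by simp)
  · intro a b _ _ ha hb m hm
    have := MvPolynomial.mem_support_iff.mp hm
    rw [MvPolynomial.coeff_add] at this
    by_cases h1 : MvPolynomial.coeff m a ≠ 0
    · exact ha m (MvPolynomial.mem_support_iff.mpr h1)
    · push_neg at h1
      rw [h1, zero_add] at this
      exact hb m (MvPolynomial.mem_support_iff.mpr this)
  · intro q v _ hv m hm
    rw [smul_eq_mul] at hm
    have := MvPolynomial.support_mul _ _ hm
    obtain ⟨a, _, b, hb, rfl⟩ := Finset.mem_add.mp this
    obtain ⟨j, hj⟩ := hv b hb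
    refine ⟨j, le_trans hj ?_⟩
    rw [placeDeg_add, Finsupp.add_apply]
    omega

/-! #### Terms and representations -/

structure Trm (K : Type*) [Field K] (Y : Type*) where
  c : K
  t : Mon Y
  k : ℕ
  h : PL K Y

variable (K) in
def tev (T : Trm K Y) : PL K Y := MvPolynomial.monomial T.t T.c * shift K T.k T.h

/-- a valid term for the ideal `J` and multidegree `μ` -/
def TrmOK (J : Ideal (PL K Y)) (μ : ℕ+ →₀ ℕ) (T : Trm K Y) : Prop :=
  T.c ≠ 0 ∧ T.h ∈ J ∧ T.h ≠ 0 ∧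
    ∃ D, IsMultiHomog K (intv 0 D) T.h ∧ placeDeg T.t + pdShift T.k (intv 0 D) = μ

/-- the product leading monomial of a term -/
def tlm (r : Mon Y → Mon Y → Prop) (T : Trm K Y) : Mon Y :=
  T.t + shiftMon T.k (lmo r T.h)

theorem multihomog_tev {J : Ideal (PL K Y)} {μ : ℕ+ →₀ ℕ} {T : Trm K Y}
    (hT : TrmOK J μ T) : IsMultiHomog K μ (tev K T) := by
  obtain ⟨-, -, -, D, hD, hμ⟩ := hT
  rw [tev, ← hμ]
  exact multihomog_monomial_mul _ _ (multihomog_shift _ hD)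

theorem supp_tev {T : Trm K Y} {m : Mon Y} (hm : m ∈ (tev K T).support) :
    ∃ m₁ ∈ T.h.support, m = T.t + shiftMon T.k m₁ := by
  classical
  have := MvPolynomial.support_mul _ _ hm
  obtain ⟨a, ha, b, hb, rfl⟩ := Finset.mem_add.mp this
  have hat : a = T.t := by
    have h2 := MvPolynomial.support_monomial (s := T.t) (a := T.c) ▸ ha
    by_cases h0 : T.c = 0
    · rw [if_pos h0] at h2; exact absurd h2 (Finset.notMem_empty a)
    · rw [if_neg h0] at h2; exact Finset.mem_singleton.mp h2
  rw [support_shift] at hb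
  obtain ⟨m₁, hm₁, rfl⟩ := Finset.mem_image.mp hb
  exact ⟨m₁, hm₁, by rw [hat]⟩

theorem coeff_tev_tlm {r : Mon Y → Mon Y → Prop} (T : Trm K Y) :
    MvPolynomial.coeff (tlm r T) (tev K T) = T.c * MvPolynomial.coeff (lmo r T.h) T.h := by
  rw [tev, tlm, MvPolynomial.coeff_monomial_mul, coeff_shift]

theorem rle_tlm_of_mem_supp {r : Mon Y → Mon Y → Prop} (hr : IsMonOrd r) (hrN : IsNCompat r)
    {T : Trm K Y} (hT : T.h ≠ 0) {m : Mon Y} (hm : m ∈ (tev K T).support) :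
    rle r m (tlm r T) := by
  obtain ⟨m₁, hm₁, rfl⟩ := supp_tev hm
  rcases rle_of_mem_supp (isLM_lmo hr hT) hm₁ with h | h
  · exact Or.inl (hr.add_compat _ _ T.t (hrN T.k _ _ h))
  · exact Or.inr (by rw [h, tlm])

theorem coeff_tev_of_gt {r : Mon Y → Mon Y → Prop} (hr : IsMonOrd r) (hrN : IsNCompat r)
    {T : Trm K Y} (hT : T.h ≠ 0) {δ : Mon Y} (hδ : r (tlm r T) δ) :
    MvPolynomial.coeff δ (tev K T) = 0 := by
  by_contra hc
  have := rle_tlm_of_mem_supp hr hrN hT (MvPolynomial.mem_support_iff.mpr hc)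
  rcases this with h | rfl
  · exact rAsymm hr h hδ
  · exact hr.irrefl _ hδ

theorem coeff_multiset_sum (m : Mon Y) (s : Multiset (PL K Y)) :
    MvPolynomial.coeff m s.sum = (s.map (MvPolynomial.coeff m)).sum := by
  induction s using Multiset.induction_on with
  | empty => simp
  | cons a t ih => rw [Multiset.sum_cons, MvPolynomial.coeff_add, ih, Multiset.map_cons,
      Multiset.sum_cons]

/-- expanding a polynomial multiple of a term into a multiset of terms -/
theorem mul_tev_expand (q : PL K Y) (T : Trm K Y) :
    q * tev K T = ((q.support.val.map fun m => tev K ⟨MvPolynomial.coeff m q * T.c,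
      m + T.t, T.k, T.h⟩)).sum := by
  classical
  conv_lhs => rw [MvPolynomial.as_sum q]
  rw [Finset.sum_mul]
  rw [Finset.sum]
  refine congrArg Multiset.sum (Multiset.map_congr rfl ?_)
  intro m _
  show MvPolynomial.monomial m (MvPolynomial.coeff m q) * tev K T = _
  rw [tev, tev, ← mul_assoc, MvPolynomial.monomial_mul]

theorem exists_rep_of_mem_nspan {S : Set (PL K Y)} {u : PL K Y} (hu : u ∈ nspan K S) :
    ∃ s : Multiset (Trm K Y), (∀ T ∈ s, T.c ≠ 0 ∧ T.h ∈ S ∧ T.h ≠ 0) ∧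
      u = ((s.map (tev K)).sum) := by
  classical
  refine Submodule.span_induction ?_ ?_ ?_ ?_ hu
  · rintro g ⟨k, f, hf, rfl⟩
    by_cases h0 : f = 0
    · exact ⟨0, by simp, by rw [h0, map_zero]; simp⟩
    · refine ⟨{⟨1, 0, k, f⟩}, ?_, ?_⟩
      · intro T hT
        rw [Multiset.mem_singleton.mp hT]
        exact ⟨one_ne_zero, hf, h0⟩
      · rw [Multiset.map_singleton, Multiset.sum_singleton, tev]
        show _ = MvPolynomial.monomial 0 (1:K) * _
        rw [MvPolynomial.monomial_zero', map_one, one_mul]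
  · exact ⟨0, by simp, by simp⟩
  · rintro a b _ _ ⟨s₁, hs₁, rfl⟩ ⟨s₂, hs₂, rfl⟩
    refine ⟨s₁ + s₂, ?_, by rw [Multiset.map_add, Multiset.sum_add]⟩
    intro T hT
    rcases Multiset.mem_add.mp hT with h | h
    · exact hs₁ T h
    · exact hs₂ T h
  · rintro q v _ ⟨s, hs, rfl⟩
    rw [smul_eq_mul]
    refine ⟨s.bind (fun T => q.support.val.map fun m =>
      ⟨MvPolynomial.coeff m q * T.c, m + T.t, T.k, T.h⟩), ?_, ?_⟩
    · intro T hT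
      obtain ⟨T₀, hT₀, hT'⟩ := Multiset.mem_bind.mp hT
      obtain ⟨m, hm, rfl⟩ := Multiset.mem_map.mp hT'
      have hm' : MvPolynomial.coeff m q ≠ 0 := by
        have : m ∈ q.support := hm
        exact MvPolynomial.mem_support_iff.mp this
      exact ⟨mul_ne_zero hm' (hs T₀ hT₀).1, (hs T₀ hT₀).2.1, (hs T₀ hT₀).2.2⟩
    · rw [Multiset.map_bind, Multiset.sum_bind]
      rw [← Multiset.sum_map_mul_left]
      exact congrArg Multiset.sum (Multiset.map_congr rfl (fun T _ => by
        rw [mul_tev_expand, Multiset.map_map]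
        rfl))


/-! #### More shift/place helpers -/

theorem shiftVar_snd (k : ℕ) (z : Y × ℕ+) : ((shiftVar k z).2 : ℕ) = (z.2 : ℕ) + k := rfl

theorem exists_shiftVar_preimage {k : ℕ} {x : Y × ℕ+} (hx : k < (x.2 : ℕ)) :
    ∃ z : Y × ℕ+, x = shiftVar k z := by
  refine ⟨(x.1, ⟨(x.2 : ℕ) - k, by omega⟩), ?_⟩
  refine Prod.ext rfl (PNat.coe_injective ?_)
  show ((x.2 : ℕ)) = ((x.2 : ℕ) - k) + k
  omega

theorem shiftMon_apply_low {k : ℕ} (m : Mon Y) {x : Y × ℕ+} (hx : (x.2 : ℕ) ≤ k) :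
    shiftMon k m x = 0 := by
  refine Finsupp.mapDomain_notin_range _ _ ?_
  rintro ⟨z, hz⟩
  have h1 : ((shiftVar k z).2 : ℕ) = (z.2 : ℕ) + k := rfl
  rw [hz] at h1
  have hz2 : 0 < (z.2 : ℕ) := z.2.2
  omega

theorem shiftMon_apply_shift (k : ℕ) (m : Mon Y) (z : Y × ℕ+) :
    shiftMon k m (shiftVar k z) = m z :=
  Finsupp.mapDomain_apply shiftVar_injective m z

theorem shiftMon_sub (k : ℕ) (a b : Mon Y) :
    shiftMon k (a - b) = shiftMon k a - shiftMon k b := by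
  ext x
  rw [Finsupp.tsub_apply]
  by_cases hx : k < (x.2 : ℕ)
  · obtain ⟨z, rfl⟩ := exists_shiftVar_preimage hx
    rw [shiftMon_apply_shift, shiftMon_apply_shift, shiftMon_apply_shift, Finsupp.tsub_apply]
  · rw [shiftMon_apply_low _ (by omega), shiftMon_apply_low _ (by omega),
      shiftMon_apply_low _ (by omega)]

theorem exists_place_of_placeDeg_pos {m : Mon Y} {j : ℕ+} (h : 1 ≤ placeDeg m j) :
    ∃ z ∈ m.support, z.2 = j := by
  by_contra hno
  push_neg at hno
  rw [placeDeg_apply, Finset.sum_eq_zero (fun x hx => if_neg (hno x hx))] at h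
  omega

theorem shiftMon_window {m₁ : Mon Y} {d : ℕ} (hpd : placeDeg m₁ = intv 0 d) (k : ℕ)
    {x : Y × ℕ+} (hx : (x.2 : ℕ) ≤ k ∨ k + d < (x.2 : ℕ)) : shiftMon k m₁ x = 0 := by
  rcases hx with hx | hx
  · exact shiftMon_apply_low _ hx
  · by_cases hk : k < (x.2 : ℕ)
    · obtain ⟨z, rfl⟩ := exists_shiftVar_preimage hk
      rw [shiftMon_apply_shift]
      have h1 := apply_le_placeDeg m₁ z
      rw [hpd, intv_apply] at h1
      have := shiftVar_snd k z
      rw [if_neg (by omega)] at h1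
      omega
    · exact shiftMon_apply_low _ (by omega)

theorem apply_le_one_of_intv {m₁ : Mon Y} {n d : ℕ} (hpd : placeDeg m₁ = intv n d)
    (x : Y × ℕ+) : m₁ x ≤ 1 := by
  calc m₁ x ≤ placeDeg m₁ x.2 := apply_le_placeDeg m₁ x
  _ ≤ 1 := by rw [hpd]; exact intv_le_one _ _ _

theorem placeDeg_apply_congr {a b : Mon Y} {j : ℕ+}
    (h : ∀ x : Y × ℕ+, x.2 = j → a x = b x) : placeDeg a j = placeDeg b j := by
  classical
  rw [placeDeg_apply, placeDeg_apply]
  have ha : ∑ x ∈ a.support, (if x.2 = j then a x else 0)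
      = ∑ x ∈ a.support ∪ b.support, (if x.2 = j then a x else 0) :=
    Finset.sum_subset Finset.subset_union_left (fun x _ hx => by
      rw [Finsupp.notMem_support_iff.mp hx]
      exact ite_self 0)
  have hb : ∑ x ∈ b.support, (if x.2 = j then b x else 0)
      = ∑ x ∈ a.support ∪ b.support, (if x.2 = j then b x else 0) :=
    Finset.sum_subset Finset.subset_union_right (fun x _ hx => by
      rw [Finsupp.notMem_support_iff.mp hx]
      exact ite_self 0)
  rw [ha, hb]
  refine Finset.sum_congr rfl (fun x _ => ?_)
  by_cases hx2 : x.2 = j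
  · rw [if_pos hx2, if_pos hx2, h x hx2]
  · rw [if_neg hx2, if_neg hx2]

theorem supp_monomial_eq {a m : Mon Y} {c : K} (ha : a ∈ (MvPolynomial.monomial m c).support) :
    a = m := by
  have hc : MvPolynomial.coeff a (MvPolynomial.monomial m c) ≠ 0 :=
    MvPolynomial.mem_support_iff.mp ha
  rw [MvPolynomial.coeff_monomial] at hc
  by_cases he : m = a
  · exact he.symm
  · rw [if_neg he] at hc; exact absurd rfl hc

private theorem ringKey {R : Type*} [CommRing R] (Mm MA MB S S' cc cc' cα cβ ce ce' : R)
    (h1 : cα * ce' = cc) (h2 : cβ * ce = cc') (h3 : cα + cβ = 0) :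
    cc * (Mm * MB) * S + cc' * (Mm * MA) * S' =
      (-cα) * (Mm * (S' - ce' * MB) * S) + (-cβ) * (Mm * (S - ce * MA) * S') := by
  linear_combination (-(Mm * MB * S)) * h1 + (-(Mm * MA * S')) * h2 + (Mm * S * S') * h3

private theorem ringKeyB {R : Type*} [CommRing R] (Mg Mv Mu S S' cc cc' cγ ce ce' : R)
    (h1 : cγ * ce' = cc) (h2 : cγ * ce = -cc') :
    cc * (Mg * Mv) * S + cc' * (Mg * Mu) * S' =
      cγ * Mg * (ce' * (Mv * S) - ce * (Mu * S')) := by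
  linear_combination (-(Mg * Mv * S)) * h1 + (Mg * Mu * S') * h2

/-- expand `c₀ • (monomial m 1 * q * shift k h)` into a multiset of valid small terms -/
theorem expand_lemma {r : Mon Y → Mon Y → Prop} {J : Ideal (PL K Y)} {μ : ℕ+ →₀ ℕ}
    {δ : Mon Y} (c₀ : K) (hc₀ : c₀ ≠ 0) (m : Mon Y) (q : PL K Y) (k : ℕ) (h : PL K Y)
    (hhJ : h ∈ J) (hh0 : h ≠ 0) (D : ℕ) (hD : IsMultiHomog K (intv 0 D) h)
    (hq : ∀ m₂ ∈ q.support, (placeDeg (m + m₂) + pdShift k (intv 0 D) = μ) ∧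
      r (m + m₂ + shiftMon k (lmo r h)) δ) :
    ∃ l : Multiset (Trm K Y), (∀ S ∈ l, TrmOK J μ S ∧ r (tlm r S) δ) ∧
      c₀ • (MvPolynomial.monomial m 1 * q * shift K k h) = (l.map (tev K)).sum := by
  classical
  set q' : PL K Y := c₀ • (MvPolynomial.monomial m 1 * q) with hq'
  have hsupq' : ∀ m'' ∈ q'.support, ∃ m₂ ∈ q.support, m'' = m + m₂ := by
    intro m'' hm''
    have h1 : m'' ∈ (MvPolynomial.monomial m (1:K) * q).support :=
      Finsupp.support_smul hm''
    have h2 := MvPolynomial.support_mul _ _ h1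
    obtain ⟨a, ha, b, hb, rfl⟩ := Finset.mem_add.mp h2
    exact ⟨b, hb, by rw [supp_monomial_eq ha]⟩
  refine ⟨q'.support.val.map (fun m'' => ⟨MvPolynomial.coeff m'' q' * 1, m'' + 0, k, h⟩),
    ?_, ?_⟩
  · intro S hS
    obtain ⟨m'', hm'', rfl⟩ := Multiset.mem_map.mp hS
    have hm''s : m'' ∈ q'.support := hm''
    obtain ⟨m₂, hm₂, rfl⟩ := hsupq' m'' hm''s
    have hco : MvPolynomial.coeff (m + m₂) q' ≠ 0 := MvPolynomial.mem_support_iff.mp hm''s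
    constructor
    · refine ⟨by rwa [mul_one], hhJ, hh0, D, hD, ?_⟩
      show placeDeg (m + m₂ + 0) + pdShift k (intv 0 D) = μ
      rw [add_zero]
      exact (hq m₂ hm₂).1
    · show r ((m + m₂ + 0) + shiftMon k (lmo r h)) δ
      rw [add_zero]
      exact (hq m₂ hm₂).2
  · have hT₀ : shift K k h = tev K ⟨1, 0, k, h⟩ := by
      rw [tev]
      show _ = MvPolynomial.monomial 0 (1:K) * _
      rw [MvPolynomial.monomial_zero', map_one, one_mul]
    calc c₀ • (MvPolynomial.monomial m 1 * q * shift K k h)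
        = q' * tev K ⟨1, 0, k, h⟩ := by rw [← hT₀, hq', smul_mul_assoc]
    _ = _ := by
      rw [mul_tev_expand, Multiset.map_map]
      rfl


theorem rle_add_compat {r : Mon Y → Mon Y → Prop} (hr : IsMonOrd r) {a b : Mon Y} (u : Mon Y)
    (h : rle r a b) : rle r (u + a) (u + b) := by
  rcases h with h | rfl
  · exact Or.inl (hr.add_compat _ _ u h)
  · exact Or.inr rfl

set_option maxHeartbeats 1000000 in
/-- The key pair-rewriting lemma: two terms with equal leading product monomial `δ` whose
leading coefficients cancel can be rewritten with strictly smaller products. -/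
theorem pair_core {r : Mon Y → Mon Y → Prop} (hr : IsMonOrd r) (hrN : IsNCompat r)
    {J : Ideal (PL K Y)} (hJN : IsNIdeal K J) {μ : ℕ+ →₀ ℕ} (hsf : ∀ j, μ j ≤ 1)
    {δ : Mon Y} {T T' : Trm K Y} (hT : TrmOK J μ T) (hT' : TrmOK J μ T')
    (hk : T.k ≤ T'.k) (hd : tlm r T = δ) (hd' : tlm r T' = δ)
    (hcan : T.c * MvPolynomial.coeff (lmo r T.h) T.h
          + T'.c * MvPolynomial.coeff (lmo r T'.h) T'.h = 0) :
    ∃ l : Multiset (Trm K Y), (∀ S ∈ l, TrmOK J μ S ∧ r (tlm r S) δ) ∧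
      tev K T + tev K T' = (l.map (tev K)).sum := by
  classical
  obtain ⟨hc, hhJ, hh0, d, hD, hμ⟩ := hT
  obtain ⟨hc', hhJ', hh0', d', hD', hμ'⟩ := hT'
  have hlm : IsLM K r T.h (lmo r T.h) := isLM_lmo hr hh0
  have hlm' : IsLM K r T'.h (lmo r T'.h) := isLM_lmo hr hh0'
  have hpdA : placeDeg (lmo r T.h) = intv 0 d := hD _ hlm.1
  have hpdB : placeDeg (lmo r T'.h) = intv 0 d' := hD' _ hlm'.1
  have he : MvPolynomial.coeff (lmo r T.h) T.h ≠ 0 := MvPolynomial.mem_support_iff.mp hlm.1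
  have he' : MvPolynomial.coeff (lmo r T'.h) T'.h ≠ 0 := MvPolynomial.mem_support_iff.mp hlm'.1
  have hδT : T.t + shiftMon T.k (lmo r T.h) = δ := hd
  have hδT' : T'.t + shiftMon T'.k (lmo r T'.h) = δ := hd'
  have hpdδ : placeDeg δ = μ := by
    rw [← hδT, placeDeg_add, placeDeg_shiftMon, hpdA]
    exact hμ
  set e := MvPolynomial.coeff (lmo r T.h) T.h with hedef
  set e' := MvPolynomial.coeff (lmo r T'.h) T'.h with he'def
  set α := T.c * e'⁻¹ with hα
  have hαe' : α * e' = T.c := by rw [hα]; field_simp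
  have hCαe' : MvPolynomial.C α * MvPolynomial.C e' = (MvPolynomial.C T.c : PL K Y) := by
    rw [← map_mul, hαe']
  have hα0 : α ≠ 0 := mul_ne_zero hc (inv_ne_zero he')
  by_cases hcase : T.k + d ≤ T'.k
  · -- Case A: disjoint windows
    set β := T'.c * e⁻¹ with hβ
    have hβe : β * e = T'.c := by rw [hβ]; field_simp
    have hβ0 : β ≠ 0 := mul_ne_zero hc' (inv_ne_zero he)
    have hαβ : α + β = 0 := by
      rw [hα, hβ]
      field_simp
      linear_combination hcan
    have hCβe : MvPolynomial.C β * MvPolynomial.C e = (MvPolynomial.C T'.c : PL K Y) := by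
      rw [← map_mul, hβe]
    have hCαβ : MvPolynomial.C α + MvPolynomial.C β = (0 : PL K Y) := by
      rw [← map_add, hαβ, map_zero]
    have hBt : shiftMon T'.k (lmo r T'.h) ≤ T.t := by
      rw [Finsupp.le_def]
      intro x
      by_cases hx : (x.2 : ℕ) ≤ T'.k
      · rw [shiftMon_window hpdB T'.k (Or.inl hx)]
        exact Nat.zero_le _
      · have hAx : shiftMon T.k (lmo r T.h) x = 0 :=
          shiftMon_window hpdA T.k (Or.inr (by omega))
        have h1 : T.t x + shiftMon T.k (lmo r T.h) x
            = T'.t x + shiftMon T'.k (lmo r T'.h) x := by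
          have := congrArg (fun f : Mon Y => f x) (hδT.trans hδT'.symm)
          simpa using this
        omega
    obtain ⟨m, hm⟩ := le_iff_exists_add.mp hBt
    have hmt' : T'.t = shiftMon T.k (lmo r T.h) + m := by
      have h2 : shiftMon T'.k (lmo r T'.h) + (shiftMon T.k (lmo r T.h) + m)
          = shiftMon T'.k (lmo r T'.h) + T'.t := by
        have e1 : shiftMon T'.k (lmo r T'.h) + (shiftMon T.k (lmo r T.h) + m)
            = T.t + shiftMon T.k (lmo r T.h) := by
          rw [hm]; abel
        rw [e1, hδT, ← hδT']
        abel
      exact (add_left_cancel h2).symm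
    have hMt : (MvPolynomial.monomial m (1:K)) * MvPolynomial.monomial
        (shiftMon T'.k (lmo r T'.h)) 1 = MvPolynomial.monomial T.t 1 := by
      rw [MvPolynomial.monomial_mul, one_mul, hm, add_comm]
    have hMt' : (MvPolynomial.monomial m (1:K)) * MvPolynomial.monomial
        (shiftMon T.k (lmo r T.h)) 1 = MvPolynomial.monomial T'.t 1 := by
      rw [MvPolynomial.monomial_mul, one_mul, hmt', add_comm]
    have hkey : tev K T + tev K T' =
        (-α) • (MvPolynomial.monomial m 1 *
          (shift K T'.k T'.h - MvPolynomial.monomial (shiftMon T'.k (lmo r T'.h)) e')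
            * shift K T.k T.h)
      + (-β) • (MvPolynomial.monomial m 1 *
          (shift K T.k T.h - MvPolynomial.monomial (shiftMon T.k (lmo r T.h)) e)
            * shift K T'.k T'.h) := by
      rw [tev, tev]
      rw [show MvPolynomial.monomial T.t T.c = MvPolynomial.C T.c * MvPolynomial.monomial T.t 1 from by
        rw [MvPolynomial.C_mul_monomial, mul_one]]
      rw [show MvPolynomial.monomial T'.t T'.c = MvPolynomial.C T'.c * MvPolynomial.monomial T'.t 1 from by
        rw [MvPolynomial.C_mul_monomial, mul_one]]
      rw [← hMt, ← hMt']
      rw [MvPolynomial.smul_eq_C_mul, MvPolynomial.smul_eq_C_mul, map_neg, map_neg]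
      rw [show MvPolynomial.monomial (shiftMon T'.k (lmo r T'.h)) e'
          = MvPolynomial.C e' * MvPolynomial.monomial (shiftMon T'.k (lmo r T'.h)) 1 from by
        rw [MvPolynomial.C_mul_monomial, mul_one]]
      rw [show MvPolynomial.monomial (shiftMon T.k (lmo r T.h)) e
          = MvPolynomial.C e * MvPolynomial.monomial (shiftMon T.k (lmo r T.h)) 1 from by
        rw [MvPolynomial.C_mul_monomial, mul_one]]
      exact ringKey _ _ _ _ _ _ _ _ _ _ _ hCαe' hCβe hCαβ
    have hsuppR' : ∀ m₂ ∈ (shift K T'.k T'.h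
        - MvPolynomial.monomial (shiftMon T'.k (lmo r T'.h)) e').support,
        m₂ ∈ (shift K T'.k T'.h).support ∧ r m₂ (shiftMon T'.k (lmo r T'.h)) := by
      intro m₂ hm₂
      have hco := MvPolynomial.mem_support_iff.mp hm₂
      rw [MvPolynomial.coeff_sub, MvPolynomial.coeff_monomial] at hco
      by_cases hB : shiftMon T'.k (lmo r T'.h) = m₂
      · rw [if_pos hB, ← hB, coeff_shift] at hco
        exact absurd (sub_self _) hco
      · rw [if_neg hB, sub_zero] at hco
        have hmem : m₂ ∈ (shift K T'.k T'.h).support := MvPolynomial.mem_support_iff.mpr hco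
        exact ⟨hmem, (isLM_shift hrN T'.k hlm').2 m₂ hmem (fun hh => hB hh.symm)⟩
    have hsuppR : ∀ m₂ ∈ (shift K T.k T.h
        - MvPolynomial.monomial (shiftMon T.k (lmo r T.h)) e).support,
        m₂ ∈ (shift K T.k T.h).support ∧ r m₂ (shiftMon T.k (lmo r T.h)) := by
      intro m₂ hm₂
      have hco := MvPolynomial.mem_support_iff.mp hm₂
      rw [MvPolynomial.coeff_sub, MvPolynomial.coeff_monomial] at hco
      by_cases hB : shiftMon T.k (lmo r T.h) = m₂
      · rw [if_pos hB, ← hB, coeff_shift] at hco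
        exact absurd (sub_self _) hco
      · rw [if_neg hB, sub_zero] at hco
        have hmem : m₂ ∈ (shift K T.k T.h).support := MvPolynomial.mem_support_iff.mpr hco
        exact ⟨hmem, (isLM_shift hrN T.k hlm).2 m₂ hmem (fun hh => hB hh.symm)⟩
    obtain ⟨l₁, hl₁, hsum₁⟩ := expand_lemma (r := r) (J := J) (μ := μ) (δ := δ) (-α)
      (neg_ne_zero.mpr hα0) m _ T.k T.h hhJ hh0 d hD (fun m₂ hm₂ => by
        obtain ⟨hmem, hrm₂⟩ := hsuppR' m₂ hm₂
        have hpdm₂ : placeDeg m₂ = pdShift T'.k (intv 0 d') := (multihomog_shift T'.k hD') m₂ hmem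
        have hpdB2 : placeDeg (shiftMon T'.k (lmo r T'.h)) = pdShift T'.k (intv 0 d') := by
          rw [placeDeg_shiftMon, hpdB]
        constructor
        · have h3 : placeDeg (m + m₂) + pdShift T.k (intv 0 d)
              = placeDeg T.t + pdShift T.k (intv 0 d) := by
            rw [hm, placeDeg_add, placeDeg_add, hpdm₂, hpdB2]
            abel
          rw [h3]
          exact hμ
        · have h4 := hr.add_compat m₂ (shiftMon T'.k (lmo r T'.h))
            (m + shiftMon T.k (lmo r T.h)) hrm₂
          have e2 : m + shiftMon T.k (lmo r T.h) + m₂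
              = m + m₂ + shiftMon T.k (lmo r T.h) := by abel
          have e3 : m + shiftMon T.k (lmo r T.h) + shiftMon T'.k (lmo r T'.h) = δ := by
            rw [← hδT', hmt']
            abel
          rw [e2, e3] at h4
          exact h4)
    obtain ⟨l₂, hl₂, hsum₂⟩ := expand_lemma (r := r) (J := J) (μ := μ) (δ := δ) (-β)
      (neg_ne_zero.mpr hβ0) m _ T'.k T'.h hhJ' hh0' d' hD' (fun m₂ hm₂ => by
        obtain ⟨hmem, hrm₂⟩ := hsuppR m₂ hm₂
        have hpdm₂ : placeDeg m₂ = pdShift T.k (intv 0 d) := (multihomog_shift T.k hD) m₂ hmem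
        have hpdA2 : placeDeg (shiftMon T.k (lmo r T.h)) = pdShift T.k (intv 0 d) := by
          rw [placeDeg_shiftMon, hpdA]
        constructor
        · have h3 : placeDeg (m + m₂) + pdShift T'.k (intv 0 d')
              = placeDeg T'.t + pdShift T'.k (intv 0 d') := by
            rw [hmt', placeDeg_add, placeDeg_add, hpdm₂, hpdA2]
            abel
          rw [h3]
          exact hμ'
        · have h4 := hr.add_compat m₂ (shiftMon T.k (lmo r T.h))
            (m + shiftMon T'.k (lmo r T'.h)) hrm₂
          have e2 : m + shiftMon T'.k (lmo r T'.h) + m₂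
              = m + m₂ + shiftMon T'.k (lmo r T'.h) := by abel
          have e3 : m + shiftMon T'.k (lmo r T'.h) + shiftMon T.k (lmo r T.h) = δ := by
            rw [← hδT, hm]
            abel
          rw [e2, e3] at h4
          exact h4)
    refine ⟨l₁ + l₂, ?_, ?_⟩
    · intro S hS
      rcases Multiset.mem_add.mp hS with h | h
      · exact hl₁ S h
      · exact hl₂ S h
    · rw [Multiset.map_add, Multiset.sum_add, ← hsum₁, ← hsum₂]
      exact hkey
  · -- Case B: overlapping windows
    push_neg at hcase
    set kk := T'.k - T.k with hkkdef
    have hkk : kk + T.k = T'.k := by omega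
    set A₀ := lmo r T.h with hA₀
    set B₀ := shiftMon kk (lmo r T'.h) with hB₀def
    have hB₀ : shiftMon T.k B₀ = shiftMon T'.k (lmo r T'.h) := by
      rw [hB₀def, shiftMon_shiftMon, hkk]
    have hpdB₀ : placeDeg B₀ = intv kk d' := by
      rw [hB₀def, placeDeg_shiftMon, hpdB, pdShift_intv, zero_add]
    set v₀ := B₀ - A₀ with hv₀def
    set u₀ := A₀ - B₀ with hu₀def
    set w₀ := A₀ + v₀ with hw₀def
    have hv₀x : ∀ x : Y × ℕ+, v₀ x = B₀ x - A₀ x := fun x => Finsupp.tsub_apply _ _ _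
    have hu₀x : ∀ x : Y × ℕ+, u₀ x = A₀ x - B₀ x := fun x => Finsupp.tsub_apply _ _ _
    have hw₀ : w₀ = B₀ + u₀ := by
      ext x
      rw [hw₀def, Finsupp.add_apply, Finsupp.add_apply, hv₀x, hu₀x]
      omega
    have hAδ : shiftMon T.k A₀ ≤ δ := by
      rw [← hδT]
      exact le_add_self
    have hBδ : shiftMon T.k B₀ ≤ δ := by
      rw [← hδT', hB₀]
      exact le_add_self
    have hδ1 : ∀ x, δ x ≤ 1 := fun x =>
      le_trans (apply_le_placeDeg δ x) (by rw [hpdδ]; exact hsf x.2)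
    have hA₀le : ∀ x : Y × ℕ+, (x.2 : ℕ) ≤ d → B₀ x ≤ A₀ x := by
      intro x hxd
      by_cases hB0 : B₀ x = 0
      · rw [hB0]; exact Nat.zero_le _
      have hB1 : 1 ≤ B₀ x := Nat.one_le_iff_ne_zero.mpr hB0
      have hx1 : 0 < (x.2 : ℕ) := x.2.2
      have hpdA₀x : placeDeg A₀ x.2 = 1 := by
        rw [hpdA, intv_apply, if_pos (by omega)]
      obtain ⟨z, hz, hz2⟩ := exists_place_of_placeDeg_pos (m := A₀) (j := x.2)
        (le_of_eq hpdA₀x.symm)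
      have hδz : 1 ≤ δ (shiftVar T.k z) := by
        refine le_trans ?_ (hAδ (shiftVar T.k z))
        rw [shiftMon_apply_shift]
        exact Nat.one_le_iff_ne_zero.mpr (Finsupp.mem_support_iff.mp hz)
      have hδx : 1 ≤ δ (shiftVar T.k x) := by
        refine le_trans ?_ (hBδ (shiftVar T.k x))
        rw [shiftMon_apply_shift]
        omega
      by_cases hzx : z = x
      · have hB₀le1 : B₀ x ≤ 1 := apply_le_one_of_intv hpdB₀ x
        have : 1 ≤ A₀ x := by
          rw [← hzx]
          exact Nat.one_le_iff_ne_zero.mpr (Finsupp.mem_support_iff.mp hz)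
        omega
      · exfalso
        have hne : shiftVar T.k z ≠ shiftVar T.k x := fun hcon => hzx (shiftVar_injective hcon)
        have hsame : (shiftVar T.k z).2 = (shiftVar T.k x).2 := by
          refine PNat.coe_injective ?_
          rw [shiftVar_snd, shiftVar_snd, hz2]
        have h2le := two_apply_le_placeDeg (m := δ) hne hsame
        have := hpdδ ▸ hsf ((shiftVar T.k z).2)
        have hh := hsf ((shiftVar T.k z).2)
        rw [← hpdδ] at hh
        omega
    have hA₀0 : ∀ x : Y × ℕ+, d < (x.2 : ℕ) → A₀ x = 0 := by
      intro x hx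
      have h1 := apply_le_placeDeg A₀ x
      rw [hpdA, intv_apply, if_neg (by omega)] at h1
      omega
    set D := max d (kk + d') with hDdef
    have hpdw₀ : placeDeg w₀ = intv 0 D := by
      ext j
      rw [hw₀def, placeDeg_add, Finsupp.add_apply]
      rw [hpdA]
      have hj1 : 0 < (j : ℕ) := j.2
      rcases max_choice d (kk + d') with hDc | hDc
      all_goals {
        by_cases hjd : (j : ℕ) ≤ d
        · have hpdv₀ : placeDeg v₀ j = 0 := by
            rw [placeDeg_apply]
            refine Finset.sum_eq_zero (fun x hx => ?_)
            by_cases hx2 : x.2 = j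
            · rw [if_pos hx2, hv₀x]
              have := hA₀le x (by rw [hx2]; omega)
              omega
            · rw [if_neg hx2]
          rw [hpdv₀, intv_apply, intv_apply]
          rw [← hDdef] at hDc
          split_ifs <;> omega
        · have hpdv₀ : placeDeg v₀ j = placeDeg B₀ j := by
            refine placeDeg_apply_congr (fun x hx2 => ?_)
            rw [hv₀x, hA₀0 x (by rw [hx2]; omega)]
            omega
          rw [hpdv₀, hpdB₀, intv_apply, intv_apply, intv_apply]
          rw [← hDdef] at hDc
          have hkkd : kk < d := by omega
          split_ifs <;> omega }
    set q₀ : PL K Y := e' • (MvPolynomial.monomial v₀ 1 * T.h)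
      - e • (MvPolynomial.monomial u₀ 1 * shift K kk T'.h) with hq₀def
    have hγ2 : α * e = -T'.c := by
      rw [hα]
      field_simp
      linear_combination hcan
    set w := shiftMon T.k w₀ with hwdef
    have hwle : w ≤ δ := by
      rw [Finsupp.le_def]
      intro x
      by_cases hx : T.k < (x.2 : ℕ)
      · obtain ⟨z, rfl⟩ := exists_shiftVar_preimage hx
        rw [hwdef, shiftMon_apply_shift]
        have h5 : A₀ z ≤ δ (shiftVar T.k z) := by
          refine le_trans ?_ (hAδ _)
          rw [shiftMon_apply_shift]
        have h6 : B₀ z ≤ δ (shiftVar T.k z) := by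
          refine le_trans ?_ (hBδ _)
          rw [shiftMon_apply_shift]
        rw [hw₀def, Finsupp.add_apply, hv₀x]
        omega
      · rw [hwdef, shiftMon_apply_low _ (by omega)]
        exact Nat.zero_le _
    obtain ⟨g, hg⟩ := le_iff_exists_add.mp hwle
    have hgw : g + w = δ := by rw [hg, add_comm]
    have hTt : T.t = g + shiftMon T.k v₀ := by
      ext x
      have h7 := congrArg (fun f : Mon Y => f x) hδT
      have h8 := congrArg (fun f : Mon Y => f x) hg
      have h9 : w x = shiftMon T.k A₀ x + shiftMon T.k v₀ x := by
        rw [hwdef, hw₀def, shiftMon_add, Finsupp.add_apply]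
      simp only [Finsupp.add_apply] at h7 h8 ⊢
      omega
    have hTt' : T'.t = g + shiftMon T.k u₀ := by
      ext x
      have h7 := congrArg (fun f : Mon Y => f x) hδT'
      have h8 := congrArg (fun f : Mon Y => f x) hg
      have h9 : w x = shiftMon T.k B₀ x + shiftMon T.k u₀ x := by
        rw [hwdef, hw₀, shiftMon_add, Finsupp.add_apply]
      rw [← hB₀] at h7
      simp only [Finsupp.add_apply] at h7 h8 ⊢
      omega
    have hq₀shift : shift K T.k q₀ =
        e' • (MvPolynomial.monomial (shiftMon T.k v₀) 1 * shift K T.k T.h)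
      - e • (MvPolynomial.monomial (shiftMon T.k u₀) 1 * shift K T'.k T'.h) := by
      rw [hq₀def, map_sub, map_smul, map_smul, map_mul, map_mul, shift_monomial,
        shift_monomial, shift_shift, hkk]
    have hkey : tev K T + tev K T' = MvPolynomial.monomial g α * shift K T.k q₀ := by
      rw [hq₀shift, tev, tev]
      rw [show MvPolynomial.monomial T.t T.c = MvPolynomial.C T.c * MvPolynomial.monomial T.t 1 from by
        rw [MvPolynomial.C_mul_monomial, mul_one]]
      rw [show MvPolynomial.monomial T'.t T'.c = MvPolynomial.C T'.c * MvPolynomial.monomial T'.t 1 from by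
        rw [MvPolynomial.C_mul_monomial, mul_one]]
      rw [show MvPolynomial.monomial g α = MvPolynomial.C α * MvPolynomial.monomial g 1 from by
        rw [MvPolynomial.C_mul_monomial, mul_one]]
      rw [show (MvPolynomial.monomial T.t (1:K)) = MvPolynomial.monomial g 1 * MvPolynomial.monomial (shiftMon T.k v₀) 1 from by
        rw [MvPolynomial.monomial_mul, one_mul, hTt]]
      rw [show (MvPolynomial.monomial T'.t (1:K)) = MvPolynomial.monomial g 1 * MvPolynomial.monomial (shiftMon T.k u₀) 1 from by
        rw [MvPolynomial.monomial_mul, one_mul, hTt']]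
      rw [MvPolynomial.smul_eq_C_mul, MvPolynomial.smul_eq_C_mul]
      exact ringKeyB _ _ _ _ _ _ _ _ _ _ hCαe'
        (by rw [← map_mul, hγ2, map_neg])
    by_cases hq₀0 : q₀ = 0
    · refine ⟨0, by simp, ?_⟩
      rw [hkey, hq₀0, map_zero, mul_zero]
      simp
    · have hq₀J : q₀ ∈ J := by
        rw [hq₀def, MvPolynomial.smul_eq_C_mul, MvPolynomial.smul_eq_C_mul]
        exact Submodule.sub_mem _
          (Ideal.mul_mem_left _ _ (Ideal.mul_mem_left _ _ hhJ))
          (Ideal.mul_mem_left _ _ (Ideal.mul_mem_left _ _ (hJN kk _ hhJ')))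
      have hw₀v : w₀ = v₀ + A₀ := by rw [hw₀def, add_comm]
      have hw₀u : w₀ = u₀ + B₀ := by rw [hw₀, add_comm]
      -- coefficient of w₀ in q₀ is zero
      have hco1 : MvPolynomial.coeff w₀ (MvPolynomial.monomial v₀ (1:K) * T.h)
          = MvPolynomial.coeff A₀ T.h := by
        rw [hw₀v, MvPolynomial.coeff_monomial_mul, one_mul]
      have hco2 : MvPolynomial.coeff w₀ (MvPolynomial.monomial u₀ (1:K) * shift K kk T'.h)
          = MvPolynomial.coeff (lmo r T'.h) T'.h := by
        rw [hw₀u, MvPolynomial.coeff_monomial_mul, one_mul, hB₀def, coeff_shift]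
      have hcw₀ : MvPolynomial.coeff w₀ q₀ = 0 := by
        rw [hq₀def, MvPolynomial.coeff_sub, MvPolynomial.coeff_smul, MvPolynomial.coeff_smul,
          hco1, hco2, smul_eq_mul, smul_eq_mul, ← hedef, ← he'def]
        ring
      have hsuppq₀ : ∀ mq ∈ q₀.support, rle r mq w₀ := by
        intro mq hmq
        have hco := MvPolynomial.mem_support_iff.mp hmq
        rw [hq₀def, MvPolynomial.coeff_sub, MvPolynomial.coeff_smul, MvPolynomial.coeff_smul] at hco
        have : MvPolynomial.coeff mq (MvPolynomial.monomial v₀ 1 * T.h) ≠ 0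
            ∨ MvPolynomial.coeff mq (MvPolynomial.monomial u₀ 1 * shift K kk T'.h) ≠ 0 := by
          by_contra hcon
          push_neg at hcon
          rw [hcon.1, hcon.2] at hco
          simp at hco
        rcases this with hco1 | hco2
        · have hms := MvPolynomial.mem_support_iff.mpr hco1
          obtain ⟨a, ha, b, hb, rfl⟩ := Finset.mem_add.mp (MvPolynomial.support_mul _ _ hms)
          rw [supp_monomial_eq ha, hw₀v]
          exact rle_add_compat hr v₀ (rle_of_mem_supp hlm hb)
        · have hms := MvPolynomial.mem_support_iff.mpr hco2
          obtain ⟨a, ha, b, hb, rfl⟩ := Finset.mem_add.mp (MvPolynomial.support_mul _ _ hms)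
          rw [supp_monomial_eq ha, hw₀u]
          refine rle_add_compat hr u₀ ?_
          rw [hB₀def]
          exact rle_of_mem_supp (isLM_shift hrN kk hlm') hb
      have hlmq₀ : r (lmo r q₀) w₀ := by
        have hmem := (isLM_lmo hr hq₀0).1
        rcases hsuppq₀ _ hmem with h | h
        · exact h
        · rw [h] at hmem
          exact absurd (MvPolynomial.mem_support_iff.mp hmem) (not_not.mpr hcw₀)
      have hpdq₀ : IsMultiHomog K (intv 0 D) q₀ := by
        rw [hq₀def]
        refine multihomog_sub (multihomog_smul _ ?_) (multihomog_smul _ ?_)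
        · have h8 := multihomog_monomial_mul (K := K) v₀ (1:K) (hD)
          rwa [show placeDeg v₀ + intv 0 d = intv 0 D from by
            rw [← hpdw₀, hw₀def, placeDeg_add, hpdA]
            abel] at h8
        · have h8 := multihomog_monomial_mul (K := K) u₀ (1:K) (multihomog_shift kk hD')
          rwa [show placeDeg u₀ + pdShift kk (intv 0 d') = intv 0 D from by
            rw [← hpdw₀, hw₀, placeDeg_add, pdShift_intv, zero_add, ← hpdB₀]
            abel] at h8
      refine ⟨{⟨α, g, T.k, q₀⟩}, ?_, ?_⟩
      · intro S hS
        rw [Multiset.mem_singleton.mp hS]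
        constructor
        · refine ⟨hα0, hq₀J, hq₀0, D, hpdq₀, ?_⟩
          show placeDeg g + pdShift T.k (intv 0 D) = μ
          rw [← hpdw₀, ← placeDeg_shiftMon, ← hwdef, ← placeDeg_add, hgw, hpdδ]
        · show r (g + shiftMon T.k (lmo r q₀)) δ
          have h9 := hr.add_compat _ _ g (hrN T.k _ _ hlmq₀)
          rw [← hwdef] at h9
          rwa [hgw] at h9
      · rw [Multiset.map_singleton, Multiset.sum_singleton, hkey, tev]


theorem pair_rewrite {r : Mon Y → Mon Y → Prop} (hr : IsMonOrd r) (hrN : IsNCompat r)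
    {J : Ideal (PL K Y)} (hJN : IsNIdeal K J) {μ : ℕ+ →₀ ℕ} (hsf : ∀ j, μ j ≤ 1)
    {δ : Mon Y} {T T' : Trm K Y} (hT : TrmOK J μ T) (hT' : TrmOK J μ T')
    (hd : tlm r T = δ) (hd' : tlm r T' = δ)
    (hcan : T.c * MvPolynomial.coeff (lmo r T.h) T.h
          + T'.c * MvPolynomial.coeff (lmo r T'.h) T'.h = 0) :
    ∃ l : Multiset (Trm K Y), (∀ S ∈ l, TrmOK J μ S ∧ r (tlm r S) δ) ∧
      tev K T + tev K T' = (l.map (tev K)).sum := by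
  rcases le_total T.k T'.k with hk | hk
  · exact pair_core hr hrN hJN hsf hT hT' hk hd hd' hcan
  · obtain ⟨l, hl, hsum⟩ := pair_core hr hrN hJN hsf hT' hT hk hd' hd
      (by rw [add_comm]; exact hcan)
    exact ⟨l, hl, by rw [add_comm]; exact hsum⟩

theorem multiset_exists_max {r : Mon Y → Mon Y → Prop} (hr : IsMonOrd r)
    {s : Multiset (Mon Y)} (hs : s ≠ 0) : ∃ δ ∈ s, ∀ m ∈ s, rle r m δ := by
  induction s using Multiset.induction_on with
  | empty => exact absurd rfl hs
  | @cons a t ih =>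
    rcases eq_or_ne t 0 with rfl | ht
    · exact ⟨a, Multiset.mem_cons_self a 0, fun m hm => by
        rw [Multiset.mem_cons] at hm
        rcases hm with rfl | hm
        · exact Or.inr rfl
        · exact absurd hm (by simp)⟩
    · obtain ⟨δ, hδmem, hδ⟩ := ih ht
      rcases hr.total a δ with h | h | h
      · refine ⟨δ, Multiset.mem_cons_of_mem hδmem, fun m hm => ?_⟩
        rcases Multiset.mem_cons.mp hm with rfl | hm
        · exact Or.inl h
        · exact hδ m hm
      · refine ⟨δ, Multiset.mem_cons_of_mem hδmem, fun m hm => ?_⟩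
        rcases Multiset.mem_cons.mp hm with rfl | hm
        · exact Or.inr h
        · exact hδ m hm
      · refine ⟨a, Multiset.mem_cons_self a t, fun m hm => ?_⟩
        rcases Multiset.mem_cons.mp hm with rfl | hm
        · exact Or.inr rfl
        · exact rle_trans hr (hδ m hm) (Or.inl h)

set_option maxHeartbeats 1000000 in
theorem cancel_at_top {r : Mon Y → Mon Y → Prop} (hr : IsMonOrd r) (hrN : IsNCompat r)
    {J : Ideal (PL K Y)} (hJN : IsNIdeal K J) {μ : ℕ+ →₀ ℕ} (hsf : ∀ j, μ j ≤ 1)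
    {δ : Mon Y} : ∀ (n : ℕ) (s : Multiset (Trm K Y)),
    (Multiset.countP (fun T => tlm r T = δ) s = n) →
    (∀ T ∈ s, TrmOK J μ T ∧ rle r (tlm r T) δ) →
    MvPolynomial.coeff δ ((s.map (tev K)).sum) = 0 →
    ∃ l : Multiset (Trm K Y), (∀ T ∈ l, TrmOK J μ T ∧ r (tlm r T) δ) ∧
      (l.map (tev K)).sum = (s.map (tev K)).sum := by
  classical
  intro n
  induction n using Nat.strong_induction_on with
  | _ n ih =>
    intro s hcount hs hcoeff
    rcases Nat.eq_zero_or_pos n with rfl | hn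
    · refine ⟨s, fun T hT => ⟨(hs T hT).1, ?_⟩, rfl⟩
      have hnot := Multiset.countP_eq_zero.mp hcount T hT
      rcases (hs T hT).2 with h | h
      · exact h
      · exact absurd h hnot
    · have hex : ∃ T ∈ s, tlm r T = δ := by
        rw [← Multiset.countP_pos]
        omega
      obtain ⟨T, hTmem, hTδ⟩ := hex
      obtain ⟨s₁, rfl⟩ := Multiset.exists_cons_of_mem hTmem
      have hcount₁ : Multiset.countP (fun T => tlm r T = δ) s₁ = n - 1 := by
        rw [Multiset.countP_cons, if_pos hTδ] at hcount
        omega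
      obtain ⟨hTOK, -⟩ := hs T (Multiset.mem_cons_self _ _)
      have hT0 : T.h ≠ 0 := hTOK.2.2.1
      have heT : MvPolynomial.coeff (lmo r T.h) T.h ≠ 0 :=
        MvPolynomial.mem_support_iff.mp (isLM_lmo hr hT0).1
      rcases Nat.lt_or_ge n 2 with hn2 | hn2
      · -- n = 1 : contradiction
        exfalso
        have hc1 : Multiset.countP (fun T => tlm r T = δ) s₁ = 0 := by omega
        have hrest : MvPolynomial.coeff δ ((s₁.map (tev K)).sum) = 0 := by
          rw [coeff_multiset_sum, Multiset.map_map]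
          refine Multiset.sum_eq_zero (fun x hx => ?_)
          obtain ⟨T', hT', rfl⟩ := Multiset.mem_map.mp hx
          obtain ⟨hOK', hle'⟩ := hs T' (Multiset.mem_cons_of_mem hT')
          have hne' := Multiset.countP_eq_zero.mp hc1 T' hT'
          have hlt' : r (tlm r T') δ := by
            rcases hle' with h | h
            · exact h
            · exact absurd h hne'
          exact coeff_tev_of_gt hr hrN hOK'.2.2.1 hlt'
        rw [Multiset.map_cons, Multiset.sum_cons, MvPolynomial.coeff_add, hrest, add_zero,
          ← hTδ, coeff_tev_tlm] at hcoeff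
        exact mul_ne_zero hTOK.1 heT hcoeff
      · -- n ≥ 2 : pair-rewrite
        have hex2 : ∃ T' ∈ s₁, tlm r T' = δ := by
          rw [← Multiset.countP_pos]
          omega
        obtain ⟨T', hT'mem, hT'δ⟩ := hex2
        obtain ⟨s₂, rfl⟩ := Multiset.exists_cons_of_mem hT'mem
        obtain ⟨hT'OK, -⟩ := hs T' (Multiset.mem_cons_of_mem (Multiset.mem_cons_self _ _))
        have hT'0 : T'.h ≠ 0 := hT'OK.2.2.1
        have heT' : MvPolynomial.coeff (lmo r T'.h) T'.h ≠ 0 :=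
          MvPolynomial.mem_support_iff.mp (isLM_lmo hr hT'0).1
        set c₁ : K := -(T.c * MvPolynomial.coeff (lmo r T.h) T.h)
          / MvPolynomial.coeff (lmo r T'.h) T'.h with hc₁def
        have hc₁0 : c₁ ≠ 0 := by
          rw [hc₁def]
          exact div_ne_zero (neg_ne_zero.mpr (mul_ne_zero hTOK.1 heT)) heT'
        set T₁ : Trm K Y := ⟨c₁, T'.t, T'.k, T'.h⟩ with hT₁def
        set T₂ : Trm K Y := ⟨T'.c - c₁, T'.t, T'.k, T'.h⟩ with hT₂def
        have hsplit : tev K T' = tev K T₁ + tev K T₂ := by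
          rw [tev, tev, tev, hT₁def, hT₂def]
          show MvPolynomial.monomial T'.t T'.c * _ =
            MvPolynomial.monomial T'.t c₁ * _ + MvPolynomial.monomial T'.t (T'.c - c₁) * _
          rw [← add_mul, ← map_add]
          congr 2
          ring
        have hT₁OK : TrmOK J μ T₁ := ⟨hc₁0, hT'OK.2.1, hT'OK.2.2.1, hT'OK.2.2.2⟩
        have hT₁δ : tlm r T₁ = δ := hT'δ
        have hcan₁ : T.c * MvPolynomial.coeff (lmo r T.h) T.h
            + T₁.c * MvPolynomial.coeff (lmo r T₁.h) T₁.h = 0 := by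
          show T.c * _ + c₁ * MvPolynomial.coeff (lmo r T'.h) T'.h = 0
          rw [hc₁def]
          rw [div_mul_cancel₀ _ heT']
          ring
        obtain ⟨lp, hlp, hlpsum⟩ := pair_rewrite hr hrN hJN hsf hTOK hT₁OK hTδ hT₁δ hcan₁
        have hlpcount : Multiset.countP (fun T => tlm r T = δ) lp = 0 := by
          rw [Multiset.countP_eq_zero]
          intro S hS hSδ
          exact hr.irrefl δ (hSδ ▸ (hlp S hS).2)
        have hsum0 : ((T ::ₘ T' ::ₘ s₂).map (tev K)).sum
            = ((lp + s₂).map (tev K)).sum + tev K T₂ := by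
          rw [Multiset.map_cons, Multiset.map_cons, Multiset.sum_cons, Multiset.sum_cons,
            Multiset.map_add, Multiset.sum_add, hsplit, ← hlpsum]
          ring
        by_cases hc₂0 : T'.c - c₁ = 0
        · have hT₂z : tev K T₂ = 0 := by
            rw [tev, hT₂def]
            show MvPolynomial.monomial T'.t (T'.c - c₁) * _ = 0
            rw [hc₂0, map_zero, zero_mul]
          have hcount' : Multiset.countP (fun T => tlm r T = δ) (lp + s₂) = n - 2 := by
            rw [Multiset.countP_add, hlpcount]
            rw [Multiset.countP_cons, if_pos hT'δ] at hcount₁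
            omega
          have hs' : ∀ S ∈ lp + s₂, TrmOK J μ S ∧ rle r (tlm r S) δ := by
            intro S hS
            rcases Multiset.mem_add.mp hS with h | h
            · exact ⟨(hlp S h).1, Or.inl (hlp S h).2⟩
            · exact hs S (Multiset.mem_cons_of_mem (Multiset.mem_cons_of_mem h))
          have hco' : MvPolynomial.coeff δ (((lp + s₂).map (tev K)).sum) = 0 := by
            rw [hsum0, hT₂z, add_zero] at hcoeff
            exact hcoeff
          obtain ⟨l, hl, hlsum⟩ := ih (n - 2) (by omega) (lp + s₂) hcount' hs' hco'
          refine ⟨l, hl, ?_⟩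
          rw [hlsum, hsum0, hT₂z, add_zero]
        · have hT₂OK : TrmOK J μ T₂ := ⟨hc₂0, hT'OK.2.1, hT'OK.2.2.1, hT'OK.2.2.2⟩
          have hcount' : Multiset.countP (fun T => tlm r T = δ) (lp + (T₂ ::ₘ s₂))
              = n - 1 := by
            rw [Multiset.countP_add, hlpcount, Multiset.countP_cons, if_pos (show tlm r T₂ = δ from hT'δ)]
            rw [Multiset.countP_cons, if_pos hT'δ] at hcount₁
            omega
          have hs' : ∀ S ∈ lp + (T₂ ::ₘ s₂), TrmOK J μ S ∧ rle r (tlm r S) δ := by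
            intro S hS
            rcases Multiset.mem_add.mp hS with h | h
            · exact ⟨(hlp S h).1, Or.inl (hlp S h).2⟩
            · rcases Multiset.mem_cons.mp h with rfl | h
              · exact ⟨hT₂OK, Or.inr hT'δ⟩
              · exact hs S (Multiset.mem_cons_of_mem (Multiset.mem_cons_of_mem h))
          have hsum1 : ((lp + (T₂ ::ₘ s₂)).map (tev K)).sum
              = ((T ::ₘ T' ::ₘ s₂).map (tev K)).sum := by
            rw [hsum0]
            rw [Multiset.map_add, Multiset.sum_add, Multiset.map_cons, Multiset.sum_cons,
              Multiset.map_add, Multiset.sum_add]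
            ring
          have hco' : MvPolynomial.coeff δ (((lp + (T₂ ::ₘ s₂)).map (tev K)).sum) = 0 := by
            rw [hsum1]
            exact hcoeff
          obtain ⟨l, hl, hlsum⟩ := ih (n - 1) (by omega) _ hcount' hs' hco'
          exact ⟨l, hl, by rw [hlsum, hsum1]⟩

set_option maxHeartbeats 1000000 in
theorem crux {r : Mon Y → Mon Y → Prop} (hr : IsMonOrd r) (hrN : IsNCompat r)
    {J : Ideal (PL K Y)} (hJN : IsNIdeal K J) {μ : ℕ+ →₀ ℕ} (hsf : ∀ j, μ j ≤ 1)
    {f : PL K Y} (hf : f ≠ 0)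
    (hrep : ∃ s : Multiset (Trm K Y), (∀ T ∈ s, TrmOK J μ T) ∧ f = (s.map (tev K)).sum)
    {mf : Mon Y} (hlmf : IsLM K r f mf) :
    ∃ h, h ∈ J ∧ (∃ D, IsMultiHomog K (intv 0 D) h) ∧ h ≠ 0 ∧
      ∃ k mh, IsLM K r h mh ∧ shiftMon k mh ≤ mf := by
  classical
  obtain ⟨s₀, hs₀, hfs₀⟩ := hrep
  have hs₀ne : s₀ ≠ 0 := by
    rintro rfl
    exact hf (by rw [hfs₀]; simp)
  set Dset : Set (Mon Y) := {δ | ∃ s : Multiset (Trm K Y),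
    (∀ T ∈ s, TrmOK J μ T ∧ rle r (tlm r T) δ) ∧ f = (s.map (tev K)).sum} with hDset
  have hDne : Dset.Nonempty := by
    obtain ⟨δ, hδmem, hδ⟩ := multiset_exists_max hr (s := s₀.map (tlm r))
      (by simpa using hs₀ne)
    refine ⟨δ, s₀, fun T hT => ⟨hs₀ T hT, hδ _ (Multiset.mem_map_of_mem _ hT)⟩, hfs₀⟩
  set δ₀ := WellFounded.min hr.wf Dset hDne with hδ₀def
  obtain ⟨s, hs, hfs⟩ := WellFounded.min_mem hr.wf Dset hDne
  have hmin : ∀ δ' ∈ Dset, ¬ r δ' δ₀ := fun δ' hδ' => WellFounded.not_lt_min hr.wf Dset hδ'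
  have hexT : ∃ T ∈ s, MvPolynomial.coeff mf (tev K T) ≠ 0 := by
    by_contra hno
    push_neg at hno
    have : MvPolynomial.coeff mf f = 0 := by
      rw [hfs, coeff_multiset_sum, Multiset.map_map]
      exact Multiset.sum_eq_zero (fun x hx => by
        obtain ⟨T, hT, rfl⟩ := Multiset.mem_map.mp hx
        exact hno T hT)
    exact MvPolynomial.mem_support_iff.mp hlmf.1 this
  obtain ⟨Tw, hTw, hTwc⟩ := hexT
  have hrlemf : rle r mf δ₀ := by
    refine rle_trans hr (rle_tlm_of_mem_supp hr hrN (hs Tw hTw).1.2.2.1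
      (MvPolynomial.mem_support_iff.mpr hTwc)) (hs Tw hTw).2
  by_cases hmfδ : mf = δ₀
  · -- the maximum is attained by f itself
    have h1 : rle r (tlm r Tw) δ₀ := (hs Tw hTw).2
    have h2 : rle r mf (tlm r Tw) := rle_tlm_of_mem_supp hr hrN (hs Tw hTw).1.2.2.1
      (MvPolynomial.mem_support_iff.mpr hTwc)
    have h3 : tlm r Tw = mf := by
      refine rle_antisymm hr ?_ h2
      rw [hmfδ]
      exact h1
    obtain ⟨hc, hhJ, hh0, D, hD, hμ⟩ := (hs Tw hTw).1
    refine ⟨Tw.h, hhJ, ⟨D, hD⟩, hh0, Tw.k, lmo r Tw.h, isLM_lmo hr hh0, ?_⟩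
    rw [← h3, tlm]
    exact le_add_self
  · exfalso
    have hrmf : r mf δ₀ := by
      rcases hrlemf with h | h
      · exact h
      · exact absurd h hmfδ
    have hcoeffδ₀ : MvPolynomial.coeff δ₀ f = 0 := coeff_eq_zero_of_gt hr hlmf hrmf
    obtain ⟨l, hl, hlsum⟩ := cancel_at_top hr hrN hJN hsf
      (Multiset.countP (fun T => tlm r T = δ₀) s) s rfl hs (by rw [← hfs]; exact hcoeffδ₀)
    have hlne : l ≠ 0 := by
      rintro rfl
      apply hf
      rw [hfs, ← hlsum]
      simp
    obtain ⟨δ', hδ'mem, hδ'⟩ := multiset_exists_max hr (s := l.map (tlm r))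
      (by simpa using hlne)
    obtain ⟨Tm, hTm, rfl⟩ := Multiset.mem_map.mp hδ'mem
    refine hmin (tlm r Tm) ⟨l, fun T hT => ⟨(hl T hT).1, hδ' _ (Multiset.mem_map_of_mem _ hT)⟩,
      by rw [hfs, hlsum]⟩ ((hl Tm hTm).2)


/-! #### Final helper lemmas -/

theorem shift_zero (f : PL K Y) : shift K 0 f = f := by
  show MvPolynomial.rename _ f = f
  have h : shiftVar (Y := Y) 0 = id := by
    funext p
    refine Prod.ext rfl (PNat.coe_injective ?_)
    show ((p.2 : ℕ) + 0 : ℕ) = (p.2 : ℕ)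
    omega
  rw [h, MvPolynomial.rename_id, AlgHom.id_apply]

theorem pshift_injective (k : ℕ) : Function.Injective (pshift (k := k)) := by
  intro a b h
  have : (a : ℕ) + k = (b : ℕ) + k := congrArg Subtype.val h
  exact PNat.coe_injective (by omega)

theorem ngens_form {g : PL K Y} (hg : g ∈ Ngens K Y) :
    ∃ m2 : Mon Y, g = MvPolynomial.monomial m2 1 ∧
      placeDeg m2 = Finsupp.single (1 : ℕ+) 2 := by
  obtain ⟨i, j, rfl⟩ := hg
  refine ⟨Finsupp.single (i, (1:ℕ+)) 1 + Finsupp.single (j, (1:ℕ+)) 1, ?_, ?_⟩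
  · rw [MvPolynomial.X, MvPolynomial.X, MvPolynomial.monomial_mul, one_mul]
  · rw [placeDeg_add, placeDeg_single, placeDeg_single]
    show (Finsupp.single (1:ℕ+) 1 + Finsupp.single (1:ℕ+) 1 : ℕ+ →₀ ℕ) = _
    rw [← Finsupp.single_add]

theorem isLM_monomial {r : Mon Y → Mon Y → Prop} {m : Mon Y} {c : K} (hc : c ≠ 0) :
    IsLM K r (MvPolynomial.monomial m c) m := by
  constructor
  · rw [MvPolynomial.mem_support_iff, MvPolynomial.coeff_monomial, if_pos rfl]
    exact hc
  · intro m' hm' hne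
    exact absurd (supp_monomial_eq hm') hne

theorem exists_pair_le {m : Mon Y} {j : ℕ+} (h2 : 2 ≤ placeDeg m j) :
    ∃ y y' : Y, Finsupp.single (y, j) 1 + Finsupp.single (y', j) 1 ≤ m := by
  classical
  have hsum : placeDeg m j = ∑ x ∈ m.support.filter (fun x => x.2 = j), m x := by
    rw [placeDeg_apply, Finset.sum_filter]
  by_cases hbig : ∃ x ∈ m.support.filter (fun x => x.2 = j), 2 ≤ m x
  · obtain ⟨x, hx, hx2⟩ := hbig
    have hxj : x.2 = j := (Finset.mem_filter.mp hx).2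
    refine ⟨x.1, x.1, ?_⟩
    rw [← Finsupp.single_add]
    refine Finsupp.single_le_iff.mpr ?_
    rw [show (x.1, j) = x from by rw [← hxj]]
    omega
  · push_neg at hbig
    have hcard : 2 ≤ (m.support.filter (fun x => x.2 = j)).card := by
      by_contra hcd
      push_neg at hcd
      have := Finset.sum_le_card_nsmul (m.support.filter (fun x => x.2 = j)) (fun x => m x) 1
        (fun x hx => by have := hbig x hx; show m x ≤ 1; omega)
      rw [smul_eq_mul, mul_one] at this
      omega
    obtain ⟨a, ha, b, hb, hab⟩ := Finset.one_lt_card.mp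
      (show 1 < (m.support.filter (fun x => x.2 = j)).card by omega)
    have haj : a.2 = j := (Finset.mem_filter.mp ha).2
    have hbj : b.2 = j := (Finset.mem_filter.mp hb).2
    have ham : 1 ≤ m a := Nat.one_le_iff_ne_zero.mpr
      (Finsupp.mem_support_iff.mp (Finset.mem_filter.mp ha).1)
    have hbm : 1 ≤ m b := Nat.one_le_iff_ne_zero.mpr
      (Finsupp.mem_support_iff.mp (Finset.mem_filter.mp hb).1)
    refine ⟨a.1, b.1, ?_⟩
    rw [Finsupp.le_def]
    intro z
    rw [Finsupp.add_apply, Finsupp.single_apply, Finsupp.single_apply]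
    have haz : (a.1, j) = a := by rw [← haj]
    have hbz : (b.1, j) = b := by rw [← hbj]
    by_cases h1 : (a.1, j) = z
    · by_cases h2 : (b.1, j) = z
      · exact absurd ((haz ▸ h1).trans (hbz ▸ h2).symm) hab
      · rw [if_pos h1, if_neg h2]
        rw [← h1, haz]
        omega
    · by_cases h2 : (b.1, j) = z
      · rw [if_neg h1, if_pos h2, ← h2, hbz]
        omega
      · rw [if_neg h1, if_neg h2]
        exact Nat.zero_le _

theorem monomial_mem_of_divisor {I : Ideal (PL K Y)} {mf s : Mon Y} (hle : s ≤ mf)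
    (hmem : MvPolynomial.monomial s (1:K) ∈ I) : MvPolynomial.monomial mf (1:K) ∈ I := by
  obtain ⟨u, hu⟩ := le_iff_exists_add.mp hle
  have : MvPolynomial.monomial mf (1:K) = MvPolynomial.monomial u 1 * MvPolynomial.monomial s 1 := by
    rw [MvPolynomial.monomial_mul, one_mul, hu, add_comm]
  rw [this]
  exact Ideal.mul_mem_left _ _ hmem

theorem mComp_nspan_ngens_eq_zero {μ : ℕ+ →₀ ℕ} (hsf : ∀ j, μ j ≤ 1) {v : PL K Y}
    (hv : v ∈ nspan K (Ngens K Y)) : mComp K μ v = 0 := by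
  apply MvPolynomial.ext
  intro m
  rw [coeff_mComp, MvPolynomial.coeff_zero]
  by_cases h : placeDeg m = μ
  · rw [if_pos h]
    by_contra hc
    obtain ⟨j, hj⟩ := supp_nspan_ngens hv m (MvPolynomial.mem_support_iff.mpr hc)
    have := hsf j
    rw [← h] at this
    omega
  · rw [if_neg h]


end
end St13

end Statement13Aux
open St13 MvPolynomial

/-- For `N = ⟨x_i(1)x_j(1)⟩_ℕ`, a letterplace ideal `J ⊆ P` and
`G ⊆ J ∩ L`: `G` is a Gröbner `L`-basis of `J` iff `G` is a multihomogeneous Gröbner ℕ-basis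
of `J + N` modulo `N`, i.e. `G` consists of multihomogeneous elements in normal form modulo `N`
and `G ∪ {x_i(1)x_j(1)}` is a Gröbner ℕ-basis of `J + N`. -/
theorem statement_13 (K : Type*) [Field K] (Y : Type*) [Countable Y]
    (r : ((Y × ℕ+) →₀ ℕ) → ((Y × ℕ+) →₀ ℕ) → Prop)
    (hr : IsMonOrd r) (hrN : IsNCompat r) (hrW : IsWeighted r)
    (J : Ideal (PL K Y)) (hJ : IsLPIdeal K J)
    (G : Set (PL K Y)) (hG : G ⊆ (J : Set (PL K Y)) ∩ Lset K) :
    IsGroebnerLB K r J G ↔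
      ((∀ g ∈ G, (∃ μ, IsMultiHomog K μ g) ∧ NormalModN K g) ∧
        IsGroebnerNB K r (J ⊔ nspan K (Ngens K Y)) (G ∪ Ngens K Y)) := by
  classical
  constructor
  · rintro ⟨hGsub, hLB⟩
    refine ⟨fun g hg => ⟨(hG hg).2.2, normal_of_lset (hG hg).2⟩, ?_, ?_⟩
    · -- G ∪ Ngens ⊆ J + N
      intro p hp
      rcases hp with hpG | hpN
      · exact Submodule.mem_sup_left (hG hpG).1
      · exact Submodule.mem_sup_right (Ideal.subset_span ⟨0, p, hpN, (shift_zero p).symm⟩)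
    · -- equality of leading monomial ideals
      refine le_antisymm (Ideal.span_le.mpr ?_) (Ideal.span_le.mpr ?_)
      · -- shLMideal ⊆ LMideal
        rintro p ⟨g, hgU, hg0, mg, hlmg, k, rfl⟩
        have hf : shift K k g ∈ J ⊔ nspan K (Ngens K Y) := by
          rcases hgU with hgG | hgN
          · exact Submodule.mem_sup_left (hJ.1 k g (hG hgG).1)
          · exact Submodule.mem_sup_right (Ideal.subset_span ⟨k, g, hgN, rfl⟩)
        exact Ideal.subset_span ⟨shift K k g, hf, shift_ne_zero hg0, shiftMon k mg,
          isLM_shift hrN k hlmg, rfl⟩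
      · -- LMideal ⊆ shLMideal
        rintro p ⟨f, hfJN, hf0, mf, hlmf, rfl⟩
        by_cases hnorm : ∀ j, placeDeg mf j ≤ 1
        · -- normal case
          set μ := placeDeg mf with hμdef
          obtain ⟨u, huJ, v, hvN, huv⟩ := Submodule.mem_sup.mp hfJN
          have hmc : mComp K μ f = mComp K μ u := by
            rw [← huv, mComp_add, mComp_nspan_ngens_eq_zero hnorm hvN, add_zero]
          have hlmu : IsLM K r (mComp K μ u) mf := by
            rw [← hmc]
            exact isLM_mComp hlmf
          have hu0 : mComp K μ u ≠ 0 := fun hcon => by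
            rw [hcon] at hlmu
            simpa using hlmu.1
          have huJ' : u ∈ nspan K ((J : Set (PL K Y)) ∩ Lset K) := by
            rw [← hJ.2]
            exact huJ
          obtain ⟨s, hsprop, hsum⟩ := exists_rep_of_mem_nspan huJ'
          set P : Trm K Y → Prop := fun T => mComp K μ (tev K T) ≠ 0 with hPdef
          have hTok : ∀ T ∈ s.filter P, TrmOK J μ T := by
            intro T hT
            have hTs := Multiset.mem_of_mem_filter hT
            have hPT : P T := (Multiset.mem_filter.mp hT).2
            obtain ⟨hc, hhJL, hh0⟩ := hsprop T hTs
            obtain ⟨D, hD⟩ := lset_multidegree hhJL.2 hh0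
            have hmh : IsMultiHomog K (placeDeg T.t + pdShift T.k (intv 0 D)) (tev K T) := by
              rw [tev]
              exact multihomog_monomial_mul _ _ (multihomog_shift _ hD)
            refine ⟨hc, hhJL.1, hh0, D, hD, ?_⟩
            by_contra hνμ
            exact hPT (mComp_of_multihomog_ne hmh (fun hcon => hνμ hcon.symm))
          have hcomp_tev : ∀ T ∈ s.filter P, mComp K μ (tev K T) = tev K T := by
            intro T hT
            obtain ⟨hc, hhJ2, hh0, D, hD, hνμ⟩ := hTok T hT
            have hmh : IsMultiHomog K (placeDeg T.t + pdShift T.k (intv 0 D)) (tev K T) := by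
              rw [tev]
              exact multihomog_monomial_mul _ _ (multihomog_shift _ hD)
            rw [← hνμ]
            exact mComp_of_multihomog (hνμ ▸ hmh)
          have hcompsum : mComp K μ u = ((s.filter P).map (tev K)).sum := by
            rw [hsum, mComp_multiset_sum, Multiset.map_map]
            have hsplit := Multiset.filter_add_not P s
            calc ((s.map (mComp K μ ∘ tev K)).sum)
                = (((s.filter P + s.filter (fun T => ¬ P T)).map (mComp K μ ∘ tev K)).sum) := by
                  rw [hsplit]
            _ = ((s.filter P).map (mComp K μ ∘ tev K)).sum
                + ((s.filter (fun T => ¬ P T)).map (mComp K μ ∘ tev K)).sum := by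
                  rw [Multiset.map_add, Multiset.sum_add]
            _ = ((s.filter P).map (tev K)).sum + 0 := by
                congr 1
                · exact congrArg Multiset.sum (Multiset.map_congr rfl
                    (fun T hT => hcomp_tev T hT))
                · refine Multiset.sum_eq_zero ?_
                  intro x hx
                  obtain ⟨T, hT, rfl⟩ := Multiset.mem_map.mp hx
                  exact not_ne_iff.mp (Multiset.mem_filter.mp hT).2
            _ = _ := add_zero _
          obtain ⟨h, hhJ3, ⟨D, hD⟩, hh0, k, mh, hlmh, hdiv⟩ := crux hr hrN hJ.1 hnorm hu0
            ⟨s.filter P, hTok, hcompsum⟩ hlmu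
          have hhL : h ∈ Lset K := mem_lset_of_intv hD
          obtain ⟨g, hgG, k', mg, mh', hlmg, hlmh', hdiv'⟩ := hLB h ⟨hhJ3, hhL⟩ hh0
          have hmh' : mh' = mh := lm_unique hr hlmh' hlmh
          rw [hmh'] at hdiv'
          have hg0 : g ≠ 0 := fun hcon => by
            rw [hcon] at hlmg
            simpa using hlmg.1
          have hdiv2 : shiftMon (k' + k) mg ≤ mf := by
            rw [← shiftMon_shiftMon]
            exact le_trans (shiftMon_mono hdiv') hdiv
          exact monomial_mem_of_divisor hdiv2
            (Ideal.subset_span ⟨g, Or.inl hgG, hg0, mg, hlmg, k' + k, rfl⟩)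
        · -- non-normal case: divisible by a shifted Ngens leading monomial
          push_neg at hnorm
          obtain ⟨j, hj⟩ := hnorm
          obtain ⟨y, y', hyy⟩ := exists_pair_le (m := mf) (j := j) (by omega)
          set m2 : (Y × ℕ+) →₀ ℕ :=
            Finsupp.single (y, (1:ℕ+)) 1 + Finsupp.single (y', (1:ℕ+)) 1 with hm2def
          have hgm2 : (MvPolynomial.X (y, (1:ℕ+)) * MvPolynomial.X (y', (1:ℕ+)) : PL K Y)
              = MvPolynomial.monomial m2 1 := by
            rw [MvPolynomial.X, MvPolynomial.X, MvPolynomial.monomial_mul, one_mul]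
          have hg0 : (MvPolynomial.X (y, (1:ℕ+)) * MvPolynomial.X (y', (1:ℕ+)) : PL K Y) ≠ 0 := by
            rw [hgm2]
            intro hcon
            have := congrArg (MvPolynomial.coeff m2) hcon
            rw [MvPolynomial.coeff_monomial, if_pos rfl, MvPolynomial.coeff_zero] at this
            exact one_ne_zero this
          have hlmg : IsLM K r (MvPolynomial.X (y, (1:ℕ+)) * MvPolynomial.X (y', (1:ℕ+)) : PL K Y) m2 := by
            rw [hgm2]
            exact isLM_monomial one_ne_zero
          have hj1 : 0 < (j : ℕ) := j.2
          have hsv : ∀ z : Y, shiftVar ((j:ℕ) - 1) (z, (1:ℕ+)) = (z, j) := fun z =>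
            Prod.ext rfl (PNat.coe_injective (by
              show ((1:ℕ) + ((j:ℕ) - 1) : ℕ) = (j:ℕ)
              omega))
          have hsm2 : shiftMon ((j:ℕ) - 1) m2
              = Finsupp.single (y, j) 1 + Finsupp.single (y', j) 1 := by
            rw [hm2def, shiftMon_add, shiftMon, shiftMon, Finsupp.mapDomain_single,
              Finsupp.mapDomain_single, hsv, hsv]
          have hdiv : shiftMon ((j:ℕ) - 1) m2 ≤ mf := by
            rw [hsm2]
            exact hyy
          exact monomial_mem_of_divisor hdiv
            (Ideal.subset_span ⟨_, Or.inr ⟨y, y', rfl⟩, hg0, m2, hlmg, (j:ℕ) - 1, rfl⟩)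
  · rintro ⟨hGmh, hsubJN, hEq⟩
    refine ⟨hG, ?_⟩
    intro f hf hf0
    obtain ⟨mf, hlmf⟩ := exists_lm hr hf0
    have hmem : MvPolynomial.monomial mf (1:K)
        ∈ LMideal K r ((J ⊔ nspan K (Ngens K Y) : Ideal (PL K Y)) : Set (PL K Y)) :=
      Ideal.subset_span ⟨f, Submodule.mem_sup_left hf.1, hf0, mf, hlmf, rfl⟩
    rw [← hEq] at hmem
    have himg : {p | ∃ g ∈ G ∪ Ngens K Y, g ≠ 0 ∧ ∃ m, IsLM K r g m ∧
        ∃ k : ℕ, p = MvPolynomial.monomial (shiftMon k m) (1:K)}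
        = (fun m0 => MvPolynomial.monomial m0 (1:K)) ''
          {m0 | ∃ g ∈ G ∪ Ngens K Y, g ≠ 0 ∧ ∃ m, IsLM K r g m ∧ ∃ k : ℕ, m0 = shiftMon k m} := by
      ext p
      constructor
      · rintro ⟨g, hg, hg0, m, hm, k, rfl⟩
        exact ⟨shiftMon k m, ⟨g, hg, hg0, m, hm, k, rfl⟩, rfl⟩
      · rintro ⟨m0, ⟨g, hg, hg0, m, hm, k, rfl⟩, rfl⟩
        exact ⟨g, hg, hg0, m, hm, k, rfl⟩
    rw [shLMideal, himg] at hmem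
    have hmfsupp : mf ∈ (MvPolynomial.monomial mf (1:K)).support := by
      rw [MvPolynomial.support_monomial, if_neg one_ne_zero]
      exact Finset.mem_singleton.mpr rfl
    obtain ⟨si, ⟨g, hgU, hg0, mg, hlmg, k, rfl⟩, hle⟩ :=
      MvPolynomial.mem_ideal_span_monomial_image.mp hmem mf hmfsupp
    rcases hgU with hgG | hgN
    · exact ⟨g, hgG, k, mg, mf, hlmg, hlmf, hle⟩
    · exfalso
      obtain ⟨m2, hgm2, hpd2⟩ := ngens_form hgN
      have hmg2 : mg = m2 := by
        have h1 := hlmg.1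
        rw [hgm2] at h1
        exact supp_monomial_eq h1
      have h2 : (2:ℕ) ≤ placeDeg (shiftMon k mg) (pshift k 1) := by
        rw [placeDeg_shiftMon, hmg2, hpd2, pdShift_single, Finsupp.single_eq_same]
      have h3 : 2 ≤ placeDeg mf (pshift k 1) :=
        le_trans h2 (Finsupp.le_def.mp (placeDeg_mono hle) _)
      have h4 := normal_of_lset hf.2 mf hlmf.1 (pshift k 1)
      omega
end

section
/- Let I be any two-sided ideal of F and let G be any Gröbner basis of I with respect to the graded right lexicographic ordering. Then G^* = {g^* : g ∈ G, g ≠ 0} is a homogeneous Gröbner basis of the homogenization I^* modulo C, i.e. G^* ∪ {[t, x_i] : i ≥ 1} is a Gröbner basis of I^* with respect to the graded right lexicographic ordering of F̄ with t smallest; moreover lm(G^*) = lm(G). -/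
noncomputable section Proof17

@[simp] lemma FM_length_ofList {α : Type*} (l : List α) :
    FreeMonoid.length (FreeMonoid.ofList l) = l.length := rfl

@[simp] lemma FM_toList_ofList' {α : Type*} (l : List α) :
    FreeMonoid.toList (FreeMonoid.ofList l) = l := rfl

lemma reduceOption_map_some' {α : Type*} (l : List α) : (l.map some).reduceOption = l := by
  induction l with
  | nil => rfl
  | cons a l ih => simp [List.reduceOption_cons_of_some, ih]

lemma reduceOption_replicate_none' {α : Type*} (k : ℕ) :
    (List.replicate k (none : Option α)).reduceOption = [] := by
  induction k with
  | zero => rfl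
  | succ k ih => simpa [List.replicate_succ, List.reduceOption_cons_of_none] using ih

lemma eq_map_some_of_length_reduceOption {α : Type*} (l : List (Option α))
    (h : l.reduceOption.length = l.length) : l = l.reduceOption.map some := by
  induction l with
  | nil => rfl
  | cons a l ih =>
    cases a with
    | none =>
      exfalso
      have h1 := List.reduceOption_length_le l
      rw [List.reduceOption_cons_of_none] at h
      simp at h; omega
    | some x =>
      rw [List.reduceOption_cons_of_some] at h ⊢
      simp only [List.length_cons] at h
      simpa using ih (by omega)

lemma exists_maxDiff {α : Type*} (dflt : α) {a b : List α} (hlen : a.length = b.length)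
    (hne : a ≠ b) : ∃ p < a.length, a.getD p dflt ≠ b.getD p dflt ∧
      ∀ s, p < s → a.getD s dflt = b.getD s dflt := by
  classical
  have hDne : (Finset.filter (fun p => a.getD p dflt ≠ b.getD p dflt)
      (Finset.range a.length)).Nonempty := by
    by_contra hemp
    apply hne
    apply List.ext_getElem hlen
    intro i h1 h2
    have hni : ¬ (i < a.length ∧ a.getD i dflt ≠ b.getD i dflt) := by
      intro hc
      exact hemp ⟨i, Finset.mem_filter.2 ⟨Finset.mem_range.2 hc.1, hc.2⟩⟩
    rw [List.getD_eq_getElem _ _ h1, List.getD_eq_getElem _ _ h2] at hni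
    by_contra hne'
    exact hni ⟨h1, hne'⟩
  obtain ⟨hmem1, hmem2⟩ := Finset.mem_filter.1 (Finset.max'_mem _ hDne)
  refine ⟨_, Finset.mem_range.1 hmem1, hmem2, ?_⟩
  intro s hs
  by_cases hsa : s < a.length
  · by_contra hne'
    have hsD : s ∈ Finset.filter (fun p => a.getD p dflt ≠ b.getD p dflt)
        (Finset.range a.length) := Finset.mem_filter.2 ⟨Finset.mem_range.2 hsa, hne'⟩
    have := Finset.le_max' _ s hsD
    omega
  · rw [List.getD_eq_default _ _ (by omega), List.getD_eq_default _ _ (by omega)]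

lemma list_structure (l : List (Option ℕ)) :
    (∃ u x v, l = u ++ none :: some x :: v) ∨
      l = l.reduceOption.map some ++ List.replicate (l.length - l.reduceOption.length) none := by
  induction l with
  | nil => right; rfl
  | cons a l ih =>
    rcases ih with ⟨u, x, v, huv⟩ | hr
    · left; exact ⟨a :: u, x, v, by rw [huv]; rfl⟩
    · cases a with
      | some x =>
        right
        have hlen := List.reduceOption_length_le l
        rw [List.reduceOption_cons_of_some, List.map_cons, List.cons_append, List.length_cons,
          List.length_cons]
        have he : l.length + 1 - (l.reduceOption.length + 1) = l.length - l.reduceOption.length :=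
          by omega
        rw [he, ← hr]
      | none =>
        rcases hro : l.reduceOption with _ | ⟨x, r⟩
        · right
          have hl : l = List.replicate l.length none := by
            conv_lhs => rw [hr]
            rw [hro]; simp
          rw [List.reduceOption_cons_of_none, hro]
          simp only [List.map_nil, List.nil_append, List.length_cons, List.length_nil,
            Nat.sub_zero]
          rw [List.replicate_succ]
          exact congrArg (List.cons none) hl
        · left
          rw [hro] at hr
          refine ⟨[], x, List.map some r ++
            List.replicate (l.length - (x :: r).length) none, ?_⟩
          simp only [List.nil_append]
          conv_lhs => rw [hr]
          simp

end Proof17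

section Chunk2

variable {Y : Type*} {lt : Y → Y → Prop} {dflt : Y}

lemma grl_intro (hirr : ∀ a, ¬ lt a a) {m n : FreeMonoid Y}
    (hlen : FreeMonoid.length m = FreeMonoid.length n) (p : ℕ)
    (hp : lt ((FreeMonoid.toList m).getD p dflt) ((FreeMonoid.toList n).getD p dflt))
    (hbeyond : ∀ s, p < s →
      (FreeMonoid.toList m).getD s dflt = (FreeMonoid.toList n).getD s dflt) :
    grRightLex lt dflt m n := by
  have hlm : (FreeMonoid.toList m).length = FreeMonoid.length m := rfl
  have hln : (FreeMonoid.toList n).length = FreeMonoid.length n := rfl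
  right
  refine ⟨hlen, p, ?_, hp, hbeyond⟩
  by_contra h
  push_neg at h
  rw [List.getD_eq_default _ _ (by omega), List.getD_eq_default _ _ (by omega)] at hp
  exact hirr _ hp

lemma grl_asymm (hirr : ∀ a, ¬ lt a a) (htr : ∀ a b c, lt a b → lt b c → lt a c)
    {m n : FreeMonoid Y}
    (h1 : grRightLex lt dflt m n) (h2 : grRightLex lt dflt n m) : False := by
  rcases h1 with h1 | ⟨hlen1, p, hp, hltp, hbp⟩
  · rcases h2 with h2 | ⟨hlen2, _⟩ <;> omega
  · rcases h2 with h2 | ⟨hlen2, q, hq, hltq, hbq⟩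
    · omega
    · rcases lt_trichotomy p q with h | h | h
      · rw [hbp q h] at hltq; exact hirr _ hltq
      · subst h; exact hirr _ (htr _ _ _ hltp hltq)
      · rw [hbq p h] at hltp; exact hirr _ hltp

lemma grl_trans (htr : ∀ a b c, lt a b → lt b c → lt a c) {a b c : FreeMonoid Y}
    (h1 : grRightLex lt dflt a b) (h2 : grRightLex lt dflt b c) :
    grRightLex lt dflt a c := by
  rcases h1 with h1 | ⟨hlen1, p, hp, hltp, hbp⟩
  · rcases h2 with h2 | ⟨hlen2, _⟩
    · exact Or.inl (by omega)
    · exact Or.inl (by omega)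
  · rcases h2 with h2 | ⟨hlen2, q, hq, hltq, hbq⟩
    · exact Or.inl (by omega)
    · right
      refine ⟨by omega, ?_⟩
      rcases lt_trichotomy p q with h | h | h
      · exact ⟨q, by omega, by rw [hbp q h]; exact hltq,
          fun s hs => (hbp s (by omega)).trans (hbq s hs)⟩
      · subst h
        exact ⟨p, hp, htr _ _ _ hltp hltq, fun s hs => (hbp s hs).trans (hbq s hs)⟩
      · exact ⟨p, hp, by rw [← hbq p h]; exact hltp,
          fun s hs => (hbp s hs).trans (hbq s (by omega))⟩

lemma grl_total (hto : ∀ a b : Y, a ≠ b → lt a b ∨ lt b a) {m n : FreeMonoid Y}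
    (hne : m ≠ n) : grRightLex lt dflt m n ∨ grRightLex lt dflt n m := by
  have hlm : (FreeMonoid.toList m).length = FreeMonoid.length m := rfl
  have hln : (FreeMonoid.toList n).length = FreeMonoid.length n := rfl
  rcases lt_trichotomy (FreeMonoid.length m) (FreeMonoid.length n) with h | h | h
  · exact Or.inl (Or.inl h)
  · have hnel : FreeMonoid.toList m ≠ FreeMonoid.toList n := by
      intro hc; exact hne (congrArg FreeMonoid.ofList hc)
    obtain ⟨p, hplen, hpne, hpb⟩ := exists_maxDiff dflt (by omega) hnel
    rcases hto _ _ hpne with hd | hd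
    · exact Or.inl (Or.inr ⟨h, p, by omega, hd, hpb⟩)
    · exact Or.inr (Or.inr ⟨h.symm, p, by omega, hd, fun s hs => (hpb s hs).symm⟩)
  · exact Or.inr (Or.inl h)

lemma exists_rel_max {α : Type*} {r : α → α → Prop}
    (htr : ∀ a b c, r a b → r b c → r a c)
    (hto : ∀ a b, a ≠ b → r a b ∨ r b a)
    {s : Finset α} (hs : s.Nonempty) : ∃ m ∈ s, ∀ a ∈ s, a ≠ m → r a m := by
  classical
  induction s using Finset.induction_on with
  | empty => exact absurd hs (by simp)
  | @insert a s ha ih =>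
    rcases s.eq_empty_or_nonempty with rfl | hs'
    · exact ⟨a, by simp, by simp⟩
    · obtain ⟨m, hm, hmax⟩ := ih hs'
      by_cases hrm : a = m
      · subst hrm; exact absurd hm ha
      rcases hto a m hrm with h | h
      · refine ⟨m, Finset.mem_insert_of_mem hm, ?_⟩
        intro b hb hbm
        rcases Finset.mem_insert.1 hb with rfl | hb'
        · exact h
        · exact hmax b hb' hbm
      · refine ⟨a, Finset.mem_insert_self a s, ?_⟩
        intro b hb hba
        rcases Finset.mem_insert.1 hb with rfl | hb'
        · exact absurd rfl hba
        · by_cases hbm : b = m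
          · subst hbm; exact h
          · exact htr _ _ _ (hmax b hb' hbm) h

lemma optLt_irrefl : ∀ a : Option ℕ, ¬ optLt a a := by
  intro a; cases a <;> simp [optLt]

lemma optLt_trans : ∀ a b c : Option ℕ, optLt a b → optLt b c → optLt a c := by
  intro a b c h1 h2
  cases a <;> cases b <;> cases c <;> simp_all [optLt] <;> omega

lemma optLt_total : ∀ a b : Option ℕ, a ≠ b → optLt a b ∨ optLt b a := by
  intro a b h
  cases a <;> cases b <;> simp_all [optLt] <;> omega

variable (K : Type*) [Field K]

lemma exists_isLMF {r : FreeMonoid Y → FreeMonoid Y → Prop}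
    (htr : ∀ a b c, r a b → r b c → r a c)
    (hto : ∀ a b, a ≠ b → r a b ∨ r b a)
    (f : FA K Y) (hf : f ≠ 0) : ∃ w, IsLMF K r f w := by
  obtain ⟨m, hm, hmax⟩ := exists_rel_max htr hto (Finsupp.support_nonempty_iff.mpr (fun h => hf (MonoidAlgebra.coeff_injective h)))
  exact ⟨m, hm, hmax⟩

lemma isLMF_unique {r : FreeMonoid Y → FreeMonoid Y → Prop}
    (hasymm : ∀ m n, r m n → r n m → False) {f : FA K Y} {w1 w2 : FreeMonoid Y}
    (h1 : IsLMF K r f w1) (h2 : IsLMF K r f w2) : w1 = w2 := by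
  by_contra hne
  exact hasymm _ _ (h1.2 w2 h2.1 (Ne.symm hne)) (h2.2 w1 h1.1 hne)

end Chunk2

section Chunk3

open scoped Classical

variable {K : Type*} [Field K]

/-- The strip homomorphism deleting `t = none`. -/
def stripW {X : Type*} : FreeMonoid (Option X) →* FreeMonoid X :=
  FreeMonoid.lift (fun o => Option.elim o 1 FreeMonoid.of)

lemma toList_stripW {X : Type*} (l : List (Option X)) :
    FreeMonoid.toList (stripW (FreeMonoid.ofList l)) = l.reduceOption := by
  induction l with
  | nil => simp [stripW, FreeMonoid.ofList_nil]
  | cons a l ih =>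
    rw [FreeMonoid.ofList_cons, map_mul, FreeMonoid.toList_mul, ih]
    cases a with
    | none => simp [stripW, List.reduceOption_cons_of_none]
    | some x => simp [stripW, List.reduceOption_cons_of_some]

lemma toList_embWord {X : Type*} (w : FreeMonoid X) :
    FreeMonoid.toList (embWord w) = (FreeMonoid.toList w).map some := rfl

lemma embWord_injective {X : Type*} : Function.Injective (embWord (X := X)) := by
  intro a b h
  have := congrArg FreeMonoid.toList h
  rw [toList_embWord, toList_embWord] at this
  exact congrArg FreeMonoid.ofList (List.map_injective_iff.2 (Option.some_injective X) this)

lemma phi_hom_eq {X : Type*} :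
    (FreeMonoid.lift fun o : Option X => Option.elim o 1 fun x => gen K (some x)) =
      ((MonoidAlgebra.of K (FreeMonoid (Option X))).comp
        ((embWord (X := X)).comp (stripW (X := X)))) := by
  apply FreeMonoid.hom_eq
  intro o
  cases o with
  | none =>
    simp only [FreeMonoid.lift_eval_of, Option.elim, MonoidHom.comp_apply]
    rw [show stripW (FreeMonoid.of (none : Option X)) = 1 from FreeMonoid.lift_eval_of _ _,
      map_one, map_one]
  | some x =>
    simp only [FreeMonoid.lift_eval_of, Option.elim, MonoidHom.comp_apply]
    rw [show stripW (FreeMonoid.of (some x : Option X)) = FreeMonoid.of x from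
      FreeMonoid.lift_eval_of _ _]
    rfl

lemma phi_of {X : Type*} (w : FreeMonoid (Option X)) :
    phi K (MonoidAlgebra.of K (FreeMonoid (Option X)) w) =
      MonoidAlgebra.of K (FreeMonoid (Option X)) (embWord (stripW w)) := by
  rw [phi, MonoidAlgebra.lift_of, phi_hom_eq]
  rfl

lemma phi_single {X : Type*} (w : FreeMonoid (Option X)) (c : K) :
    phi K (MonoidAlgebra.single w c) = MonoidAlgebra.single (embWord (stripW w)) c := by
  have h1 : (MonoidAlgebra.single w c : FA K (Option X)) =
      c • MonoidAlgebra.of K (FreeMonoid (Option X)) w := by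
    rw [MonoidAlgebra.of_apply, MonoidAlgebra.smul_single', mul_one]
  have h2 : (MonoidAlgebra.single (embWord (stripW w)) c : FA K (Option X)) =
      c • MonoidAlgebra.of K (FreeMonoid (Option X)) (embWord (stripW w)) := by
    rw [MonoidAlgebra.of_apply, MonoidAlgebra.smul_single', mul_one]
  rw [h1, h2, map_smul, phi_of]

lemma emb_of {X : Type*} (w : FreeMonoid X) :
    emb K (MonoidAlgebra.of K (FreeMonoid X) w) =
      MonoidAlgebra.of K (FreeMonoid (Option X)) (embWord w) := by
  rw [emb, MonoidAlgebra.lift_of]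
  rfl

lemma emb_single {X : Type*} (w : FreeMonoid X) (c : K) :
    emb K (MonoidAlgebra.single w c) = MonoidAlgebra.single (embWord w) c := by
  have h1 : (MonoidAlgebra.single w c : FA K X) =
      c • MonoidAlgebra.of K (FreeMonoid X) w := by
    rw [MonoidAlgebra.of_apply, MonoidAlgebra.smul_single', mul_one]
  have h2 : (MonoidAlgebra.single (embWord w) c : FA K (Option X)) =
      c • MonoidAlgebra.of K (FreeMonoid (Option X)) (embWord w) := by
    rw [MonoidAlgebra.of_apply, MonoidAlgebra.smul_single', mul_one]
  rw [h1, h2, map_smul, emb_of]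

lemma finsupp_eq_sum_single {Y : Type*} (f : FA K Y) :
    f = ∑ w ∈ f.coeff.support, MonoidAlgebra.single w (f.coeff w) := by
  conv_lhs => rw [← MonoidAlgebra.sum_coeff_single f]
  rfl

lemma phi_eq_sum {X : Type*} (f : FA K (Option X)) :
    phi K f = ∑ w ∈ f.coeff.support, MonoidAlgebra.single (embWord (stripW w)) (f.coeff w) := by
  conv_lhs => rw [finsupp_eq_sum_single (K := K) f]
  rw [map_sum]
  exact Finset.sum_congr rfl fun w _ => phi_single w (f.coeff w)

lemma emb_eq_sum {X : Type*} (f : FA K X) :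
    emb K f = ∑ w ∈ f.coeff.support, MonoidAlgebra.single (embWord w) (f.coeff w) := by
  conv_lhs => rw [finsupp_eq_sum_single (K := K) f]
  rw [map_sum]
  exact Finset.sum_congr rfl fun w _ => emb_single w (f.coeff w)

lemma sum_single_apply {Y A : Type*} (s : Finset A) (k : A → FreeMonoid Y) (c : A → K)
    (v : FreeMonoid Y) :
    (∑ a ∈ s, (MonoidAlgebra.single (k a) (c a) : FA K Y)).coeff v =
      ∑ a ∈ s, if k a = v then c a else 0 := by
  rw [MonoidAlgebra.coeff_sum, Finset.sum_apply']
  refine Finset.sum_congr rfl fun a _ => ?_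
  rw [MonoidAlgebra.coeff_single, Finsupp.single_apply]

lemma emb_apply_embWord {X : Type*} (f : FA K X) (w : FreeMonoid X) :
    (emb K f).coeff (embWord w) = f.coeff w := by
  rw [emb_eq_sum, sum_single_apply]
  by_cases hw : w ∈ f.coeff.support
  · rw [Finset.sum_eq_single w]
    · simp
    · intro b hb hbw
      rw [if_neg (fun hc => hbw (embWord_injective hc))]
    · intro h; exact absurd hw h
  · rw [Finset.sum_eq_zero, (Finsupp.notMem_support_iff.1 hw)]
    intro b hb
    rw [if_neg]
    intro hc
    exact hw (by rw [← embWord_injective hc]; exact hb)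

lemma homComp_apply {Y : Type*} (d : ℕ) (f : FA K Y) (w : FreeMonoid Y) :
    (homComp K d f).coeff w = if FreeMonoid.length w = d then f.coeff w else 0 := by
  rw [homComp]
  refine Eq.trans (sum_single_apply _ (fun w => w) (fun w => f.coeff w) w) ?_
  rw [Finset.sum_ite_eq' _ w (fun w' => f.coeff w')]
  by_cases hl : FreeMonoid.length w = d
  · by_cases hw : w ∈ f.coeff.support
    · rw [if_pos (Finset.mem_filter.2 ⟨hw, hl⟩), if_pos hl]
    · have hnm : w ∉ f.coeff.support.filter (fun w => FreeMonoid.length w = d) :=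
        fun hc => hw (Finset.mem_filter.1 hc).1
      rw [if_neg hnm, if_pos hl, Finsupp.notMem_support_iff.1 hw]
  · have hnm : w ∉ f.coeff.support.filter (fun w => FreeMonoid.length w = d) :=
      fun hc => hl (Finset.mem_filter.1 hc).2
    rw [if_neg hnm, if_neg hl]

lemma homComp_zero {Y : Type*} (d : ℕ) : homComp K d (0 : FA K Y) = 0 := by
  ext w
  rw [homComp_apply]
  simp

lemma homComp_add {Y : Type*} (d : ℕ) (f g : FA K Y) :
    homComp K d (f + g) = homComp K d f + homComp K d g := by
  ext w
  rw [MonoidAlgebra.coeff_add, Finsupp.add_apply, homComp_apply, homComp_apply, homComp_apply,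
    MonoidAlgebra.coeff_add, Finsupp.add_apply]
  split <;> simp

lemma homComp_neg {Y : Type*} (d : ℕ) (f : FA K Y) :
    homComp K d (-f) = -homComp K d f := by
  ext w
  rw [MonoidAlgebra.coeff_neg, Finsupp.neg_apply, homComp_apply, homComp_apply,
    MonoidAlgebra.coeff_neg, Finsupp.neg_apply]
  split <;> simp

lemma homComp_of_isHomog {Y : Type*} {d : ℕ} {f : FA K Y} (h : IsHomog K d f) :
    homComp K d f = f := by
  ext w
  rw [homComp_apply]
  split_ifs with hl
  · rfl
  · by_cases hw : w ∈ f.coeff.support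
    · exact absurd (h w hw) hl
    · rw [Finsupp.notMem_support_iff.1 hw]

lemma homComp_of_isHomog_ne {Y : Type*} {d d' : ℕ} {f : FA K Y} (h : IsHomog K d' f)
    (hne : d ≠ d') : homComp K d f = 0 := by
  ext w
  rw [homComp_apply]
  split_ifs with hl
  · by_cases hw : w ∈ f.coeff.support
    · exact absurd (h w hw) (by omega)
    · rw [Finsupp.notMem_support_iff.1 hw]; rfl
  · rfl

lemma mem_support_homComp {Y : Type*} {d : ℕ} {f : FA K Y} {w : FreeMonoid Y} :
    w ∈ (homComp K d f).coeff.support ↔ w ∈ f.coeff.support ∧ FreeMonoid.length w = d := by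
  rw [Finsupp.mem_support_iff, homComp_apply, Finsupp.mem_support_iff]
  split_ifs with hl
  · simp [hl]
  · simp [hl]

lemma homComp_single {Y : Type*} (d : ℕ) (v : FreeMonoid Y) (b : K) :
    homComp K d (MonoidAlgebra.single v b) =
      if FreeMonoid.length v = d then MonoidAlgebra.single v b else 0 := by
  by_cases hv : FreeMonoid.length v = d
  · rw [if_pos hv]
    refine homComp_of_isHomog fun w hw => ?_
    have := Finsupp.support_single_subset hw
    rw [Finset.mem_singleton] at this
    subst this; exact hv
  · rw [if_neg hv]
    refine homComp_of_isHomog_ne (d' := FreeMonoid.length v) (fun w hw => ?_) ?_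
    · have := Finsupp.support_single_subset hw
      rw [Finset.mem_singleton] at this
      subst this; rfl
    · omega

lemma homComp_single_mul {X : Type*} (u : FreeMonoid (Option X)) (c : K)
    (h : FA K (Option X)) (d : ℕ) (hle : FreeMonoid.length u ≤ d) :
    homComp K d (MonoidAlgebra.single u c * h) =
      MonoidAlgebra.single u c * homComp K (d - FreeMonoid.length u) h := by
  induction h using MonoidAlgebra.induction with
  | zero => rw [mul_zero, homComp_zero, homComp_zero, mul_zero]
  | single_add w b h hw hb ih =>
    rw [mul_add, homComp_add, homComp_add, mul_add, ih]
    congr 1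
    rw [MonoidAlgebra.single_mul_single, homComp_single, homComp_single,
      FreeMonoid.length_mul]
    by_cases hc : FreeMonoid.length u + FreeMonoid.length w = d
    · rw [if_pos hc, if_pos (by omega), MonoidAlgebra.single_mul_single]
    · rw [if_neg hc, if_neg (by omega), mul_zero]

lemma homComp_single_mul_of_lt {X : Type*} (u : FreeMonoid (Option X)) (c : K)
    (h : FA K (Option X)) (d : ℕ) (hlt : d < FreeMonoid.length u) :
    homComp K d (MonoidAlgebra.single u c * h) = 0 := by
  induction h using MonoidAlgebra.induction with
  | zero => rw [mul_zero, homComp_zero]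
  | single_add w b h hw hb ih =>
    rw [mul_add, homComp_add, ih, add_zero, MonoidAlgebra.single_mul_single,
      homComp_single, FreeMonoid.length_mul, if_neg (by omega)]

lemma homComp_mul_single {X : Type*} (u : FreeMonoid (Option X)) (c : K)
    (h : FA K (Option X)) (d : ℕ) (hle : FreeMonoid.length u ≤ d) :
    homComp K d (h * MonoidAlgebra.single u c) =
      homComp K (d - FreeMonoid.length u) h * MonoidAlgebra.single u c := by
  induction h using MonoidAlgebra.induction with
  | zero => rw [zero_mul, homComp_zero, homComp_zero, zero_mul]
  | single_add w b h hw hb ih =>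
    rw [add_mul, homComp_add, homComp_add, add_mul, ih]
    congr 1
    rw [MonoidAlgebra.single_mul_single, homComp_single, homComp_single,
      FreeMonoid.length_mul]
    by_cases hc : FreeMonoid.length w + FreeMonoid.length u = d
    · rw [if_pos hc, if_pos (by omega), MonoidAlgebra.single_mul_single]
    · rw [if_neg hc, if_neg (by omega), zero_mul]

lemma homComp_mul_single_of_lt {X : Type*} (u : FreeMonoid (Option X)) (c : K)
    (h : FA K (Option X)) (d : ℕ) (hlt : d < FreeMonoid.length u) :
    homComp K d (h * MonoidAlgebra.single u c) = 0 := by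
  induction h using MonoidAlgebra.induction with
  | zero => rw [zero_mul, homComp_zero]
  | single_add w b h hw hb ih =>
    rw [add_mul, homComp_add, ih, add_zero, MonoidAlgebra.single_mul_single,
      homComp_single, FreeMonoid.length_mul, if_neg (by omega)]

end Chunk3

section Chunk4

open scoped Classical

variable {K : Type*} [Field K]

lemma hstarIdeal_phi_homComp {I : TwoSidedIdeal (FA K ℕ)} {f : FA K (Option ℕ)}
    (hf : f ∈ hstarIdeal K I) (d : ℕ) :
    ∃ f0 ∈ I, phi K (homComp K d f) = emb K f0 := by
  set S : Set (FA K (Option ℕ)) :=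
    {h | ∀ d, ∃ f0 ∈ I, phi K (homComp K d h) = emb K f0} with hS
  have hzero : (0 : FA K (Option ℕ)) ∈ S := fun d =>
    ⟨0, I.zero_mem, by rw [homComp_zero, map_zero, map_zero]⟩
  have hadd : ∀ {x y : FA K (Option ℕ)}, x ∈ S → y ∈ S → x + y ∈ S := by
    intro x y hx hy d
    obtain ⟨fx, hfx, hex⟩ := hx d
    obtain ⟨fy, hfy, hey⟩ := hy d
    exact ⟨fx + fy, I.add_mem hfx hfy, by rw [homComp_add, map_add, hex, hey, map_add]⟩
  have hneg : ∀ {x : FA K (Option ℕ)}, x ∈ S → -x ∈ S := by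
    intro x hx d
    obtain ⟨fx, hfx, hex⟩ := hx d
    exact ⟨-fx, I.neg_mem hfx, by rw [homComp_neg, map_neg, hex, map_neg]⟩
  have hsl : ∀ (u : FreeMonoid (Option ℕ)) (c : K) {y : FA K (Option ℕ)}, y ∈ S →
      MonoidAlgebra.single u c * y ∈ S := by
    intro u c y hy d
    by_cases hle : FreeMonoid.length u ≤ d
    · obtain ⟨fy, hfy, hey⟩ := hy (d - FreeMonoid.length u)
      refine ⟨MonoidAlgebra.single (stripW u) c * fy, I.mul_mem_left _ _ hfy, ?_⟩
      rw [homComp_single_mul u c y d hle, map_mul, hey, phi_single, map_mul, emb_single]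
    · exact ⟨0, I.zero_mem, by
        rw [homComp_single_mul_of_lt u c y d (by omega), map_zero, map_zero]⟩
  have hsr : ∀ (u : FreeMonoid (Option ℕ)) (c : K) {y : FA K (Option ℕ)}, y ∈ S →
      y * MonoidAlgebra.single u c ∈ S := by
    intro u c y hy d
    by_cases hle : FreeMonoid.length u ≤ d
    · obtain ⟨fy, hfy, hey⟩ := hy (d - FreeMonoid.length u)
      refine ⟨fy * MonoidAlgebra.single (stripW u) c, I.mul_mem_right _ _ hfy, ?_⟩
      rw [homComp_mul_single u c y d hle, map_mul, hey, phi_single, map_mul, emb_single]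
    · exact ⟨0, I.zero_mem, by
        rw [homComp_mul_single_of_lt u c y d (by omega), map_zero, map_zero]⟩
  have hmull : ∀ {x y : FA K (Option ℕ)}, y ∈ S → x * y ∈ S := by
    intro x y hy
    induction x using MonoidAlgebra.induction with
    | zero => rw [zero_mul]; exact hzero
    | single_add u b g hu hb ih => rw [add_mul]; exact hadd (hsl u b hy) ih
  have hmulr : ∀ {x y : FA K (Option ℕ)}, x ∈ S → x * y ∈ S := by
    intro x y hx
    induction y using MonoidAlgebra.induction with
    | zero => rw [mul_zero]; exact hzero
    | single_add u b g hu hb ih => rw [mul_add]; exact hadd (hsr u b hx) ih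
  have hgen : {g : FA K (Option ℕ) | (∃ d, IsHomog K d g) ∧ ∃ f ∈ I, phi K g = emb K f} ⊆
      (TwoSidedIdeal.mk' S hzero hadd hneg hmull hmulr : Set (FA K (Option ℕ))) := by
    rintro g ⟨⟨d0, hhom⟩, f1, hf1, hphi⟩
    rw [SetLike.mem_coe, TwoSidedIdeal.mem_mk']
    intro d
    by_cases hd : d = d0
    · subst hd; rw [homComp_of_isHomog hhom]; exact ⟨f1, hf1, hphi⟩
    · rw [homComp_of_isHomog_ne hhom hd]
      exact ⟨0, I.zero_mem, by rw [map_zero, map_zero]⟩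
  rw [hstarIdeal] at hf
  have := TwoSidedIdeal.mem_span_iff.1 hf _ hgen
  rw [TwoSidedIdeal.mem_mk'] at this
  exact this d

end Chunk4

section Chunk5

open scoped Classical

variable {K : Type*} [Field K]

lemma toList_pow_of {α : Type*} (a : α) (k : ℕ) :
    FreeMonoid.toList ((FreeMonoid.of a) ^ k) = List.replicate k a := by
  induction k with
  | zero => rfl
  | succ k ih =>
    rw [pow_succ, FreeMonoid.toList_mul, ih, FreeMonoid.toList_of, List.replicate_succ']

/-- The homogenizing monomial map. -/
def keyW (e : ℕ) (w : FreeMonoid ℕ) : FreeMonoid (Option ℕ) :=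
  embWord w * (FreeMonoid.of (none : Option ℕ)) ^ (e - FreeMonoid.length w)

lemma toList_keyW (e : ℕ) (w : FreeMonoid ℕ) :
    FreeMonoid.toList (keyW e w) =
      (FreeMonoid.toList w).map some ++
        List.replicate (e - FreeMonoid.length w) (none : Option ℕ) := by
  rw [keyW, FreeMonoid.toList_mul, toList_pow_of, toList_embWord]

lemma toList_stripW' {X : Type*} (w : FreeMonoid (Option X)) :
    FreeMonoid.toList (stripW w) = (FreeMonoid.toList w).reduceOption := by
  conv_lhs => rw [← FreeMonoid.ofList_toList w]
  exact toList_stripW _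

lemma stripW_keyW (e : ℕ) (w : FreeMonoid ℕ) : stripW (keyW e w) = w := by
  have h := toList_stripW' (keyW e w)
  rw [toList_keyW, List.reduceOption_append, reduceOption_map_some',
    reduceOption_replicate_none', List.append_nil] at h
  calc stripW (keyW e w) = FreeMonoid.ofList (FreeMonoid.toList (stripW (keyW e w))) :=
        (FreeMonoid.ofList_toList _).symm
    _ = w := by rw [h, FreeMonoid.ofList_toList]

lemma keyW_injective (e : ℕ) : Function.Injective (keyW e) := by
  intro a b h
  have := congrArg stripW h
  rwa [stripW_keyW, stripW_keyW] at this

lemma hstar_eq_sum (g : FA K ℕ) :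
    hstar K g = ∑ w ∈ g.coeff.support, MonoidAlgebra.single (keyW (degF K g) w) (g.coeff w) := rfl

lemma hstar_apply_keyW (g : FA K ℕ) (w : FreeMonoid ℕ) :
    (hstar K g).coeff (keyW (degF K g) w) = g.coeff w := by
  rw [hstar_eq_sum, sum_single_apply]
  by_cases hw : w ∈ g.coeff.support
  · rw [Finset.sum_eq_single w]
    · rw [if_pos rfl]
    · intro b hb hbw
      rw [if_neg (fun hc => hbw (keyW_injective _ hc))]
    · intro h; exact absurd hw h
  · rw [Finset.sum_eq_zero, (Finsupp.notMem_support_iff.1 hw)]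
    intro b hb
    rw [if_neg]
    intro hc
    exact hw (by rw [← keyW_injective _ hc]; exact hb)

lemma support_hstar {g : FA K ℕ} {u : FreeMonoid (Option ℕ)} (hu : u ∈ (hstar K g).coeff.support) :
    ∃ w ∈ g.coeff.support, u = keyW (degF K g) w := by
  by_contra hc
  push_neg at hc
  have : (hstar K g).coeff u = 0 := by
    rw [hstar_eq_sum, sum_single_apply, Finset.sum_eq_zero]
    intro b hb
    rw [if_neg (fun he => hc b hb he.symm)]
  exact Finsupp.mem_support_iff.1 hu this

lemma length_keyW {g : FA K ℕ} {w : FreeMonoid ℕ} (hw : w ∈ g.coeff.support) :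
    FreeMonoid.length (keyW (degF K g) w) = degF K g := by
  have hle : FreeMonoid.length w ≤ degF K g := Finset.le_sup hw
  have : (FreeMonoid.toList (keyW (degF K g) w)).length =
      (FreeMonoid.toList w).length + (degF K g - FreeMonoid.length w) := by
    rw [toList_keyW, List.length_append, List.length_map, List.length_replicate]
  have hlw : (FreeMonoid.toList w).length = FreeMonoid.length w := rfl
  have hlk : (FreeMonoid.toList (keyW (degF K g) w)).length =
      FreeMonoid.length (keyW (degF K g) w) := rfl
  omega

lemma isHomog_hstar (g : FA K ℕ) : IsHomog K (degF K g) (hstar K g) := by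
  intro u hu
  obtain ⟨w, hw, rfl⟩ := support_hstar hu
  exact length_keyW hw

lemma phi_hstar (g : FA K ℕ) : phi K (hstar K g) = emb K g := by
  rw [hstar_eq_sum, map_sum, emb_eq_sum]
  exact Finset.sum_congr rfl fun w _ => by rw [phi_single, stripW_keyW]

lemma hstar_mem {I : TwoSidedIdeal (FA K ℕ)} {g : FA K ℕ} (hg : g ∈ I) :
    hstar K g ∈ hstarIdeal K I := by
  rw [hstarIdeal]
  exact TwoSidedIdeal.subset_span ⟨⟨degF K g, isHomog_hstar g⟩, g, hg, phi_hstar g⟩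

lemma hstar_ne_zero {g : FA K ℕ} (hg : g ≠ 0) : hstar K g ≠ 0 := by
  obtain ⟨w, hw⟩ := Finsupp.support_nonempty_iff.2 (fun h => hg (MonoidAlgebra.coeff_injective h))
  intro hc
  have := hstar_apply_keyW (K := K) g w
  rw [hc] at this
  exact Finsupp.mem_support_iff.1 hw (by simpa using this.symm)

lemma length_isLMF_eq_degF {g : FA K ℕ} (hg : g ≠ 0) {wg : FreeMonoid ℕ}
    (h : IsLMF K (grRightLex (· < ·) 0) g wg) : FreeMonoid.length wg = degF K g := by
  obtain ⟨w'', hmem, hsup⟩ := Finset.exists_mem_eq_sup g.coeff.support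
    (Finsupp.support_nonempty_iff.2 (fun h => hg (MonoidAlgebra.coeff_injective h))) FreeMonoid.length
  have hle : FreeMonoid.length wg ≤ degF K g := Finset.le_sup h.1
  rw [degF] at hle ⊢
  rw [hsup] at hle ⊢
  by_contra hne
  have hlt2 : FreeMonoid.length wg < FreeMonoid.length w'' := by omega
  have hne2 : w'' ≠ wg := fun hc => by rw [hc] at hlt2; omega
  exact grl_asymm (fun a : ℕ => Nat.lt_irrefl a) (fun a b c => Nat.lt_trans)
    (h.2 w'' hmem hne2) (Or.inl hlt2)

lemma length_embWord {X : Type*} (w : FreeMonoid X) :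
    FreeMonoid.length (embWord w) = FreeMonoid.length w := by
  have h1 : FreeMonoid.length (embWord w) = ((FreeMonoid.toList w).map some).length := rfl
  rw [h1, List.length_map]
  rfl

/- getD lemmas for `map some w ++ replicate k none` -/
lemma getD_msr_lt {w : List ℕ} {k s : ℕ} (h : s < w.length) :
    (w.map some ++ List.replicate k none).getD s none = some (w.getD s 0) := by
  rw [List.getD_eq_getElem _ _ (by rw [List.length_append, List.length_map]; omega),
    List.getElem_append_left (by rw [List.length_map]; omega), List.getElem_map,
    List.getD_eq_getElem _ _ h]

lemma getD_msr_ge {w : List ℕ} {k s : ℕ} (h : w.length ≤ s) :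
    (w.map some ++ List.replicate k none).getD s none = none := by
  by_cases h2 : s < w.length + k
  · have h3 : s < (w.map some ++ List.replicate k none).length := by
      rw [List.length_append, List.length_map, List.length_replicate]; omega
    have h4 : (w.map some).length ≤ s := by rw [List.length_map]; omega
    rw [List.getD_eq_getElem _ _ h3, List.getElem_append_right h4]
    simp
  · have h3 : (w.map some ++ List.replicate k none).length ≤ s := by
      rw [List.length_append, List.length_map, List.length_replicate]; omega
    rw [List.getD_eq_default _ _ h3]

lemma isLMF_hstar {g : FA K ℕ} (hg : g ≠ 0) {wg : FreeMonoid ℕ}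
    (hlm : IsLMF K (grRightLex (· < ·) 0) g wg) :
    IsLMF K (grRightLex optLt none) (hstar K g) (embWord wg) := by
  have hdeg : FreeMonoid.length wg = degF K g := length_isLMF_eq_degF hg hlm
  have hkey : keyW (degF K g) wg = embWord wg := by
    rw [keyW, ← hdeg, Nat.sub_self, pow_zero, mul_one]
  constructor
  · rw [Finsupp.mem_support_iff, ← hkey, hstar_apply_keyW]
    exact Finsupp.mem_support_iff.1 hlm.1
  · intro u hu hne
    obtain ⟨w', hw', rfl⟩ := support_hstar hu
    have hne' : w' ≠ wg := fun hc => hne (by rw [hc, hkey])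
    have hlt : grRightLex (· < ·) 0 w' wg := hlm.2 w' hw' hne'
    have hlenk : FreeMonoid.length (keyW (degF K g) w') = degF K g := length_keyW hw'
    have hlenw : FreeMonoid.length (embWord wg) = degF K g := by
      rw [length_embWord, hdeg]
    have hlw' : (FreeMonoid.toList w').length = FreeMonoid.length w' := rfl
    have hlwg : (FreeMonoid.toList wg).length = FreeMonoid.length wg := rfl
    rcases hlt with hl | ⟨hleq, q, hq, hqlt, hqb⟩
    · -- shorter word: the key ends with `none`, compare at position `degF - 1`
      right
      refine ⟨by omega, degF K g - 1, by omega, ?_, ?_⟩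
      · rw [toList_keyW, toList_embWord, getD_msr_ge (by omega)]
        have : (FreeMonoid.toList wg).map some ++
            List.replicate 0 (none : Option ℕ) = (FreeMonoid.toList wg).map some := by simp
        rw [← this, getD_msr_lt (by omega)]
        trivial
      · intro s hs
        rw [List.getD_eq_default _ _ (by rw [toList_keyW]; simp; omega),
          List.getD_eq_default _ _ (by rw [toList_embWord]; simp; omega)]
    · -- equal length: key = embWord w', compare at position q
      have hkey' : keyW (degF K g) w' = embWord w' := by
        rw [keyW, show degF K g - FreeMonoid.length w' = 0 by omega, pow_zero, mul_one]
      right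
      refine ⟨by omega, q, by omega, ?_, ?_⟩
      · rw [hkey', toList_embWord, toList_embWord]
        have h1 : ((FreeMonoid.toList w').map some ++ List.replicate 0 (none : Option ℕ))
            = (FreeMonoid.toList w').map some := by simp
        have h2 : ((FreeMonoid.toList wg).map some ++ List.replicate 0 (none : Option ℕ))
            = (FreeMonoid.toList wg).map some := by simp
        rw [← h1, ← h2, getD_msr_lt (by omega), getD_msr_lt (by omega)]
        simpa [optLt] using hqlt
      · intro s hs
        rw [hkey', toList_embWord, toList_embWord]
        by_cases hsl : s < FreeMonoid.length wg
        · have h1 : ((FreeMonoid.toList w').map some ++ List.replicate 0 (none : Option ℕ))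
              = (FreeMonoid.toList w').map some := by simp
          have h2 : ((FreeMonoid.toList wg).map some ++ List.replicate 0 (none : Option ℕ))
              = (FreeMonoid.toList wg).map some := by simp
          rw [← h1, ← h2, getD_msr_lt (by omega), getD_msr_lt (by omega), hqb s hs]
        · rw [List.getD_eq_default _ _ (by simp; omega),
            List.getD_eq_default _ _ (by simp; omega)]

/-- The commutator `[t, x]`. -/
lemma comm_eq (x : ℕ) :
    tv K * gen K (some x) - gen K (some x) * tv K =
      MonoidAlgebra.single (FreeMonoid.ofList [none, some x]) 1 -
        MonoidAlgebra.single (FreeMonoid.ofList [some x, none]) 1 := by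
  rw [tv, gen, gen, MonoidAlgebra.of_apply, MonoidAlgebra.of_apply,
    MonoidAlgebra.single_mul_single, MonoidAlgebra.single_mul_single, one_mul]
  rfl

lemma comm_words_ne (x : ℕ) :
    FreeMonoid.ofList [(none : Option ℕ), some x] ≠ FreeMonoid.ofList [some x, none] := by
  intro hc
  have := congrArg FreeMonoid.toList hc
  simp at this

lemma comm_apply_A (x : ℕ) :
    ((tv K * gen K (some x) - gen K (some x) * tv K : FA K (Option ℕ))).coeff
      (FreeMonoid.ofList [(none : Option ℕ), some x]) = 1 := by
  rw [comm_eq, MonoidAlgebra.coeff_sub, Finsupp.sub_apply, MonoidAlgebra.coeff_single,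
    MonoidAlgebra.coeff_single, Finsupp.single_apply, Finsupp.single_apply,
    if_pos rfl, if_neg (Ne.symm (comm_words_ne x))]
  simp

lemma comm_ne_zero (x : ℕ) : tv K * gen K (some x) - gen K (some x) * tv K ≠ 0 := by
  intro hc
  have := comm_apply_A (K := K) x
  rw [hc] at this
  simp at this

lemma comm_support_subset (x : ℕ) :
    (tv K * gen K (some x) - gen K (some x) * tv K).coeff.support ⊆
      {FreeMonoid.ofList [(none : Option ℕ), some x], FreeMonoid.ofList [some x, none]} := by
  rw [comm_eq, MonoidAlgebra.coeff_sub]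
  refine (Finsupp.support_sub).trans ?_
  intro a ha
  rcases Finset.mem_union.1 ha with h | h
  · exact Finset.mem_insert.2 (Or.inl (Finset.mem_singleton.1
      (Finsupp.support_single_subset h)))
  · exact Finset.mem_insert.2 (Or.inr (Finsupp.support_single_subset h))

lemma isLMF_comm (x : ℕ) :
    IsLMF K (grRightLex optLt none) (tv K * gen K (some x) - gen K (some x) * tv K)
      (FreeMonoid.ofList [none, some x]) := by
  constructor
  · rw [Finsupp.mem_support_iff, comm_apply_A]
    exact one_ne_zero
  · intro w' hw' hne
    have := comm_support_subset (K := K) x hw'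
    rcases Finset.mem_insert.1 this with rfl | h
    · exact absurd rfl hne
    · rw [Finset.mem_singleton] at h
      subst h
      right
      refine ⟨rfl, 1, by norm_num, by trivial, ?_⟩
      intro s hs
      rw [List.getD_eq_default _ _ (by simp; omega), List.getD_eq_default _ _ (by simp; omega)]

lemma phi_comm (x : ℕ) : phi K (tv K * gen K (some x) - gen K (some x) * tv K) = 0 := by
  have h1 : phi K (tv K : FA K (Option ℕ)) = 1 := by
    rw [tv, gen, phi_of]
    rw [show stripW (FreeMonoid.of (none : Option ℕ)) = 1 from FreeMonoid.lift_eval_of _ _,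
      map_one, map_one]
  have h2 : phi K (gen K (some x)) = gen K (some x) := by
    rw [gen, phi_of]
    rw [show stripW (FreeMonoid.of (some x : Option ℕ)) = FreeMonoid.of x from
      FreeMonoid.lift_eval_of _ _]
    rfl
  rw [map_sub, map_mul, map_mul, h1, h2, one_mul, mul_one, sub_self]

lemma comm_isHomog (x : ℕ) :
    IsHomog K 2 (tv K * gen K (some x) - gen K (some x) * tv K) := by
  intro w hw
  have := comm_support_subset (K := K) x hw
  rcases Finset.mem_insert.1 this with rfl | h
  · rfl
  · rw [Finset.mem_singleton] at h; subst h; rfl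

lemma comm_mem {I : TwoSidedIdeal (FA K ℕ)} (x : ℕ) :
    tv K * gen K (some x) - gen K (some x) * tv K ∈ hstarIdeal K I := by
  rw [hstarIdeal]
  exact TwoSidedIdeal.subset_span
    ⟨⟨2, comm_isHomog x⟩, 0, I.zero_mem, by rw [phi_comm, map_zero]⟩

end Chunk5

section Chunk6

open scoped Classical

variable {K : Type*} [Field K]

lemma drop_eq_of_getD_eq {α : Type*} {dflt : α} {a b : List α} (hlen : a.length = b.length)
    {p : ℕ} (h : ∀ s, p < s → a.getD s dflt = b.getD s dflt) :
    a.drop (p + 1) = b.drop (p + 1) := by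
  apply List.ext_getElem (by simp [hlen])
  intro i h1 h2
  have ha : p + 1 + i < a.length := by
    rw [List.length_drop] at h1; omega
  have hb : p + 1 + i < b.length := by omega
  have h3 := h (p + 1 + i) (by omega)
  rw [List.getD_eq_getElem _ _ ha, List.getD_eq_getElem _ _ hb] at h3
  rw [List.getElem_drop, List.getElem_drop]
  exact h3

lemma getD_eq_of_drop_eq {α : Type*} {dflt : α} {a b : List α} (hlen : a.length = b.length)
    {p : ℕ} (h : a.drop (p + 1) = b.drop (p + 1)) :
    ∀ s, p < s → a.getD s dflt = b.getD s dflt := by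
  intro s hs
  by_cases hsl : s < a.length
  · have hsb : s < b.length := by omega
    have hh1 : s - (p + 1) < (a.drop (p + 1)).length := by rw [List.length_drop]; omega
    have hh2 : s - (p + 1) < (b.drop (p + 1)).length := by rw [List.length_drop]; omega
    have h1 : (a.drop (p + 1))[s - (p + 1)]'hh1 = (b.drop (p + 1))[s - (p + 1)]'hh2 := by
      simp only [h]
    rw [List.getElem_drop, List.getElem_drop] at h1
    have he : p + 1 + (s - (p + 1)) = s := by omega
    have h4 : a.getD (p + 1 + (s - (p + 1))) dflt = b.getD (p + 1 + (s - (p + 1))) dflt := by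
      rw [List.getD_eq_getElem _ _ (by omega), List.getD_eq_getElem _ _ (by omega)]
      exact h1
    rw [he] at h4
    exact h4
  · rw [List.getD_eq_default _ _ (by omega), List.getD_eq_default _ _ (by omega)]

lemma strip_decomp {u : List (Option ℕ)} {w : List ℕ} {k p : ℕ}
    (hp : p < w.length)
    (hdrop : u.drop (p + 1) = (w.map some ++ List.replicate k none).drop (p + 1)) :
    u.reduceOption = (u.take (p + 1)).reduceOption ++ w.drop (p + 1) := by
  have h1 : (w.map some ++ List.replicate k none).drop (p + 1)
      = (w.drop (p + 1)).map some ++ List.replicate k none := by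
    rw [List.drop_append]
    have he : p + 1 - (w.map some).length = 0 := by rw [List.length_map]; omega
    rw [he, List.drop_zero]
    congr 1
    rw [List.map_drop]
  conv_lhs => rw [← List.take_append_drop (p + 1) u]
  rw [List.reduceOption_append, hdrop, h1, List.reduceOption_append,
    reduceOption_map_some', reduceOption_replicate_none', List.append_nil]

lemma lemA {w : List ℕ} {k : ℕ} {u : List (Option ℕ)}
    (hlen : u.length = w.length + k) (hstrip : u.reduceOption = w)
    (hne : u ≠ w.map some ++ List.replicate k none) :
    grRightLex optLt none (FreeMonoid.ofList (w.map some ++ List.replicate k none))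
      (FreeMonoid.ofList u) := by
  have hlm : (w.map some ++ List.replicate k none).length = w.length + k := by simp
  obtain ⟨p, hplen, hpne, hpb⟩ := exists_maxDiff (none : Option ℕ)
    (show (w.map some ++ List.replicate k none).length = u.length by omega)
    (fun hc => hne hc.symm)
  by_cases hp : p < w.length
  · exfalso
    have hdrop : u.drop (p + 1) = (w.map some ++ List.replicate k none).drop (p + 1) :=
      drop_eq_of_getD_eq (by omega) (fun s hs => (hpb s hs).symm)
    have hdec := strip_decomp hp hdrop
    rw [hstrip] at hdec
    have hlt : (u.take (p + 1)).reduceOption.length = p + 1 := by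
      have := congrArg List.length hdec
      rw [List.length_append, List.length_drop] at this
      omega
    have htake : u.take (p + 1) = ((u.take (p + 1)).reduceOption).map some :=
      eq_map_some_of_length_reduceOption _ (by rw [hlt, List.length_take]; omega)
    have hsteq : (u.take (p + 1)).reduceOption = w.take (p + 1) := by
      have h8 : (u.take (p + 1)).reduceOption ++ w.drop (p + 1) =
          w.take (p + 1) ++ w.drop (p + 1) := by
        rw [List.take_append_drop, ← hdec]
      exact List.append_inj_left h8 (by rw [hlt, List.length_take]; omega)
    have hup : u.getD p none = some (w.getD p 0) := by
      have h2 : (u.take (p + 1)).getD p none = u.getD p none := by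
        rw [List.getD_eq_getElem _ _ (by rw [List.length_take]; omega),
          List.getD_eq_getElem _ _ (by omega : p < u.length)]
        simp
      rw [← h2, htake, hsteq]
      rw [List.getD_eq_getElem _ _ (by rw [List.length_map, List.length_take]; omega),
        List.getElem_map, List.getD_eq_getElem _ _ (by omega : p < w.length)]
      simp
    exact hpne (by rw [getD_msr_lt hp, hup])
  · have hmp : (w.map some ++ List.replicate k none).getD p none = none :=
      getD_msr_ge (by omega)
    rcases hcase : u.getD p none with _ | z
    · exact absurd (by rw [hmp, hcase]) hpne
    · right
      refine ⟨by rw [FM_length_ofList, FM_length_ofList]; omega, p, ?_, ?_, ?_⟩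
      · rw [FM_length_ofList]; omega
      · rw [FM_toList_ofList', FM_toList_ofList', hmp, hcase]; trivial
      · intro s hs; rw [FM_toList_ofList', FM_toList_ofList']; exact hpb s hs

lemma lemB {w w' : List ℕ} {k : ℕ} {u : List (Option ℕ)}
    (hlen : u.length = w.length + k) (hstrip : u.reduceOption = w')
    (hless : grRightLex (· < ·) (0 : ℕ) (FreeMonoid.ofList w) (FreeMonoid.ofList w')) :
    grRightLex optLt none (FreeMonoid.ofList (w.map some ++ List.replicate k none))
      (FreeMonoid.ofList u) := by
  have hlm : (w.map some ++ List.replicate k none).length = w.length + k := by simp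
  have hne : u ≠ w.map some ++ List.replicate k none := by
    intro hc
    rw [hc, List.reduceOption_append, reduceOption_map_some', reduceOption_replicate_none',
      List.append_nil] at hstrip
    rw [hstrip] at hless
    exact grl_asymm (fun a : ℕ => Nat.lt_irrefl a) (fun a b c => Nat.lt_trans) hless hless
  obtain ⟨p, hplen, hpne, hpb⟩ := exists_maxDiff (none : Option ℕ)
    (show (w.map some ++ List.replicate k none).length = u.length by omega)
    (fun hc => hne hc.symm)
  by_cases hp : p < w.length
  · have hdrop : u.drop (p + 1) = (w.map some ++ List.replicate k none).drop (p + 1) :=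
      drop_eq_of_getD_eq (by omega) (fun s hs => (hpb s hs).symm)
    have hdec := strip_decomp hp hdrop
    rw [hstrip] at hdec
    have hlt0 : (u.take (p + 1)).reduceOption.length ≤ p + 1 :=
      (List.reduceOption_length_le _).trans (by rw [List.length_take]; omega)
    have hlw' : w'.length = (u.take (p + 1)).reduceOption.length + (w.length - (p + 1)) := by
      have := congrArg List.length hdec
      rw [List.length_append, List.length_drop] at this
      omega
    rcases hless with hl | ⟨hleq0, q, hq0, hqlt0, hqb0⟩
    · exfalso
      have hl' : w.length < w'.length := hl
      omega
    · have hleq : w.length = w'.length := hleq0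
      have hq : q < w.length := hq0
      have hqlt : w.getD q 0 < w'.getD q 0 := hqlt0
      have hqb : ∀ s, q < s → w.getD s 0 = w'.getD s 0 := hqb0
      have hlt : (u.take (p + 1)).reduceOption.length = p + 1 := by omega
      have htake : u.take (p + 1) = ((u.take (p + 1)).reduceOption).map some :=
        eq_map_some_of_length_reduceOption _ (by rw [hlt, List.length_take]; omega)
      obtain ⟨hsteq, hdropw⟩ : w'.take (p + 1) = (u.take (p + 1)).reduceOption ∧
          w'.drop (p + 1) = w.drop (p + 1) := by
        have h8 : w'.take (p + 1) ++ w'.drop (p + 1) =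
            (u.take (p + 1)).reduceOption ++ w.drop (p + 1) := by
          rw [List.take_append_drop, hdec]
        exact List.append_inj h8 (by rw [List.length_take, hlt]; omega)
      have hup : u.getD p none = some (w'.getD p 0) := by
        have h2 : (u.take (p + 1)).getD p none = u.getD p none := by
          rw [List.getD_eq_getElem _ _ (by rw [List.length_take]; omega),
            List.getD_eq_getElem _ _ (by omega : p < u.length)]
          simp
        rw [← h2, htake, ← hsteq]
        rw [List.getD_eq_getElem _ _ (by rw [List.length_map, List.length_take]; omega),
          List.getElem_map, List.getD_eq_getElem _ _ (by omega : p < w'.length)]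
        simp
      have hmp : (w.map some ++ List.replicate k none).getD p none = some (w.getD p 0) :=
        getD_msr_lt hp
      have hwp_ne : w.getD p 0 ≠ w'.getD p 0 := by
        intro hc
        exact hpne (by rw [hmp, hup, hc])
      have hqp : q = p := by
        rcases lt_trichotomy q p with h | h | h
        · exact absurd (hqb p h) hwp_ne
        · exact h
        · exfalso
          have := getD_eq_of_drop_eq (dflt := (0 : ℕ)) (by omega) hdropw q (by omega)
          rw [this] at hqlt
          omega
      subst hqp
      right
      refine ⟨by rw [FM_length_ofList, FM_length_ofList]; omega, q, ?_, ?_, ?_⟩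
      · rw [FM_length_ofList]; omega
      · rw [FM_toList_ofList', FM_toList_ofList', hmp, hup]
        simpa [optLt] using hqlt
      · intro s hs; rw [FM_toList_ofList', FM_toList_ofList']; exact hpb s hs
  · have hmp : (w.map some ++ List.replicate k none).getD p none = none :=
      getD_msr_ge (by omega)
    rcases hcase : u.getD p none with _ | z
    · exact absurd (by rw [hmp, hcase]) hpne
    · right
      refine ⟨by rw [FM_length_ofList, FM_length_ofList]; omega, p, ?_, ?_, ?_⟩
      · rw [FM_length_ofList]; omega
      · rw [FM_toList_ofList', FM_toList_ofList', hmp, hcase]; trivial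
      · intro s hs; rw [FM_toList_ofList', FM_toList_ofList']; exact hpb s hs

lemma normalModC_hstar (g : FA K ℕ) :
    NormalModC K (grRightLex optLt none) (hstar K g) := by
  intro u hu g' hg' wg hwg
  obtain ⟨x, rfl⟩ := hg'
  have hwgA : wg = FreeMonoid.ofList [none, some x] :=
    isLMF_unique K (fun m n => grl_asymm optLt_irrefl optLt_trans) hwg (isLMF_comm x)
  subst hwgA
  obtain ⟨w0, hw0, rfl⟩ := support_hstar hu
  rintro ⟨u', v', huv⟩
  have hL := congrArg FreeMonoid.toList huv
  rw [toList_keyW, FreeMonoid.toList_mul, FreeMonoid.toList_mul, FM_toList_ofList',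
    List.append_assoc] at hL
  set i := (FreeMonoid.toList u').length with hi
  set A := FreeMonoid.toList u' with hA
  set C := FreeMonoid.toList v' with hC
  have e1 : (A ++ ([none, some x] ++ C)).getD i none = none := by
    rw [List.getD_eq_getElem _ _ (by simp [hi] <;> omega),
      List.getElem_append_right (by omega : A.length ≤ i)]
    simp [hi] <;> omega
  have e2 : (A ++ ([none, some x] ++ C)).getD (i + 1) none = some x := by
    rw [List.getD_eq_getElem _ _ (by simp [hi] <;> omega),
      List.getElem_append_right (by omega : A.length ≤ i + 1)]
    have he : i + 1 - A.length = 1 := by omega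
    simp [he] <;> omega
  rw [← hL] at e1 e2
  by_cases hil : i < (FreeMonoid.toList w0).length
  · rw [getD_msr_lt hil] at e1
    exact nomatch e1
  · have : (FreeMonoid.toList w0).length ≤ i + 1 := by omega
    rw [getD_msr_ge this] at e2
    exact nomatch e2

end Chunk6

section Chunk7

open scoped Classical

variable {K : Type*} [Field K]

lemma hasO : ∀ (m n : FreeMonoid (Option ℕ)),
    grRightLex optLt none m n → grRightLex optLt none n m → False :=
  fun _ _ h1 h2 => grl_asymm optLt_irrefl optLt_trans h1 h2

lemma hasN : ∀ (m n : FreeMonoid ℕ),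
    grRightLex (· < ·) 0 m n → grRightLex (· < ·) 0 n m → False :=
  fun _ _ h1 h2 =>
    grl_asymm (fun a : ℕ => Nat.lt_irrefl a) (fun _ _ _ => Nat.lt_trans) h1 h2

lemma main_groebner {I : TwoSidedIdeal (FA K ℕ)} {G : Set (FA K ℕ)}
    (hG : IsGroebnerBF K (grRightLex (· < ·) 0) I G)
    (f : FA K (Option ℕ)) (hf : f ∈ hstarIdeal K I) (hf0 : f ≠ 0) :
    ∃ g ∈ ({h | ∃ g ∈ G, g ≠ 0 ∧ h = hstar K g} ∪ commGens K ℕ), g ≠ 0 ∧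
      ∃ (u v wf wg : FreeMonoid (Option ℕ)),
        IsLMF K (grRightLex optLt none) f wf ∧ IsLMF K (grRightLex optLt none) g wg ∧
          wf = u * wg * v := by
  obtain ⟨m, hm⟩ := exists_isLMF K (r := grRightLex optLt none)
    (fun _ _ _ h1 h2 => grl_trans optLt_trans h1 h2)
    (fun a b hne => grl_total optLt_total (m := a) (n := b) hne) f hf0
  rcases list_structure (FreeMonoid.toList m) with ⟨u0, x, v0, hL⟩ | hR
  · -- commutator divides
    refine ⟨tv K * gen K (some x) - gen K (some x) * tv K, Or.inr ⟨x, rfl⟩, comm_ne_zero x,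
      FreeMonoid.ofList u0, FreeMonoid.ofList v0, m, FreeMonoid.ofList [none, some x],
      hm, isLMF_comm x, ?_⟩
    have h1 : m = FreeMonoid.ofList (FreeMonoid.toList m) := (FreeMonoid.ofList_toList m).symm
    rw [h1, hL]
    have h2 : u0 ++ none :: some x :: v0 = u0 ++ [none, some x] ++ v0 := by simp
    rw [h2, FreeMonoid.ofList_append, FreeMonoid.ofList_append]
  · -- homogenized Gröbner basis element divides
    have hsub : (homComp K (FreeMonoid.length m) f).coeff.support ⊆ f.coeff.support :=
      fun u hu => (mem_support_homComp.1 hu).1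
    have hmemfd : m ∈ (homComp K (FreeMonoid.length m) f).coeff.support :=
      mem_support_homComp.2 ⟨hm.1, rfl⟩
    obtain ⟨f0, hf0I, hphi⟩ := hstarIdeal_phi_homComp hf (FreeMonoid.length m)
    have hstripm : stripW m = FreeMonoid.ofList ((FreeMonoid.toList m).reduceOption) := by
      rw [← toList_stripW', FreeMonoid.ofList_toList]
    have e2 : (FreeMonoid.toList m).length = FreeMonoid.length m := rfl
    have e3 := List.reduceOption_length_le (FreeMonoid.toList m)
    -- the coefficient of `w` in `phi fd` is `f m`
    have hceq : (phi K (homComp K (FreeMonoid.length m) f)).coeff (embWord (stripW m)) =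
        (homComp K (FreeMonoid.length m) f).coeff m := by
      rw [phi_eq_sum, sum_single_apply]
      rw [Finset.sum_eq_single m]
      · rw [if_pos rfl]
      · intro u' hu' hne'
        rw [if_neg]
        intro hc
        have hstrip' : stripW u' = stripW m := embWord_injective hc
        have hlu' : FreeMonoid.length u' = FreeMonoid.length m := (mem_support_homComp.1 hu').2
        have e1 : (FreeMonoid.toList u').length = FreeMonoid.length u' := rfl
        have hglmu : grRightLex optLt none m u' := by
          have h1 : (FreeMonoid.toList u').length = (FreeMonoid.toList m).reduceOption.length +
              ((FreeMonoid.toList m).length - (FreeMonoid.toList m).reduceOption.length) := by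
            omega
          have h2 : (FreeMonoid.toList u').reduceOption =
              (FreeMonoid.toList m).reduceOption := by
            rw [← toList_stripW', hstrip', toList_stripW']
          have h3 : FreeMonoid.toList u' ≠ (FreeMonoid.toList m).reduceOption.map some ++
              List.replicate ((FreeMonoid.toList m).length -
                (FreeMonoid.toList m).reduceOption.length) none := by
            intro hc2
            exact hne' (by rw [← FreeMonoid.ofList_toList u', hc2, ← hR,
              FreeMonoid.ofList_toList])
          have h4 := lemA h1 h2 h3
          rw [← hR, FreeMonoid.ofList_toList, FreeMonoid.ofList_toList] at h4
          exact h4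
        exact hasO _ _ hglmu (hm.2 u' (hsub hu') hne')
      · intro hnm; exact absurd hmemfd hnm
    have hfdm : (homComp K (FreeMonoid.length m) f).coeff m = f.coeff m := by
      rw [homComp_apply, if_pos rfl]
    have hfm : f.coeff m ≠ 0 := Finsupp.mem_support_iff.1 hm.1
    have hc2 : f0.coeff (FreeMonoid.ofList ((FreeMonoid.toList m).reduceOption)) = f.coeff m := by
      have hx1 : f0.coeff (FreeMonoid.ofList ((FreeMonoid.toList m).reduceOption)) =
          (emb K f0).coeff (embWord (FreeMonoid.ofList ((FreeMonoid.toList m).reduceOption))) :=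
        (emb_apply_embWord _ _).symm
      rw [hx1, ← hphi, ← hstripm, hceq, hfdm]
    have hf0w : f0.coeff (FreeMonoid.ofList ((FreeMonoid.toList m).reduceOption)) ≠ 0 := by
      rw [hc2]; exact hfm
    have hf0ne : f0 ≠ 0 := fun hc => hf0w (by rw [hc]; rfl)
    -- `ofList w` is the leading monomial of `f0`
    have hwlm : IsLMF K (grRightLex (· < ·) 0) f0
        (FreeMonoid.ofList ((FreeMonoid.toList m).reduceOption)) := by
      refine ⟨Finsupp.mem_support_iff.2 hf0w, ?_⟩
      intro w' hw' hne'
      by_contra hnot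
      rcases grl_total (fun (a b : ℕ) h => lt_or_gt_of_ne h) (m := w') hne' with h | h
      · exact hnot h
      exfalso
      have hnz : (phi K (homComp K (FreeMonoid.length m) f)).coeff (embWord w') ≠ 0 := by
        rw [hphi, emb_apply_embWord]; exact Finsupp.mem_support_iff.1 hw'
      rw [phi_eq_sum, sum_single_apply] at hnz
      obtain ⟨u', hu', hterm⟩ := Finset.exists_ne_zero_of_sum_ne_zero hnz
      have hcnd : embWord (stripW u') = embWord w' := by
        by_contra hcnd; rw [if_neg hcnd] at hterm; exact hterm rfl
      have hstrip' : stripW u' = w' := embWord_injective hcnd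
      have hlu' : FreeMonoid.length u' = FreeMonoid.length m := (mem_support_homComp.1 hu').2
      have e1 : (FreeMonoid.toList u').length = FreeMonoid.length u' := rfl
      have hu'm : u' ≠ m := by
        intro hc
        apply hne'
        rw [← hstrip', hc, hstripm]
      have hglum : grRightLex optLt none u' m := hm.2 u' (hsub hu') hu'm
      have hglmu : grRightLex optLt none m u' := by
        have h1 : (FreeMonoid.toList u').length = (FreeMonoid.toList m).reduceOption.length +
            ((FreeMonoid.toList m).length - (FreeMonoid.toList m).reduceOption.length) := by
          omega
        have h2 : (FreeMonoid.toList u').reduceOption = FreeMonoid.toList w' := by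
          rw [← toList_stripW', hstrip']
        have hless : grRightLex (· < ·) (0 : ℕ)
            (FreeMonoid.ofList ((FreeMonoid.toList m).reduceOption))
            (FreeMonoid.ofList (FreeMonoid.toList w')) := by
          rw [FreeMonoid.ofList_toList]; exact h
        have h4 := lemB h1 h2 hless
        rw [← hR, FreeMonoid.ofList_toList, FreeMonoid.ofList_toList] at h4
        exact h4
      exact hasO _ _ hglmu hglum
    obtain ⟨g, hgG, hg0, u₀, v₀, wf₀, wg₀, hlmf0, hlmg, hdecomp⟩ := hG.2 f0 hf0I hf0ne
    have hwf : wf₀ = FreeMonoid.ofList ((FreeMonoid.toList m).reduceOption) :=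
      isLMF_unique K hasN hlmf0 hwlm
    rw [hwf] at hdecomp
    refine ⟨hstar K g, Or.inl ⟨g, hgG, hg0, rfl⟩, hstar_ne_zero hg0, embWord u₀,
      embWord v₀ * (FreeMonoid.of (none : Option ℕ)) ^
        ((FreeMonoid.toList m).length - (FreeMonoid.toList m).reduceOption.length),
      m, embWord wg₀, hm, isLMF_hstar hg0 hlmg, ?_⟩
    have hw2 : (FreeMonoid.toList m).reduceOption =
        FreeMonoid.toList u₀ ++ FreeMonoid.toList wg₀ ++ FreeMonoid.toList v₀ := by
      have h5 := congrArg FreeMonoid.toList hdecomp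
      rw [FM_toList_ofList', FreeMonoid.toList_mul, FreeMonoid.toList_mul] at h5
      exact h5
    have hfin : FreeMonoid.toList (embWord u₀ * embWord wg₀ *
        (embWord v₀ * (FreeMonoid.of (none : Option ℕ)) ^
          ((FreeMonoid.toList m).length - (FreeMonoid.toList m).reduceOption.length))) =
        FreeMonoid.toList m := by
      rw [FreeMonoid.toList_mul, FreeMonoid.toList_mul, FreeMonoid.toList_mul, toList_pow_of,
        toList_embWord, toList_embWord, toList_embWord]
      conv_rhs => rw [hR, hw2]
      simp only [List.map_append, List.append_assoc]
      have h6 := congrArg List.length hw2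
      simp only [List.length_append] at h6
      have h7 : (FreeMonoid.toList m).length - (FreeMonoid.toList m).reduceOption.length =
          (FreeMonoid.toList m).length - ((FreeMonoid.toList u₀).length +
            ((FreeMonoid.toList wg₀).length + (FreeMonoid.toList v₀).length)) := by omega
      rw [h7]
      have h8 : (FreeMonoid.toList u₀ ++ (FreeMonoid.toList wg₀ ++ FreeMonoid.toList v₀)).length
          = (FreeMonoid.toList u₀).length + ((FreeMonoid.toList wg₀).length +
            (FreeMonoid.toList v₀).length) := by
        simp [List.length_append]
      rw [h8]
    have hfin2 := congrArg FreeMonoid.ofList hfin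
    rw [FreeMonoid.ofList_toList, FreeMonoid.ofList_toList] at hfin2
    exact hfin2.symm

end Chunk7


/-- If `G` is any Gröbner basis of a two-sided ideal `I ⊆ F` with respect to
the graded right lexicographic ordering, then `G^* = {g^* : 0 ≠ g ∈ G}` is a homogeneous
Gröbner basis of `I^*` modulo `C` (its elements are homogeneous and in normal form modulo `C`,
and `G^* ∪ {[t,x_i]}` is a Gröbner basis of `I^*` for the graded right lexicographic ordering
of `F̄` with `t` smallest); moreover `lm(G^*) = lm(G)`. -/
theorem statement_17 (K : Type*) [Field K]
    (I : TwoSidedIdeal (FA K ℕ)) (G : Set (FA K ℕ))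
    (hG : IsGroebnerBF K (grRightLex (· < ·) 0) I G) :
    (∀ h ∈ {h | ∃ g ∈ G, g ≠ 0 ∧ h = hstar K g},
        (∃ d, IsHomog K d h) ∧ NormalModC K (grRightLex optLt none) h) ∧
    IsGroebnerBF K (grRightLex optLt none) (hstarIdeal K I)
      ({h | ∃ g ∈ G, g ≠ 0 ∧ h = hstar K g} ∪ commGens K ℕ) ∧
    embWord '' {w | ∃ g ∈ G, g ≠ 0 ∧ IsLMF K (grRightLex (· < ·) 0) g w} =
      {w | ∃ h, (∃ g ∈ G, g ≠ 0 ∧ h = hstar K g) ∧ h ≠ 0 ∧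
        IsLMF K (grRightLex optLt none) h w} := by
    classical
  refine ⟨?_, ⟨?_, ?_⟩, ?_⟩
  · rintro h ⟨g, hgG, hg0, rfl⟩
    exact ⟨⟨degF K g, isHomog_hstar g⟩, normalModC_hstar g⟩
  · rintro h (⟨g, hgG, hg0, rfl⟩ | ⟨x, rfl⟩)
    · exact hstar_mem (hG.1 hgG)
    · exact comm_mem x
  · intro f hf hf0
    exact main_groebner hG f hf hf0
  · ext w0
    constructor
    · rintro ⟨w1, ⟨g, hgG, hg0, hlm⟩, rfl⟩
      exact ⟨hstar K g, ⟨g, hgG, hg0, rfl⟩, hstar_ne_zero hg0, isLMF_hstar hg0 hlm⟩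
    · rintro ⟨h, ⟨g, hgG, hg0, rfl⟩, hne0, hlm⟩
      obtain ⟨wg, hwg⟩ := exists_isLMF K (r := grRightLex (· < ·) (0 : ℕ))
        (fun _ _ _ h1 h2 => grl_trans (lt := fun a b : ℕ => a < b) (dflt := 0) (fun _ _ _ => Nat.lt_trans) h1 h2)
        (fun a b hne => grl_total (lt := fun a b : ℕ => a < b) (dflt := 0) (fun (x y : ℕ) h => lt_or_gt_of_ne h) (m := a) (n := b) hne)
        g hg0
      have hval : w0 = embWord wg := isLMF_unique K hasO hlm (isLMF_hstar hg0 hwg)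
      exact ⟨wg, ⟨g, hgG, hg0, hwg⟩, hval.symm⟩
end
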